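/- arXiv:2106.16218 — 4 statements merged into one kernel-verified Lean document; each statement's English description precedes it below -/
import Mathlib

section
/- Let G be a connected graph and X ⊆ V(G) a set of adhesion at most 2. Then the torso G⟦X⟧ is a topological subgraph of G. -/
open SimpleGraph

attribute [local instance] Classical.propDecidable

/-- `compNbrs G X C` is the set `N_G(C)` of neighbours (necessarily in `X`) of
the connected component `C` of `G - X`. -/
def compNbrs {V : Type} (G : SimpleGraph V) (X : Set V)
    (C : (G.induce (Xᶜ : Set V)).ConnectedComponent) : Set V :=
  {x | x ∈ X ∧ ∃ y : (Xᶜ : Set V),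
    (G.induce (Xᶜ : Set V)).connectedComponentMk y = C ∧ G.Adj x ↑y}

/-- The torso `G⟦X⟧` of a vertex set `X`: its vertex set is `X`, and distinct
`v, w ∈ X` are adjacent if `vw ∈ E(G)` or `v, w ∈ N_G(C)` for some connected
component `C` of `G - X`. -/
def torso {V : Type} (G : SimpleGraph V) (X : Set V) : SimpleGraph X where
  Adj v w := v ≠ w ∧ (G.Adj ↑v ↑w ∨
    ∃ C, (↑v : V) ∈ compNbrs G X C ∧ (↑w : V) ∈ compNbrs G X C)
  symm := by
    constructor
    rintro a b ⟨hab, h | ⟨C, h1, h2⟩⟩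
    · exact ⟨hab.symm, Or.inl h.symm⟩
    · exact ⟨hab.symm, Or.inr ⟨C, h2, h1⟩⟩
  loopless := by constructor; rintro a ⟨h, -⟩; exact h rfl

/-- `X` has adhesion at most `k` in `G` if `|N_G(C)| ≤ k` for every connected
component `C` of `G - X`. -/
def adhesionLE {V : Type} (G : SimpleGraph V) (X : Set V) (k : ℕ) : Prop :=
  ∀ C, (compNbrs G X C).ncard ≤ k

/-- A graph is `k`-connected if it has more than `k` vertices and removing any
set of at most `k - 1` vertices leaves it connected. -/
def IsKConnected {V : Type} [Fintype V] (k : ℕ) (G : SimpleGraph V) : Prop :=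
  k < Fintype.card V ∧ ∀ S : Set V, S.ncard ≤ k - 1 → (G.induce (Sᶜ : Set V)).Connected

/-- A proper block of `G`: a set of vertices whose torso is 3-connected and
whose adhesion is at most 2. -/
def IsProperBlock {V : Type} [Fintype V] (G : SimpleGraph V) (B : Set V) : Prop :=
  IsKConnected 3 (torso G B) ∧ adhesionLE G B 2

/-- A block of `G`: a set `B` of vertices such that either the torso `G⟦B⟧` is
3-connected and `B` has adhesion at most 2, or `G⟦B⟧` is a complete graph of
order 3 and `B` has adhesion at most 2, or `G⟦B⟧` is a complete graph of order
2 and `B` has adhesion at most 1. -/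
def IsBlock {V : Type} [Fintype V] (G : SimpleGraph V) (B : Set V) : Prop :=
  (IsKConnected 3 (torso G B) ∧ adhesionLE G B 2) ∨
  (B.ncard = 3 ∧ torso G B = ⊤ ∧ adhesionLE G B 2) ∨
  (B.ncard = 2 ∧ torso G B = ⊤ ∧ adhesionLE G B 1)

/-- The internal vertices of a walk: its support without the two endpoints. -/
def SimpleGraph.Walk.internals {V : Type} {G : SimpleGraph V} {a b : V}
    (p : G.Walk a b) : List V :=
  p.support.tail.dropLast

/-- `H` is a topological subgraph of `G` if some subdivision of `H` is a
subgraph of `G`: there is an injection `f` of the vertices of `H` into those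
of `G`, and for every edge `uv` of `H` a path in `G` from `f u` to `f v`, such
that the internal vertices of these paths avoid the image of `f` and paths of
distinct edges are internally disjoint. -/
def IsTopologicalSubgraph {W V : Type} (H : SimpleGraph W) (G : SimpleGraph V) : Prop :=
  ∃ (f : W → V) (P : ∀ ⦃u w : W⦄, H.Adj u w → G.Walk (f u) (f w)),
    Function.Injective f ∧
    (∀ ⦃u w : W⦄ (h : H.Adj u w), (P h).IsPath) ∧
    (∀ ⦃u w : W⦄ (h : H.Adj u w), ∀ x ∈ (P h).internals, x ∉ Set.range f) ∧
    (∀ ⦃u w u' w' : W⦄ (h : H.Adj u w) (h' : H.Adj u' w'), s(u, w) ≠ s(u', w') →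
      ∀ x ∈ (P h).internals, x ∉ (P h').internals)


section Aux
variable {V : Type} {G : SimpleGraph V}

lemma list_tail_dropLast {α : Type*} (l : List α) :
    l.tail.dropLast = l.dropLast.tail := by
  cases l with
  | nil => rfl
  | cons a l =>
    cases l with
    | nil => rfl
    | cons b l => simp

lemma mem_support_of_mem_internals {a b : V} {p : G.Walk a b} {x : V}
    (hx : x ∈ p.internals) : x ∈ p.support :=
  List.mem_of_mem_tail (List.mem_of_mem_dropLast hx)

lemma internals_ne_left {a b : V} {p : G.Walk a b} (hp : p.IsPath) {x : V}
    (hx : x ∈ p.internals) : x ≠ a := by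
  have hnd := hp.support_nodup
  rw [p.support_eq_cons] at hnd
  rintro rfl
  exact (List.nodup_cons.1 hnd).1 (List.mem_of_mem_dropLast hx)

lemma mem_internals_reverse {a b : V} {p : G.Walk a b} {x : V} :
    x ∈ p.reverse.internals ↔ x ∈ p.internals := by
  unfold SimpleGraph.Walk.internals
  rw [Walk.support_reverse, List.tail_reverse, List.dropLast_reverse,
    List.mem_reverse, list_tail_dropLast]

lemma internals_ne_right {a b : V} {p : G.Walk a b} (hp : p.IsPath) {x : V}
    (hx : x ∈ p.internals) : x ≠ b :=
  internals_ne_left hp.reverse (mem_internals_reverse.2 hx)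

end Aux

/-- If `G` is connected and `X ⊆ V(G)` has adhesion at most 2, then the torso
`G⟦X⟧` is a topological subgraph of `G`. -/
theorem torso_topologicalSubgraph {V : Type} [Fintype V] (G : SimpleGraph V)
    (hG : G.Connected) (X : Set V) (hX : adhesionLE G X 2) :
    IsTopologicalSubgraph (torso G X) G := by
  classical
  have key : ∀ (u w : X) (h : (torso G X).Adj u w),
      ∃ p : G.Walk ↑u ↑w, p.IsPath ∧ ∀ x ∈ p.internals,
        ∃ hx : x ∈ (Xᶜ : Set V),
          compNbrs G X ((G.induce (Xᶜ : Set V)).connectedComponentMk ⟨x, hx⟩)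
            = {(↑u : V), ↑w} := by
    intro u w h
    obtain ⟨hne, hadj | ⟨C, hu, hw⟩⟩ := h
    · have hcoe : (↑u : V) ≠ ↑w := Subtype.coe_injective.ne hne
      refine ⟨Walk.cons hadj Walk.nil, ?_, ?_⟩
      · simp [Walk.isPath_def, hcoe]
      · intro x hx
        simp [SimpleGraph.Walk.internals] at hx
    · have hcoe : (↑u : V) ≠ ↑w := Subtype.coe_injective.ne hne
      have hCeq : compNbrs G X C = {(↑u : V), ↑w} := by
        refine (Set.eq_of_subset_of_ncard_le ?_ ?_ (Set.toFinite _)).symm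
        · rintro z (rfl | rfl)
          · exact hu
          · exact hw
        · rw [Set.ncard_pair hcoe]
          exact hX C
      obtain ⟨hu1, y, hy, hyu⟩ := hu
      obtain ⟨hw1, y', hy', hyw⟩ := hw
      obtain ⟨q⟩ : (G.induce (Xᶜ : Set V)).Reachable y y' :=
        ConnectedComponent.exact (hy.trans hy'.symm)
      let W : G.Walk ↑u ↑w :=
        Walk.cons hyu ((q.map (Embedding.induce (Xᶜ : Set V)).toHom).concat hyw.symm)
      refine ⟨W.bypass, W.bypass_isPath, ?_⟩
      intro x hx
      have hxa : x ≠ ↑u := internals_ne_left W.bypass_isPath hx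
      have hxb : x ≠ ↑w := internals_ne_right W.bypass_isPath hx
      have hxs : x ∈ W.support :=
        W.support_bypass_subset (mem_support_of_mem_internals hx)
      have : x ∈ (q.map (Embedding.induce (Xᶜ : Set V)).toHom).support := by
        simp only [W, Walk.support_cons] at hxs
        rcases List.mem_cons.1 hxs with rfl | hxs
        · exact absurd rfl hxa
        · erw [Walk.support_concat, List.mem_append,
            List.mem_singleton] at hxs
          rcases hxs with hxs | rfl
          · exact hxs
          · exact absurd rfl hxb
      rw [Walk.support_map, List.mem_map] at this
      obtain ⟨z, hz, rfl⟩ := this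
      refine ⟨z.2, ?_⟩
      show compNbrs G X ((G.induce (Xᶜ : Set V)).connectedComponentMk z) = {(↑u : V), ↑w}
      rw [← hCeq]
      have hzc : (G.induce (Xᶜ : Set V)).connectedComponentMk z = C := by
        rw [← hy]
        exact ConnectedComponent.sound ⟨(q.takeUntil z hz).reverse⟩
      rw [hzc]
  choose P hP1 hP2 using key
  refine ⟨Subtype.val, fun u w h => P u w h, Subtype.val_injective,
    fun u w h => hP1 u w h, ?_, ?_⟩
  · intro u w h x hx
    obtain ⟨hx', -⟩ := hP2 u w h x hx
    rw [Subtype.range_coe]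
    exact hx'
  · intro u w u' w' h h' hne x hx hx'
    obtain ⟨h1, e1⟩ := hP2 u w h x hx
    obtain ⟨h2, e2⟩ := hP2 u' w' h' x hx'
    have hpair : ({(↑u : V), ↑w} : Set V) = {(↑u' : V), ↑w'} := by
      rw [← e1, ← e2]
    have huw : u ≠ w := h.1
    have huw' : u' ≠ w' := h'.1
    apply hne
    have hu : u = u' ∨ u = w' := by
      have : (↑u : V) ∈ ({(↑u' : V), ↑w'} : Set V) := hpair ▸ Set.mem_insert _ _
      rcases this with h | h
      · exact Or.inl (Subtype.coe_injective h)
      · exact Or.inr (Subtype.coe_injective h)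
    have hw : w = u' ∨ w = w' := by
      have : (↑w : V) ∈ ({(↑u' : V), ↑w'} : Set V) := by
        rw [← hpair]; exact Set.mem_insert_iff.2 (Or.inr rfl)
      rcases this with h | h
      · exact Or.inl (Subtype.coe_injective h)
      · exact Or.inr (Subtype.coe_injective h)
    rcases hu with rfl | rfl
    · rcases hw with rfl | rfl
      · exact absurd rfl huw
      · rfl
    · rcases hw with rfl | rfl
      · exact Sym2.eq_swap
      · exact absurd rfl huw
end

section
/- Let G be a graph with pairwise distinct vertices b₁,b₂,b₃. There is a proper block B of G with b₁,b₂,b₃ ∈ B if and only if there exists a vertex b₄ ∈ V(G) \ {b₁,b₂,b₃} such that no set S ⊆ V(G) of cardinality at most 2 separates {b₁,b₂,b₃,b₄}. -/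
open SimpleGraph

attribute [local instance] Classical.propDecidable

/-- `S` separates the set `X`: two vertices of `X` outside `S` lie in
different connected components of `G - S`. -/
def SeparatesSet {V : Type} (G : SimpleGraph V) (S : Set V) (X : Set V) : Prop :=
  ∃ x y : (Sᶜ : Set V), (↑x : V) ∈ X ∧ (↑y : V) ∈ X ∧
    (G.induce (Sᶜ : Set V)).connectedComponentMk x ≠
      (G.induce (Sᶜ : Set V)).connectedComponentMk y

variable {V : Type}

/-- Reachability inside the induced subgraph on `Y`, phrased on ambient vertices. -/
def reachIn (G : SimpleGraph V) (Y : Set V) (x y : V) : Prop :=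
  ∃ (hx : x ∈ Y) (hy : y ∈ Y), (G.induce Y).Reachable ⟨x, hx⟩ ⟨y, hy⟩

namespace reachIn

variable {G : SimpleGraph V} {Y : Set V} {x y z : V}

lemma refl (hx : x ∈ Y) : reachIn G Y x x := ⟨hx, hx, Reachable.refl _⟩

lemma symm (h : reachIn G Y x y) : reachIn G Y y x := by
  obtain ⟨hx, hy, h⟩ := h; exact ⟨hy, hx, h.symm⟩

lemma trans (h : reachIn G Y x y) (h' : reachIn G Y y z) : reachIn G Y x z := by
  obtain ⟨hx, hy, h⟩ := h; obtain ⟨hy', hz, h'⟩ := h'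
  refine ⟨hx, hz, h.trans ?_⟩
  have : (⟨y, hy⟩ : ↥Y) = ⟨y, hy'⟩ := rfl
  rw [this]; exact h'

lemma of_adj (hx : x ∈ Y) (hy : y ∈ Y) (h : G.Adj x y) : reachIn G Y x y :=
  ⟨hx, hy, Adj.reachable (by exact h : (G.induce Y).Adj ⟨x, hx⟩ ⟨y, hy⟩)⟩

lemma to_reachable {hx : x ∈ Y} {hy : y ∈ Y} (h : reachIn G Y x y) :
    (G.induce Y).Reachable ⟨x, hx⟩ ⟨y, hy⟩ := by
  obtain ⟨hx', hy', h⟩ := h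
  have e1 : (⟨x, hx⟩ : ↥Y) = ⟨x, hx'⟩ := rfl
  have e2 : (⟨y, hy⟩ : ↥Y) = ⟨y, hy'⟩ := rfl
  rw [e1, e2]; exact h

end reachIn

/-- Transfer a walk in `G.induce X` whose support lies in `Y` to reachability in `G.induce Y`. -/
lemma reachIn_of_walk {G : SimpleGraph V} {X Y : Set V} :
    ∀ {x y : ↥X} (p : (G.induce X).Walk x y), (∀ v ∈ p.support, ↑v ∈ Y) →
      reachIn G Y ↑x ↑y := by
  intro x y p
  induction p with
  | nil => intro h; exact reachIn.refl (h _ (Walk.start_mem_support _))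
  | cons hadj q ih =>
    intro h
    refine (reachIn.of_adj (h _ (Walk.start_mem_support _))
      (h _ (by rw [Walk.support_cons]; exact List.mem_cons_of_mem _ (Walk.start_mem_support _)))
      hadj).trans (ih ?_)
    intro v hv
    exact h v (by rw [Walk.support_cons]; exact List.mem_cons_of_mem _ hv)

/-- All support vertices of a walk lie in the same connected component. -/
lemma mk_eq_of_mem_support {G : SimpleGraph V} {x y : V} (p : G.Walk x y)
    {v : V} (h : v ∈ p.support) :
    G.connectedComponentMk v = G.connectedComponentMk x :=
  (ConnectedComponent.sound (p.takeUntil v h).reachable).symm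

/-- The neighbourhood (outside `D`) of a set `D`. -/
def nbrSet (G : SimpleGraph V) (D : Set V) : Set V := {y | y ∉ D ∧ ∃ x ∈ D, G.Adj x y}

lemma mem_or_nbr {G : SimpleGraph V} {D : Set V} {x y : V} (hx : x ∈ D) (h : G.Adj x y) :
    y ∈ D ∨ y ∈ nbrSet G D := by
  by_cases hy : y ∈ D
  · exact Or.inl hy
  · exact Or.inr ⟨hy, x, hx, h⟩

/-- A walk (in any induced subgraph) starting in `D` whose support avoids `nbrSet G D`
stays in `D`. -/
lemma walk_stay {G : SimpleGraph V} {X : Set V} {D : Set V} :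
    ∀ {x y : ↥X} (p : (G.induce X).Walk x y), ↑x ∈ D →
      (∀ v ∈ p.support, ↑v ∉ nbrSet G D) → ↑y ∈ D := by
  intro x y p
  induction p with
  | nil => intro h _; exact h
  | cons hadj q ih =>
    intro hx h
    rename_i a b c
    have hmem : b ∈ (Walk.cons hadj q).support := by
      rw [Walk.support_cons]; exact List.mem_cons_of_mem _ (Walk.start_mem_support _)
    have hb : ↑b ∈ D := by
      rcases mem_or_nbr hx (hadj : G.Adj ↑a ↑b) with h' | h'
      · exact h'
      · exact absurd h' (h _ hmem)
    refine ih hb (fun v hv => h v ?_)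
    rw [Walk.support_cons]; exact List.mem_cons_of_mem _ hv

/-- A walk from inside `D` to outside `D` has a support vertex in `nbrSet G D`. -/
lemma walk_exit {G : SimpleGraph V} {X : Set V} {D : Set V} :
    ∀ {x y : ↥X} (p : (G.induce X).Walk x y), ↑x ∈ D → ↑y ∉ D →
      ∃ v, v ∈ p.support ∧ ↑v ∈ nbrSet G D := by
  intro x y p
  induction p with
  | nil => intro hx hy; exact absurd hx hy
  | cons hadj q ih =>
    intro hx hy
    rename_i a b c
    have hmem : b ∈ (Walk.cons hadj q).support := by
      rw [Walk.support_cons]; exact List.mem_cons_of_mem _ (Walk.start_mem_support _)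
    rcases mem_or_nbr hx (hadj : G.Adj ↑a ↑b) with h' | h'
    · obtain ⟨v, hv, hv'⟩ := ih h' hy
      refine ⟨v, ?_, hv'⟩
      rw [Walk.support_cons]; exact List.mem_cons_of_mem _ hv
    · exact ⟨b, hmem, h'⟩
section Forward

variable [Fintype V] {G : SimpleGraph V} {B : Set V}

/-- The component of `G - B` containing a vertex `s ∉ B`. -/
def compOf (G : SimpleGraph V) (B : Set V) (s : V) (hsB : s ∈ (Bᶜ : Set V)) :
    (G.induce (Bᶜ : Set V)).ConnectedComponent :=
  (G.induce (Bᶜ : Set V)).connectedComponentMk ⟨s, hsB⟩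

/-- The neighbourhood of the component of `s` in `G - B`. -/
def Kof (G : SimpleGraph V) (B : Set V) (s : V) (hsB : s ∈ (Bᶜ : Set V)) : Set V :=
  compNbrs G B (compOf G B s hsB)

lemma compNbrs_subset (C : (G.induce (Bᶜ : Set V)).ConnectedComponent) :
    compNbrs G B C ⊆ B := fun _ hx => hx.1

/-- An edge of the torso that is justified avoiding `S`. -/
def AvoidJust (G : SimpleGraph V) (B S : Set V) (a b : V) : Prop :=
  G.Adj a b ∨ ∃ C, a ∈ compNbrs G B C ∧ b ∈ compNbrs G B C ∧
    ∀ z : ↥(Bᶜ : Set V), (G.induce (Bᶜ : Set V)).connectedComponentMk z = C → ↑z ∉ S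

lemma edge_reach {S : Set V} {a b : V} (ha : a ∉ S) (hb : b ∉ S)
    (h : AvoidJust G B S a b) : reachIn G Sᶜ a b := by
  rcases h with h | ⟨C, ⟨haB, y₁, hy₁C, hady₁⟩, ⟨hbB, y₂, hy₂C, hady₂⟩, hCS⟩
  · exact reachIn.of_adj ha hb h
  · have hreach : (G.induce (Bᶜ : Set V)).Reachable y₁ y₂ :=
      ConnectedComponent.exact (hy₁C.trans hy₂C.symm)
    obtain ⟨p⟩ := hreach
    have hmid : reachIn G Sᶜ ↑y₁ ↑y₂ := by
      refine reachIn_of_walk p (fun w hw => ?_)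
      exact hCS w ((mk_eq_of_mem_support p hw).trans hy₁C)
    have h1 : reachIn G Sᶜ a ↑y₁ :=
      reachIn.of_adj ha (hCS y₁ hy₁C) hady₁
    have h2 : reachIn G Sᶜ ↑y₂ b :=
      reachIn.of_adj (hCS y₂ hy₂C) hb hady₂.symm
    exact (h1.trans hmid).trans h2

lemma classify {S : Set V} {a b : V} {haB : a ∈ B} {hbB : b ∈ B}
    (hadj : (torso G B).Adj ⟨a, haB⟩ ⟨b, hbB⟩) (h : ¬ AvoidJust G B S a b) :
    ∃ (s : V) (_ : s ∈ S) (hsB : s ∈ (Bᶜ : Set V)),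
      a ∈ Kof G B s hsB ∧ b ∈ Kof G B s hsB := by
  obtain ⟨hne, hor⟩ := hadj
  rcases hor with h' | ⟨C, h1, h2⟩
  · exact absurd (Or.inl h') h
  · have hz : ¬ ∀ z : ↥(Bᶜ : Set V),
        (G.induce (Bᶜ : Set V)).connectedComponentMk z = C → ↑z ∉ S := by
      intro hall
      exact h (Or.inr ⟨C, h1, h2, hall⟩)
    push_neg at hz
    obtain ⟨z, hzC, hzS⟩ := hz
    refine ⟨↑z, hzS, z.2, ?_, ?_⟩ <;>
    · unfold Kof compOf
      have hez : (⟨↑z, z.2⟩ : ↥(Bᶜ : Set V)) = z := rfl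
      rw [hez, hzC]
      assumption

lemma route {S : Set V}
    (hconn : ∀ S' : Set ↥B, S'.ncard ≤ 2 → ((torso G B).induce (S'ᶜ : Set ↥B)).Connected)
    (U : Set V) (hUB : U ⊆ B) (hUS : S ∩ B ⊆ U) (hUcard : U.ncard ≤ 2)
    (hhit : ∀ (s : V) (_ : s ∈ S) (hsB : s ∈ (Bᶜ : Set V)) (a b : V), a ≠ b →
      a ∈ Kof G B s hsB → b ∈ Kof G B s hsB → a ∈ U ∨ b ∈ U)
    {u v : V} (hu : u ∈ B) (hv : v ∈ B) (huU : u ∉ U) (hvU : v ∉ U) :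
    reachIn G Sᶜ u v := by
  classical
  set Ut : Set ↥B := Subtype.val ⁻¹' U with hUt
  have hUtcard : Ut.ncard ≤ 2 := by
    have h1 : (Subtype.val '' Ut).ncard = Ut.ncard :=
      Set.ncard_image_of_injective Ut Subtype.val_injective
    have h2 : Subtype.val '' Ut ⊆ U := by
      rintro x ⟨y, hy, rfl⟩; exact hy
    calc Ut.ncard = (Subtype.val '' Ut).ncard := h1.symm
    _ ≤ U.ncard := Set.ncard_le_ncard h2 (Set.toFinite U)
    _ ≤ 2 := hUcard
  have hnotS : ∀ w : V, w ∈ B → w ∉ U → w ∉ S := by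
    intro w hwB hwU hwS
    exact hwU (hUS ⟨hwS, hwB⟩)
  have hc := hconn Ut hUtcard
  have key : ∀ (x y : ↥((Utᶜ : Set ↥B))) (p : ((torso G B).induce (Utᶜ : Set ↥B)).Walk x y),
      reachIn G Sᶜ ↑↑x ↑↑y := by
    intro x y p
    induction p with
    | nil =>
      rename_i w
      exact reachIn.refl (hnotS _ (↑w : ↥B).2 w.2)
    | cons hadj q ih =>
      rename_i a m c
      have hadj' : (torso G B).Adj ↑a ↑m := hadj
      have haS : (↑↑a : V) ∉ S := hnotS _ (↑a : ↥B).2 a.2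
      have hmS : (↑↑m : V) ∉ S := hnotS _ (↑m : ↥B).2 m.2
      by_cases hA : AvoidJust G B S ↑↑a ↑↑m
      · exact (edge_reach haS hmS hA).trans ih
      · have hadj'' : (torso G B).Adj ⟨↑↑a, (↑a : ↥B).2⟩ ⟨↑↑m, (↑m : ↥B).2⟩ := hadj'
        obtain ⟨s, hsS, hsB, hKa, hKm⟩ := classify hadj'' hA
        have hne : (↑↑a : V) ≠ ↑↑m := fun h => hadj'.ne (Subtype.ext h)
        rcases hhit s hsS hsB _ _ hne hKa hKm with h' | h'
        · exact absurd h' a.2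
        · exact absurd h' m.2
  have hreach := hc.preconnected ⟨⟨u, hu⟩, huU⟩ ⟨⟨v, hv⟩, hvU⟩
  obtain ⟨p⟩ := hreach
  exact key _ _ p

end Forward
section Dance

variable [Fintype V] {G : SimpleGraph V} {B : Set V}

lemma mem_pair_iff' {x u v : V} : x ∈ ({u, v} : Set V) ↔ x = u ∨ x = v := by simp

lemma pair_eq {K : Set V} (hK : K.ncard ≤ 2) {a b : V} (hab : a ≠ b)
    (ha : a ∈ K) (hb : b ∈ K) : K = {a, b} := by
  refine (Set.eq_of_subset_of_ncard_le ?_ ?_).symm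
  · rintro x hx
    rcases mem_pair_iff'.mp hx with rfl | rfl
    · exact ha
    · exact hb
  · rw [Set.ncard_pair hab]; exact hK

lemma exists_out (hcard : 3 < B.ncard) {Z : Set V} (hZ : Z.ncard ≤ 3) :
    ∃ z ∈ B, z ∉ Z := by
  by_contra h
  push_neg at h
  have : B.ncard ≤ Z.ncard := Set.ncard_le_ncard h (Set.toFinite Z)
  omega

lemma subset_pair_eq {a b u v : V} (hab : a ≠ b) (huv : u ≠ v)
    (hsub : ({a, b} : Set V) ⊆ {u, v}) : ({a, b} : Set V) = {u, v} := by
  have ha : a = u ∨ a = v := mem_pair_iff'.mp (hsub (by simp))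
  have hb : b = u ∨ b = v := mem_pair_iff'.mp (hsub (by simp))
  rcases ha with rfl | rfl <;> rcases hb with rfl | rfl
  · exact absurd rfl hab
  · rfl
  · exact Set.pair_comm a b
  · exact absurd rfl hab

lemma exists_out_pair {K : Set V} {a b u v : V} (hK : K = {a, b}) (hab : a ≠ b)
    (huv : u ≠ v) (hne : K ≠ ({u, v} : Set V)) : ∃ z ∈ K, z ∉ ({u, v} : Set V) := by
  by_contra h
  push_neg at h
  rw [hK] at h hne
  exact hne (subset_pair_eq hab huv h)

lemma hhit_builder {S : Set V} (hadh : adhesionLE G B 2) (KA KB : Set V)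
    (hall : ∀ (s : V) (hs : s ∈ S) (hsB : s ∈ (Bᶜ : Set V)) (a b : V), a ≠ b →
      a ∈ Kof G B s hsB → b ∈ Kof G B s hsB →
      Kof G B s hsB = KA ∨ Kof G B s hsB = KB)
    (U : Set V) (hAU : (KA ∩ U).Nonempty) (hBU : (KB ∩ U).Nonempty) :
    ∀ (s : V) (_ : s ∈ S) (hsB : s ∈ (Bᶜ : Set V)) (a b : V), a ≠ b →
      a ∈ Kof G B s hsB → b ∈ Kof G B s hsB → a ∈ U ∨ b ∈ U := by
  intro s hs hsB a b hab ha hb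
  have hpair : Kof G B s hsB = {a, b} := pair_eq (hadh _) hab ha hb
  rcases hall s hs hsB a b hab ha hb with h | h
  · obtain ⟨x, hxK, hxU⟩ := hAU
    rw [← h, hpair] at hxK
    rcases mem_pair_iff'.mp hxK with rfl | rfl
    · exact Or.inl hxU
    · exact Or.inr hxU
  · obtain ⟨x, hxK, hxU⟩ := hBU
    rw [← h, hpair] at hxK
    rcases mem_pair_iff'.mp hxK with rfl | rfl
    · exact Or.inl hxU
    · exact Or.inr hxU

lemma ncard_pair_le (u v : V) : ({u, v} : Set V).ncard ≤ 2 := by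
  refine le_trans (Set.ncard_insert_le u {v}) ?_
  rw [Set.ncard_singleton]

/-- The single-obstructing-pair case. -/
lemma single_K {S : Set V} (hcard : 3 < B.ncard)
    (hconn : ∀ S' : Set ↥B, S'.ncard ≤ 2 → ((torso G B).induce (S'ᶜ : Set ↥B)).Connected)
    (hadh : adhesionLE G B 2) (hS : S.ncard ≤ 2) (hPB : (S ∩ B).ncard ≤ 1) (K₀ : Set V)
    (hK₀B : K₀ ⊆ B)
    (hall : ∀ (s : V) (hs : s ∈ S) (hsB : s ∈ (Bᶜ : Set V)) (a b : V), a ≠ b →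
      a ∈ Kof G B s hsB → b ∈ Kof G B s hsB → Kof G B s hsB = K₀)
    {u v : V} (hu : u ∈ B) (hv : v ∈ B) (huS : u ∉ S) (hvS : v ∉ S) (huv : u ≠ v) :
    reachIn G Sᶜ u v := by
  classical
  have hall2 : ∀ (s : V) (hs : s ∈ S) (hsB : s ∈ (Bᶜ : Set V)) (a b : V), a ≠ b →
      a ∈ Kof G B s hsB → b ∈ Kof G B s hsB →
      Kof G B s hsB = K₀ ∨ Kof G B s hsB = K₀ :=
    fun s hs hsB a b h h1 h2 => Or.inl (hall s hs hsB a b h h1 h2)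
  by_cases hbig : 2 < K₀.ncard
  · -- K₀ is too big to ever be a component neighbourhood
    refine route hconn (S ∩ B) Set.inter_subset_right subset_rfl
      (le_trans (Set.ncard_le_ncard Set.inter_subset_left (Set.toFinite S)) hS) ?_ hu hv
      (fun h => huS h.1) (fun h => hvS h.1)
    intro s hs hsB a b hab ha hb
    have hK := hall s hs hsB a b hab ha hb
    have := hadh (compOf G B s hsB)
    rw [show compNbrs G B (compOf G B s hsB) = Kof G B s hsB from rfl, hK] at this
    omega
  push_neg at hbig
  by_cases hKex : ∃ a b : V, a ≠ b ∧ a ∈ K₀ ∧ b ∈ K₀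
  · obtain ⟨a, b, hab, haK, hbK⟩ := hKex
    have hK₀ : K₀ = {a, b} := pair_eq hbig hab haK hbK
    by_cases hhK : ∃ h, h ∈ K₀ ∧ h ∉ ({u, v} : Set V)
    · obtain ⟨h, hhmem, hh'⟩ := hhK
      have hhu : h ≠ u := fun e => hh' (e ▸ Set.mem_insert u {v})
      have hhv : h ≠ v := fun e => hh' (e ▸ Set.mem_insert_of_mem _ rfl)
      refine route hconn (insert h (S ∩ B)) ?_ (Set.subset_insert _ _) ?_
        (hhit_builder hadh K₀ K₀ hall2 _ ⟨h, hhmem, Set.mem_insert _ _⟩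
          ⟨h, hhmem, Set.mem_insert _ _⟩) hu hv ?_ ?_
      · rintro x hx
        rcases Set.mem_insert_iff.mp hx with rfl | hx'
        · exact hK₀B hhmem
        · exact hx'.2
      · exact le_trans (Set.ncard_insert_le _ _) (by omega)
      · intro hmem
        rcases Set.mem_insert_iff.mp hmem with e | hx'
        · exact hhu e.symm
        · exact huS hx'.1
      · intro hmem
        rcases Set.mem_insert_iff.mp hmem with e | hx'
        · exact hhv e.symm
        · exact hvS hx'.1
    · push_neg at hhK
      have hK0uv : K₀ = ({u, v} : Set V) := by
        rw [hK₀] at hhK ⊢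
        exact subset_pair_eq hab huv hhK
      obtain ⟨z, hzB, hzZ⟩ := exists_out hcard (Z := insert u (insert v (S ∩ B)))
        (le_trans (Set.ncard_insert_le _ _)
          (by have := Set.ncard_insert_le v (S ∩ B); omega))
      have hzu : z ≠ u := fun e => hzZ (e ▸ Set.mem_insert _ _)
      have hzv : z ≠ v := fun e => hzZ (e ▸ Set.mem_insert_of_mem _ (Set.mem_insert _ _))
      have hzSB : z ∉ S ∩ B := fun h => hzZ
        (Set.mem_insert_of_mem _ (Set.mem_insert_of_mem _ h))
      have hzS : z ∉ S := fun h => hzSB ⟨h, hzB⟩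
      have leg1 : reachIn G Sᶜ u z := by
        refine route hconn (insert v (S ∩ B)) ?_ (Set.subset_insert _ _) ?_
          (hhit_builder hadh K₀ K₀ hall2 _
            ⟨v, by rw [hK0uv]; exact Set.mem_insert_of_mem _ rfl, Set.mem_insert _ _⟩
            ⟨v, by rw [hK0uv]; exact Set.mem_insert_of_mem _ rfl, Set.mem_insert _ _⟩)
          hu hzB ?_ ?_
        · rintro x hx
          rcases Set.mem_insert_iff.mp hx with rfl | hx'
          · exact hv
          · exact hx'.2
        · exact le_trans (Set.ncard_insert_le _ _) (by omega)
        · intro hmem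
          rcases Set.mem_insert_iff.mp hmem with e | hx'
          · exact huv e
          · exact huS hx'.1
        · intro hmem
          rcases Set.mem_insert_iff.mp hmem with e | hx'
          · exact hzv e
          · exact hzSB hx'
      have leg2 : reachIn G Sᶜ z v := by
        refine route hconn (insert u (S ∩ B)) ?_ (Set.subset_insert _ _) ?_
          (hhit_builder hadh K₀ K₀ hall2 _
            ⟨u, by rw [hK0uv]; exact Set.mem_insert _ _, Set.mem_insert _ _⟩
            ⟨u, by rw [hK0uv]; exact Set.mem_insert _ _, Set.mem_insert _ _⟩)
          hzB hv ?_ ?_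
        · rintro x hx
          rcases Set.mem_insert_iff.mp hx with rfl | hx'
          · exact hu
          · exact hx'.2
        · exact le_trans (Set.ncard_insert_le _ _) (by omega)
        · intro hmem
          rcases Set.mem_insert_iff.mp hmem with e | hx'
          · exact hzu e
          · exact hzSB hx'
        · intro hmem
          rcases Set.mem_insert_iff.mp hmem with e | hx'
          · exact huv e.symm
          · exact hvS hx'.1
      exact leg1.trans leg2
  · -- no pair in K₀ : U := S ∩ B works
    refine route hconn (S ∩ B) Set.inter_subset_right subset_rfl
      (le_trans (Set.ncard_le_ncard Set.inter_subset_left (Set.toFinite S)) hS) ?_ hu hv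
      (fun h => huS h.1) (fun h => hvS h.1)
    intro s hs hsB a b hab ha hb
    have hK := hall s hs hsB a b hab ha hb
    rw [hK] at ha hb
    exact absurd ⟨a, b, hab, ha, hb⟩ hKex

end Dance
section Dance2

variable [Fintype V] {G : SimpleGraph V} {B : Set V}

lemma ncard_triple_le (u v w : V) : ({u, v, w} : Set V).ncard ≤ 3 := by
  refine le_trans (Set.ncard_insert_le _ _) ?_
  have := ncard_pair_le v w
  omega

/-- The crossing case: `KA = {u,v}` while `KB` is a different pair. -/
lemma cross_case {S : Set V} (hcard : 3 < B.ncard)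
    (hconn : ∀ S' : Set ↥B, S'.ncard ≤ 2 → ((torso G B).induce (S'ᶜ : Set ↥B)).Connected)
    (hadh : adhesionLE G B 2) (hS : S.ncard ≤ 2)
    (hSnB : ∀ x ∈ S, x ∉ B) (KA KB : Set V) (hKAB : KA ⊆ B) (hKBB : KB ⊆ B)
    (hall : ∀ (s : V) (hs : s ∈ S) (hsB : s ∈ (Bᶜ : Set V)) (a b : V), a ≠ b →
      a ∈ Kof G B s hsB → b ∈ Kof G B s hsB →
      Kof G B s hsB = KA ∨ Kof G B s hsB = KB)
    {u v : V} (hu : u ∈ B) (hv : v ∈ B) (huS : u ∉ S) (hvS : v ∉ S) (huv : u ≠ v)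
    (hKA : KA = ({u, v} : Set V)) {a b : V} (hab : a ≠ b) (hKB : KB = {a, b})
    (hKBne : KB ≠ ({u, v} : Set V)) : reachIn G Sᶜ u v := by
  classical
  have hSB : S ∩ B ⊆ (∅ : Set V) := fun x hx => absurd hx.2 (hSnB x hx.1)
  have huA : u ∈ KA := by rw [hKA]; exact Set.mem_insert _ _
  have hvA : v ∈ KA := by rw [hKA]; exact Set.mem_insert_of_mem _ rfl
  obtain ⟨z, hzKB, hzuv⟩ := exists_out_pair hKB hab huv hKBne
  have hzu : z ≠ u := fun e => hzuv (e ▸ Set.mem_insert _ _)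
  have hzv : z ≠ v := fun e => hzuv (e ▸ Set.mem_insert_of_mem _ rfl)
  have hzB : z ∈ B := hKBB hzKB
  have hzS : z ∉ S := fun h => hSnB z h hzB
  -- get the other element w of KB
  obtain ⟨w, hwKB, hzw, hKBzw⟩ : ∃ w, w ∈ KB ∧ z ≠ w ∧ KB = {z, w} := by
    rw [hKB] at hzKB
    rcases mem_pair_iff'.mp hzKB with rfl | rfl
    · exact ⟨b, by rw [hKB]; exact Set.mem_insert_of_mem _ rfl, hab, hKB⟩
    · exact ⟨a, by rw [hKB]; exact Set.mem_insert _ _, fun e => hab e.symm,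
        by rw [hKB]; exact Set.pair_comm a z⟩
  have hwB : w ∈ B := hKBB hwKB
  -- a route helper for this context
  have rte : ∀ (U : Set V), U ⊆ B → U.ncard ≤ 2 → (KA ∩ U).Nonempty →
      (KB ∩ U).Nonempty → ∀ x y, x ∈ B → y ∈ B → x ∉ U → y ∉ U → reachIn G Sᶜ x y := by
    intro U hUB hUc hA hB' x y hx hy hxU hyU
    exact route hconn U hUB (le_trans hSB (Set.empty_subset U)) hUc
      (hhit_builder hadh KA KB hall U hA hB') hx hy hxU hyU
  by_cases hwu : w = u
  · obtain ⟨t, htB, htZ⟩ := exists_out hcard (Z := ({u, v, z} : Set V)) (ncard_triple_le u v z)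
    have htu : t ≠ u := fun e => htZ (e ▸ Set.mem_insert _ _)
    have htv : t ≠ v := fun e => htZ (e ▸ Set.mem_insert_of_mem _ (Set.mem_insert _ _))
    have htz : t ≠ z := fun e => htZ
      (e ▸ Set.mem_insert_of_mem _ (Set.mem_insert_of_mem _ rfl))
    have leg1 : reachIn G Sᶜ u t := by
      refine rte {v, z} ?_ (ncard_pair_le _ _) ⟨v, hvA, Set.mem_insert _ _⟩
        ⟨z, hzKB, Set.mem_insert_of_mem _ rfl⟩ u t hu htB ?_ ?_
      · rintro x hx
        rcases mem_pair_iff'.mp hx with rfl | rfl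
        · exact hv
        · exact hzB
      · intro h; rcases mem_pair_iff'.mp h with e | e
        · exact huv e
        · exact hzu e.symm
      · intro h; rcases mem_pair_iff'.mp h with e | e
        · exact htv e
        · exact htz e
    have leg2 : reachIn G Sᶜ t v := by
      refine rte ({u} : Set V) (by rintro x rfl; exact hu) (by rw [Set.ncard_singleton]; omega)
        ⟨u, huA, rfl⟩ ⟨u, hwu ▸ hwKB, rfl⟩ t v htB hv ?_ ?_
      · intro h; exact htu h
      · intro h; exact huv (Set.mem_singleton_iff.mp h).symm
    exact leg1.trans leg2
  · by_cases hwv : w = v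
    · obtain ⟨t, htB, htZ⟩ := exists_out hcard (Z := ({u, v, z} : Set V)) (ncard_triple_le u v z)
      have htu : t ≠ u := fun e => htZ (e ▸ Set.mem_insert _ _)
      have htv : t ≠ v := fun e => htZ (e ▸ Set.mem_insert_of_mem _ (Set.mem_insert _ _))
      have htz : t ≠ z := fun e => htZ
        (e ▸ Set.mem_insert_of_mem _ (Set.mem_insert_of_mem _ rfl))
      have leg1 : reachIn G Sᶜ u t := by
        refine rte ({v} : Set V) (by rintro x rfl; exact hv) (by rw [Set.ncard_singleton]; omega)
          ⟨v, hvA, rfl⟩ ⟨v, hwv ▸ hwKB, rfl⟩ u t hu htB ?_ ?_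
        · intro h; exact huv (Set.mem_singleton_iff.mp h)
        · intro h; exact htv (Set.mem_singleton_iff.mp h)
      have leg2 : reachIn G Sᶜ t v := by
        refine rte {u, z} ?_ (ncard_pair_le _ _) ⟨u, huA, Set.mem_insert _ _⟩
          ⟨z, hzKB, Set.mem_insert_of_mem _ rfl⟩ t v htB hv ?_ ?_
        · rintro x hx
          rcases mem_pair_iff'.mp hx with rfl | rfl
          · exact hu
          · exact hzB
        · intro h; rcases mem_pair_iff'.mp h with e | e
          · exact htu e
          · exact htz e
        · intro h; rcases mem_pair_iff'.mp h with e | e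
          · exact huv e.symm
          · exact hzv e.symm
      exact leg1.trans leg2
    · -- w ∉ {u, v} : go u → z → v
      have leg1 : reachIn G Sᶜ u z := by
        refine rte {v, w} ?_ (ncard_pair_le _ _) ⟨v, hvA, Set.mem_insert _ _⟩
          ⟨w, hwKB, Set.mem_insert_of_mem _ rfl⟩ u z hu hzB ?_ ?_
        · rintro x hx
          rcases mem_pair_iff'.mp hx with rfl | rfl
          · exact hv
          · exact hwB
        · intro h; rcases mem_pair_iff'.mp h with e | e
          · exact huv e
          · exact hwu e.symm
        · intro h; rcases mem_pair_iff'.mp h with e | e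
          · exact hzv e
          · exact hzw e
      have leg2 : reachIn G Sᶜ z v := by
        refine rte {u, w} ?_ (ncard_pair_le _ _) ⟨u, huA, Set.mem_insert _ _⟩
          ⟨w, hwKB, Set.mem_insert_of_mem _ rfl⟩ z v hzB hv ?_ ?_
        · rintro x hx
          rcases mem_pair_iff'.mp hx with rfl | rfl
          · exact hu
          · exact hwB
        · intro h; rcases mem_pair_iff'.mp h with e | e
          · exact hzu e
          · exact hzw e
        · intro h; rcases mem_pair_iff'.mp h with e | e
          · exact huv e.symm
          · exact hwv e.symm
      exact leg1.trans leg2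

end Dance2
section MainReach

variable [Fintype V] {G : SimpleGraph V} {B : Set V}

lemma main_reach (hcard : 3 < B.ncard)
    (hconn : ∀ S' : Set ↥B, S'.ncard ≤ 2 → ((torso G B).induce (S'ᶜ : Set ↥B)).Connected)
    (hadh : adhesionLE G B 2) {S : Set V} (hS : S.ncard ≤ 2) :
    ∀ u v, u ∈ B → v ∈ B → u ∉ S → v ∉ S → reachIn G Sᶜ u v := by
  classical
  intro u v hu hv huS hvS
  by_cases huv : u = v
  · subst huv; exact reachIn.refl huS
  by_cases h1 : ∃ s, s ∈ S ∧ s ∈ (Bᶜ : Set V)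
  · obtain ⟨s₁, hs₁S, hs₁B⟩ := h1
    by_cases h2 : ∃ (s : V) (_ : s ∈ S) (hsB : s ∈ (Bᶜ : Set V)),
        Kof G B s hsB ≠ Kof G B s₁ hs₁B
    · -- two distinct component neighbourhoods
      obtain ⟨s₂, hs₂S, hs₂B, hKne⟩ := h2
      set K₁ := Kof G B s₁ hs₁B with hK₁def
      set K₂ := Kof G B s₂ hs₂B with hK₂def
      have hs12 : s₁ ≠ s₂ := by
        rintro rfl
        exact hKne rfl
      have hSpair : S = {s₁, s₂} := pair_eq hS hs12 hs₁S hs₂S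
      have hSnB : ∀ x ∈ S, x ∉ B := by
        intro x hx
        rw [hSpair] at hx
        rcases mem_pair_iff'.mp hx with rfl | rfl
        · exact hs₁B
        · exact hs₂B
      have hSBe : (S ∩ B).ncard ≤ 1 := by
        have : S ∩ B = ∅ := by
          ext x; constructor
          · rintro ⟨hx1, hx2⟩; exact absurd hx2 (hSnB x hx1)
          · rintro ⟨⟩
        rw [this, Set.ncard_empty]; omega
      have hallK : ∀ (s : V) (hs : s ∈ S) (hsB : s ∈ (Bᶜ : Set V)),
          Kof G B s hsB = K₁ ∨ Kof G B s hsB = K₂ := by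
        intro s hs hsB
        rw [hSpair] at hs
        rcases mem_pair_iff'.mp hs with rfl | rfl
        · exact Or.inl rfl
        · exact Or.inr rfl
      have hallK' : ∀ (s : V) (hs : s ∈ S) (hsB : s ∈ (Bᶜ : Set V)) (a b : V), a ≠ b →
          a ∈ Kof G B s hsB → b ∈ Kof G B s hsB →
          Kof G B s hsB = K₁ ∨ Kof G B s hsB = K₂ :=
        fun s hs hsB _ _ _ _ _ => hallK s hs hsB
      have hK₁B : K₁ ⊆ B := compNbrs_subset _
      have hK₂B : K₂ ⊆ B := compNbrs_subset _
      by_cases act1 : ∃ a b : V, a ≠ b ∧ a ∈ K₁ ∧ b ∈ K₁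
      · by_cases act2 : ∃ a b : V, a ≠ b ∧ a ∈ K₂ ∧ b ∈ K₂
        · -- both active
          obtain ⟨a₁, b₁, hab₁, ha₁, hb₁⟩ := act1
          obtain ⟨a₂, b₂, hab₂, ha₂, hb₂⟩ := act2
          have hP₁ : K₁ = {a₁, b₁} := pair_eq (hadh _) hab₁ ha₁ hb₁
          have hP₂ : K₂ = {a₂, b₂} := pair_eq (hadh _) hab₂ ha₂ hb₂
          by_cases hK1uv : K₁ = ({u, v} : Set V)
          · have hK2ne : K₂ ≠ ({u, v} : Set V) := fun h => hKne (h.trans hK1uv.symm)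
            exact cross_case hcard hconn hadh hS hSnB K₁ K₂ hK₁B hK₂B hallK'
              hu hv huS hvS huv hK1uv hab₂ hP₂ hK2ne
          · by_cases hK2uv : K₂ = ({u, v} : Set V)
            · have hallK'' : ∀ (s : V) (hs : s ∈ S) (hsB : s ∈ (Bᶜ : Set V)) (a b : V),
                  a ≠ b → a ∈ Kof G B s hsB → b ∈ Kof G B s hsB →
                  Kof G B s hsB = K₂ ∨ Kof G B s hsB = K₁ :=
                fun s hs hsB a b h h1 h2 => (hallK s hs hsB).symm
              exact cross_case hcard hconn hadh hS hSnB K₂ K₁ hK₂B hK₁B hallK''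
                hu hv huS hvS huv hK2uv hab₁ hP₁ hK1uv
            · -- neither pair equals {u,v}: direct route
              obtain ⟨z₁, hz₁K, hz₁uv⟩ := exists_out_pair hP₁ hab₁ huv hK1uv
              obtain ⟨z₂, hz₂K, hz₂uv⟩ := exists_out_pair hP₂ hab₂ huv hK2uv
              refine route hconn ({z₁, z₂} : Set V) ?_
                (fun x hx => absurd hx.2 (hSnB x hx.1)) (ncard_pair_le _ _)
                (hhit_builder hadh K₁ K₂ hallK' _ ⟨z₁, hz₁K, Set.mem_insert _ _⟩
                  ⟨z₂, hz₂K, Set.mem_insert_of_mem _ rfl⟩) hu hv ?_ ?_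
              · rintro x hx
                rcases mem_pair_iff'.mp hx with rfl | rfl
                · exact hK₁B hz₁K
                · exact hK₂B hz₂K
              · intro h
                rcases mem_pair_iff'.mp h with rfl | rfl
                · exact hz₁uv (Set.mem_insert _ _)
                · exact hz₂uv (Set.mem_insert _ _)
              · intro h
                rcases mem_pair_iff'.mp h with rfl | rfl
                · exact hz₁uv (Set.mem_insert_of_mem _ rfl)
                · exact hz₂uv (Set.mem_insert_of_mem _ rfl)
        · -- K₂ inactive
          refine single_K hcard hconn hadh hS hSBe K₁ hK₁B ?_ hu hv huS hvS huv
          intro s hs hsB a b hab ha hb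
          rcases hallK s hs hsB with h | h
          · exact h
          · rw [h] at ha hb
            exact absurd ⟨a, b, hab, ha, hb⟩ act2
      · -- K₁ inactive
        refine single_K hcard hconn hadh hS hSBe K₂ hK₂B ?_ hu hv huS hvS huv
        intro s hs hsB a b hab ha hb
        rcases hallK s hs hsB with h | h
        · rw [h] at ha hb
          exact absurd ⟨a, b, hab, ha, hb⟩ act1
        · exact h
    · -- all component neighbourhoods equal
      push_neg at h2
      have hSBe : (S ∩ B).ncard ≤ 1 := by
        have hsub : S ∩ B ⊆ S \ {s₁} := by
          rintro x ⟨hx1, hx2⟩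
          refine ⟨hx1, fun e => hs₁B ?_⟩
          rwa [Set.mem_singleton_iff.mp e] at hx2
        have h1 : (S \ {s₁}).ncard = S.ncard - 1 := Set.ncard_diff_singleton_of_mem hs₁S
        have := Set.ncard_le_ncard hsub (Set.toFinite _)
        omega
      refine single_K hcard hconn hadh hS hSBe (Kof G B s₁ hs₁B) (compNbrs_subset _)
        ?_ hu hv huS hvS huv
      intro s hs hsB a b hab ha hb
      exact h2 s hs hsB
  · -- S ⊆ B
    refine route hconn (S ∩ B) Set.inter_subset_right subset_rfl
      (le_trans (Set.ncard_le_ncard Set.inter_subset_left (Set.toFinite S)) hS) ?_ hu hv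
      (fun h => huS h.1) (fun h => hvS h.1)
    intro s hs hsB a b hab ha hb
    exact absurd ⟨s, hs, hsB⟩ h1

end MainReach
section ForwardAssemble

variable [Fintype V] {G : SimpleGraph V}

lemma ncard_eq_card (B : Set V) : B.ncard = Fintype.card ↥B := by
  rw [Set.ncard_eq_toFinset_card']; exact Set.toFinset_card B

lemma forward_dir {B : Set V} (h : IsProperBlock G B) {b₁ b₂ b₃ : V}
    (hb1 : b₁ ∈ B) (hb2 : b₂ ∈ B) (hb3 : b₃ ∈ B) :
    ∃ b₄ : V, b₄ ∉ ({b₁, b₂, b₃} : Set V) ∧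
      ∀ S : Set V, S.ncard ≤ 2 → ¬ SeparatesSet G S {b₁, b₂, b₃, b₄} := by
  obtain ⟨⟨hcard', hconn⟩, hadh⟩ := h
  have hcard : 3 < B.ncard := by rw [ncard_eq_card]; exact hcard'
  obtain ⟨b₄, hb4B, hb4⟩ : ∃ b₄ ∈ B, b₄ ∉ ({b₁, b₂, b₃} : Set V) := by
    by_contra hcon
    push_neg at hcon
    have := Set.ncard_le_ncard hcon (Set.toFinite _)
    have h3 := ncard_triple_le b₁ b₂ b₃
    omega
  refine ⟨b₄, hb4, fun S hS hsep => ?_⟩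
  obtain ⟨x, y, hxW, hyW, hne⟩ := hsep
  have hWB : ∀ w ∈ ({b₁, b₂, b₃, b₄} : Set V), w ∈ B := by
    intro w hw
    rcases hw with rfl | rfl | rfl | rfl
    exacts [hb1, hb2, hb3, hb4B]
  have r := main_reach hcard hconn hadh hS ↑x ↑y (hWB _ hxW) (hWB _ hyW) x.2 y.2
  exact hne (ConnectedComponent.sound (reachIn.to_reachable (hx := x.2) (hy := y.2) r))

end ForwardAssemble
section Reverse

variable [Fintype V] {G : SimpleGraph V}

/-- The candidate block: vertices that cannot be 2-separated from `W`. -/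
def BB (G : SimpleGraph V) (W : Set V) : Set V :=
  {v | ∀ S : Set V, S.ncard ≤ 2 → ¬ SeparatesSet G S (W ∪ {v})}

/-- A good region: connected, at most 2 neighbours, disjoint from `W`. -/
def GoodRegion (G : SimpleGraph V) (W D : Set V) : Prop :=
  (G.induce D).Connected ∧ (nbrSet G D).ncard ≤ 2 ∧ Disjoint D W

lemma notSep_mk_eq {S W : Set V} (hsep : ¬ SeparatesSet G S W) (a b : ↥(Sᶜ : Set V))
    (ha : ↑a ∈ W) (hb : ↑b ∈ W) :
    (G.induce (Sᶜ : Set V)).connectedComponentMk a =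
      (G.induce (Sᶜ : Set V)).connectedComponentMk b := by
  by_contra hne
  exact hsep ⟨a, b, ha, hb, hne⟩

lemma good_of_not_mem {W : Set V} (hH : ∀ S : Set V, S.ncard ≤ 2 → ¬ SeparatesSet G S W)
    {v : V} (h : v ∉ BB G W) : ∃ D, GoodRegion G W D ∧ v ∈ D := by
  unfold BB at h
  rw [Set.mem_setOf_eq] at h
  push_neg at h
  obtain ⟨S, hS, hsep⟩ := h
  obtain ⟨x, y, hxW, hyW, hne⟩ := hsep
  have key : ∀ (x y : ↥(Sᶜ : Set V)), ↑x = v → ↑y ∈ W →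
      (G.induce (Sᶜ : Set V)).connectedComponentMk x ≠
        (G.induce (Sᶜ : Set V)).connectedComponentMk y →
      ∃ D, GoodRegion G W D ∧ v ∈ D := by
    clear hne hxW hyW x y
    intro x y hxv hyW hne
    set mks := (G.induce (Sᶜ : Set V)).connectedComponentMk with hmks
    refine ⟨Subtype.val '' {z : ↥(Sᶜ : Set V) | mks z = mks x}, ⟨?_, ?_, ?_⟩, ?_⟩
    · -- connected
      set D := Subtype.val '' {z : ↥(Sᶜ : Set V) | mks z = mks x} with hD
      have hreach : ∀ a b : ↥D, reachIn G D ↑a ↑b := by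
        intro a b
        obtain ⟨za, hza, hvala⟩ := a.2
        obtain ⟨zb, hzb, hvalb⟩ := b.2
        obtain ⟨p⟩ : (G.induce (Sᶜ : Set V)).Reachable za zb :=
          ConnectedComponent.exact (hza.trans hzb.symm)
        have htrans : reachIn G D ↑za ↑zb := by
          refine reachIn_of_walk p (fun w hw => ?_)
          exact ⟨w, (mk_eq_of_mem_support p hw).trans hza, rfl⟩
        rw [← hvala, ← hvalb]
        exact htrans
      refine (connected_iff _).mpr ⟨fun a b => ?_, ⟨⟨v, ⟨x, rfl, hxv⟩⟩⟩⟩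
      exact reachIn.to_reachable (hx := a.2) (hy := b.2) (hreach a b)
    · -- boundary
      have hsub : nbrSet G (Subtype.val '' {z : ↥(Sᶜ : Set V) | mks z = mks x}) ⊆ S := by
        rintro t ⟨htD, d, ⟨zd, hzd, rfl⟩, hadj⟩
        by_contra htS
        refine htD ⟨⟨t, htS⟩, ?_, rfl⟩
        have : (G.induce (Sᶜ : Set V)).Adj zd ⟨t, htS⟩ := hadj
        exact ((ConnectedComponent.sound this.reachable).symm.trans hzd : _)
      exact le_trans (Set.ncard_le_ncard hsub (Set.toFinite S)) hS
    · -- disjoint from W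
      rw [Set.disjoint_left]
      rintro w ⟨zw, hzw, rfl⟩ hwW
      have h1 : mks zw = mks y := notSep_mk_eq (hH S hS) zw y hwW hyW
      exact hne (hzw.symm.trans h1)
    · exact ⟨x, rfl, hxv⟩
  rcases hxW with hxW | hxv
  · rcases hyW with hyW | hyv
    · exact absurd ⟨x, y, hxW, hyW, hne⟩ (hH S hS)
    · exact key y x (Set.mem_singleton_iff.mp hyv) hxW hne.symm
  · rcases hyW with hyW | hyv
    · exact key x y (Set.mem_singleton_iff.mp hxv) hyW hne
    · exact absurd (congrArg _ (Subtype.ext ((Set.mem_singleton_iff.mp hxv).trans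
        (Set.mem_singleton_iff.mp hyv).symm))) hne

lemma not_mem_BB_of_good {W D : Set V}
    (hW3 : 2 < W.ncard) (hgood : GoodRegion G W D) {d : V} (hd : d ∈ D) :
    d ∉ BB G W := by
  obtain ⟨hc, hn, hdisj⟩ := hgood
  intro hmem
  refine hmem (nbrSet G D) hn ?_
  have hdS : d ∉ nbrSet G D := fun h => h.1 hd
  obtain ⟨w₀, hw₀W, hw₀S⟩ : ∃ w ∈ W, w ∉ nbrSet G D := by
    by_contra hcon
    push_neg at hcon
    have := Set.ncard_le_ncard hcon (Set.toFinite _)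
    omega
  refine ⟨⟨d, hdS⟩, ⟨w₀, hw₀S⟩, Or.inr rfl, Or.inl hw₀W, ?_⟩
  intro heq
  obtain ⟨p⟩ : (G.induce ((nbrSet G D)ᶜ : Set V)).Reachable ⟨d, hdS⟩ ⟨w₀, hw₀S⟩ :=
    ConnectedComponent.exact heq
  have hw₀D : w₀ ∈ D := walk_stay p hd (fun v hv => (v.2 : ↑v ∉ nbrSet G D))
  exact Set.disjoint_left.mp hdisj hw₀D hw₀W

end Reverse
section Merge

variable [Fintype V] {G : SimpleGraph V}

lemma merge_good {W D₁ D₂ : Set V} {s : V}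
    (h1 : GoodRegion G W D₁) (h2 : GoodRegion G W D₂)
    (hs1 : s ∈ nbrSet G D₁) (hs2 : s ∈ D₂) (hsW : s ∉ W) :
    GoodRegion G W (D₁ ∪ {s} ∪ D₂) := by
  classical
  obtain ⟨hc1, hn1, hd1⟩ := h1
  obtain ⟨hc2, hn2, hd2⟩ := h2
  obtain ⟨hsD1, x₀, hx₀D, hx₀adj⟩ := hs1
  set R := D₁ ∪ {s} ∪ D₂ with hR
  have hsR : s ∈ R := Or.inl (Or.inr rfl)
  have hD1R : D₁ ⊆ R := fun z hz => Or.inl (Or.inl hz)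
  have hD2R : D₂ ⊆ R := fun z hz => Or.inr hz
  have hconn : (G.induce R).Connected := by
    have hreach_s : ∀ t, t ∈ R → reachIn G R t s := by
      intro t ht
      rcases ht with (ht | ht) | ht
      · -- t ∈ D₁
        have hr : (G.induce D₁).Reachable ⟨t, ht⟩ ⟨x₀, hx₀D⟩ := hc1.preconnected _ _
        obtain ⟨p⟩ := hr
        have h1 : reachIn G R t x₀ := reachIn_of_walk p (fun w _ => hD1R w.2)
        exact h1.trans (reachIn.of_adj (hD1R hx₀D) hsR hx₀adj)
      · -- t = s
        have hts : t = s := Set.mem_singleton_iff.mp ht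
        subst hts
        exact reachIn.refl hsR
      · -- t ∈ D₂
        have hr : (G.induce D₂).Reachable ⟨t, ht⟩ ⟨s, hs2⟩ := hc2.preconnected _ _
        obtain ⟨p⟩ := hr
        exact reachIn_of_walk p (fun w _ => hD2R w.2)
    refine (connected_iff _).mpr ⟨fun a b => ?_, ⟨⟨s, hsR⟩⟩⟩
    exact reachIn.to_reachable (hx := a.2) (hy := b.2)
      ((hreach_s ↑a a.2).trans (hreach_s ↑b b.2).symm)
  have hdisj : Disjoint R W := by
    rw [Set.disjoint_left]
    rintro x ((hx | hx) | hx) hxW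
    · exact Set.disjoint_left.mp hd1 hx hxW
    · exact hsW (Set.mem_singleton_iff.mp hx ▸ hxW)
    · exact Set.disjoint_left.mp hd2 hx hxW
  refine ⟨hconn, ?_, hdisj⟩
  have hRsub : nbrSet G R ⊆ (nbrSet G D₁ \ {s}) ∪ nbrSet G D₂ := by
    rintro t ⟨htR, x, hxR, hadj⟩
    have htD1 : t ∉ D₁ := fun h => htR (hD1R h)
    have htD2 : t ∉ D₂ := fun h => htR (hD2R h)
    have hts : t ≠ s := fun h => htR (h ▸ hsR)
    rcases hxR with (hx | hx) | hx
    · exact Or.inl ⟨⟨htD1, x, hx, hadj⟩, hts⟩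
    · rw [Set.mem_singleton_iff] at hx
      subst hx
      rcases mem_or_nbr hs2 hadj with h | h
      · exact absurd h htD2
      · exact Or.inr h
    · exact Or.inr ⟨htD2, x, hx, hadj⟩
  by_cases hcase : (nbrSet G D₂ ∩ (D₁ ∪ (nbrSet G D₁ \ {s}))).Nonempty
  · obtain ⟨p, hpN2, hpD⟩ := hcase
    have hsub2 : nbrSet G R ⊆ (nbrSet G D₁ \ {s}) ∪ (nbrSet G D₂ \ {p}) := by
      intro t ht
      have htR : t ∉ R := ht.1
      rcases hRsub ht with h | h
      · exact Or.inl h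
      · by_cases htp : t = p
        · subst htp
          rcases hpD with hp | hp
          · exact absurd (hD1R hp) htR
          · exact Or.inl hp
        · exact Or.inr ⟨h, htp⟩
    have e1 : (nbrSet G D₁ \ {s}).ncard = (nbrSet G D₁).ncard - 1 :=
      Set.ncard_diff_singleton_of_mem ⟨hsD1, x₀, hx₀D, hx₀adj⟩
    have e2 : (nbrSet G D₂ \ {p}).ncard = (nbrSet G D₂).ncard - 1 :=
      Set.ncard_diff_singleton_of_mem hpN2
    have := Set.ncard_union_le (nbrSet G D₁ \ {s}) (nbrSet G D₂ \ {p})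
    have hle := Set.ncard_le_ncard hsub2 (Set.toFinite _)
    omega
  · -- D₁ ⊆ D₂, so R = D₂
    have hempty : ∀ x, x ∈ nbrSet G D₂ → x ∉ D₁ ∪ (nbrSet G D₁ \ {s}) := by
      intro x hx hx'
      exact hcase ⟨x, hx, hx'⟩
    have hx₀D₂ : x₀ ∈ D₂ := by
      rcases mem_or_nbr hs2 (hx₀adj.symm : G.Adj s x₀) with h | h
      · exact h
      · exact absurd (Or.inl hx₀D) (hempty x₀ h)
    have hD₁sub : D₁ ⊆ D₂ := by
      intro z hz
      obtain ⟨p⟩ : (G.induce D₁).Reachable ⟨x₀, hx₀D⟩ ⟨z, hz⟩ := hc1.preconnected _ _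
      refine walk_stay p hx₀D₂ (fun w _ hw => ?_)
      exact hempty ↑w hw (Or.inl w.2)
    have hReq : R = D₂ := by
      refine Set.Subset.antisymm ?_ hD2R
      rintro x ((hx | hx) | hx)
      · exact hD₁sub hx
      · exact Set.mem_singleton_iff.mp hx ▸ hs2
      · exact hx
    rw [hReq]
    exact hn2

end Merge
section Adhesion

variable [Fintype V] {G : SimpleGraph V}

lemma W_subset_BB {W : Set V} (hH : ∀ S : Set V, S.ncard ≤ 2 → ¬ SeparatesSet G S W) :
    W ⊆ BB G W := by
  intro w hw S hS
  rw [Set.union_singleton, Set.insert_eq_self.mpr hw]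
  exact hH S hS

lemma adhesion_BB {W : Set V} (hH : ∀ S : Set V, S.ncard ≤ 2 → ¬ SeparatesSet G S W)
    (hW3 : 2 < W.ncard) : adhesionLE G (BB G W) 2 := by
  classical
  set B := BB G W with hBdef
  intro C
  obtain ⟨y₀, hy₀⟩ := C.exists_rep
  set Chat : Set V := Subtype.val ''
    {z : ↥(Bᶜ : Set V) | (G.induce (Bᶜ : Set V)).connectedComponentMk z = C} with hChat
  have hChatB : ∀ x ∈ Chat, x ∉ B := by
    rintro x ⟨z, hz, rfl⟩
    exact z.2
  set F : Set (Set V) := {D | GoodRegion G W D ∧ (D ∩ Chat).Nonempty} with hF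
  have hFne : F.Nonempty := by
    obtain ⟨D₀, hD₀good, hD₀mem⟩ := good_of_not_mem hH (y₀.2 : ↑y₀ ∉ B)
    exact ⟨D₀, hD₀good, ⟨↑y₀, hD₀mem, ⟨y₀, hy₀, rfl⟩⟩⟩
  obtain ⟨D, ⟨hgood, hDC⟩, hmax⟩ :=
    Set.exists_max_image F (fun D => (D ∩ Chat).ncard) (Set.toFinite F) hFne
  have hCD : Chat ⊆ D := by
    by_contra hcon
    rw [Set.not_subset] at hcon
    obtain ⟨w, hwC, hwD⟩ := hcon
    obtain ⟨a₀, ha₀D, ha₀C⟩ := hDC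
    obtain ⟨za, hza, hvala⟩ := ha₀C
    obtain ⟨zw, hzw, hvalw⟩ := hwC
    obtain ⟨p⟩ : (G.induce (Bᶜ : Set V)).Reachable za zw :=
      ConnectedComponent.exact (hza.trans hzw.symm)
    obtain ⟨c, hcsup, hcnbr⟩ := walk_exit p (by rw [hvala]; exact ha₀D)
      (by rw [hvalw]; exact hwD)
    have hcB : (↑c : V) ∉ B := c.2
    have hcW : (↑c : V) ∉ W := fun h => hcB (W_subset_BB hH h)
    have hcChat : (↑c : V) ∈ Chat := ⟨c, (mk_eq_of_mem_support p hcsup).trans hza, rfl⟩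
    obtain ⟨D₂, hD₂good, hcD₂⟩ := good_of_not_mem hH hcB
    have hmerge := merge_good hgood hD₂good hcnbr hcD₂ hcW
    have hRF : (D ∪ {↑c} ∪ D₂) ∈ F :=
      ⟨hmerge, ⟨↑c, Or.inl (Or.inr rfl), hcChat⟩⟩
    have hgrow : (insert (↑c : V) (D ∩ Chat)).ncard ≤ ((D ∪ {↑c} ∪ D₂) ∩ Chat).ncard := by
      refine Set.ncard_le_ncard ?_ (Set.toFinite _)
      rintro x hx
      rcases Set.mem_insert_iff.mp hx with rfl | ⟨hx1, hx2⟩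
      · exact ⟨Or.inl (Or.inr rfl), hcChat⟩
      · exact ⟨Or.inl (Or.inl hx1), hx2⟩
    have hins : (insert (↑c : V) (D ∩ Chat)).ncard = (D ∩ Chat).ncard + 1 :=
      Set.ncard_insert_of_notMem (fun h => hcnbr.1 h.1)
    have hle := hmax _ hRF
    omega
  -- now compNbrs ⊆ nbrSet D
  have hfinal : compNbrs G B C ⊆ nbrSet G D := by
    rintro x ⟨hxB, y, hyC, hadj⟩
    have hxD : x ∉ D := fun h => not_mem_BB_of_good hW3 hgood h hxB
    exact ⟨hxD, ↑y, hCD ⟨y, hyC, rfl⟩, hadj.symm⟩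
  exact le_trans (Set.ncard_le_ncard hfinal (Set.toFinite _)) hgood.2.1

end Adhesion
section TorsoConn

variable [Fintype V] {G : SimpleGraph V}

/-- Reachability in the torso of `B` minus `T`, phrased on ambient vertices. -/
def torsoReach (G : SimpleGraph V) (B : Set V) (T : Set ↥B) (u v : V) : Prop :=
  ∃ (hu : u ∈ B) (hu' : (⟨u, hu⟩ : ↥B) ∈ (Tᶜ : Set ↥B)) (hv : v ∈ B)
    (hv' : (⟨v, hv⟩ : ↥B) ∈ (Tᶜ : Set ↥B)),
    ((torso G B).induce (Tᶜ : Set ↥B)).Reachable ⟨⟨u, hu⟩, hu'⟩ ⟨⟨v, hv⟩, hv'⟩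

lemma torsoReach_notT {B : Set V} {T : Set ↥B} {u : V} (hu : u ∈ B)
    (huT : u ∉ Subtype.val '' T) : (⟨u, hu⟩ : ↥B) ∈ (Tᶜ : Set ↥B) :=
  fun hT => huT ⟨⟨u, hu⟩, hT, rfl⟩

lemma torsoReach_refl {B : Set V} {T : Set ↥B} {u : V} (hu : u ∈ B)
    (huT : u ∉ Subtype.val '' T) : torsoReach G B T u u :=
  ⟨hu, torsoReach_notT hu huT, hu, torsoReach_notT hu huT, Reachable.refl _⟩

lemma torsoReach_trans {B : Set V} {T : Set ↥B} {u v w : V}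
    (h1 : torsoReach G B T u v) (h2 : torsoReach G B T v w) : torsoReach G B T u w := by
  obtain ⟨hu, hu', hv, hv', hr1⟩ := h1
  obtain ⟨hv2, hv2', hw, hw', hr2⟩ := h2
  exact ⟨hu, hu', hw, hw', hr1.trans hr2⟩

lemma torsoReach_adj {B : Set V} {T : Set ↥B} {u v : V} (hu : u ∈ B) (hv : v ∈ B)
    (huT : u ∉ Subtype.val '' T) (hvT : v ∉ Subtype.val '' T)
    (hadj : (torso G B).Adj ⟨u, hu⟩ ⟨v, hv⟩) : torsoReach G B T u v := by
  refine ⟨hu, torsoReach_notT hu huT, hv, torsoReach_notT hv hvT, ?_⟩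
  exact Adj.reachable (by exact hadj :
    ((torso G B).induce (Tᶜ : Set ↥B)).Adj ⟨⟨u, hu⟩, torsoReach_notT hu huT⟩
      ⟨⟨v, hv⟩, torsoReach_notT hv hvT⟩)

/-- Lift a walk in `G - T'` between vertices of `B` to the torso minus `T`. -/
lemma lift_walk {B : Set V} {T : Set ↥B} : ∀ (n : ℕ),
    (∀ (x y : ↥((Subtype.val '' T)ᶜ : Set V))
      (p : (G.induce ((Subtype.val '' T)ᶜ : Set V)).Walk x y), p.length ≤ n →
      (↑x : V) ∈ B → (↑y : V) ∈ B → torsoReach G B T ↑x ↑y) ∧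
    (∀ (x y : ↥((Subtype.val '' T)ᶜ : Set V))
      (p : (G.induce ((Subtype.val '' T)ᶜ : Set V)).Walk x y), p.length ≤ n →
      ∀ (hx : (↑x : V) ∈ (Bᶜ : Set V)), (↑y : V) ∈ B →
      ∃ d, d ∈ compNbrs G B ((G.induce (Bᶜ : Set V)).connectedComponentMk ⟨↑x, hx⟩) ∧
        d ∉ Subtype.val '' T ∧ torsoReach G B T d ↑y) := by
  intro n
  induction n with
  | zero =>
    constructor
    · intro x y p hlen hx hy
      cases p with
      | nil => exact torsoReach_refl hx x.2
      | cons h q => simp [Walk.length_cons] at hlen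
    · intro x y p hlen hx hy
      cases p with
      | nil => exact absurd hy hx
      | cons h q => simp [Walk.length_cons] at hlen
  | succ n ih =>
    obtain ⟨ihmain, ihhelp⟩ := ih
    constructor
    · intro x y p hlen hx hy
      cases p with
      | nil => exact torsoReach_refl hx x.2
      | cons h q =>
        rename_i m
        have hq : q.length ≤ n := by
          rw [Walk.length_cons] at hlen; omega
        have hGadj : G.Adj ↑x ↑m := h
        by_cases hmB : (↑m : V) ∈ B
        · have hadj : (torso G B).Adj ⟨↑x, hx⟩ ⟨↑m, hmB⟩ :=
            ⟨fun he => hGadj.ne (congrArg (Subtype.val : ↥B → V) he), Or.inl hGadj⟩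
          exact torsoReach_trans (torsoReach_adj hx hmB x.2 m.2 hadj)
            (ihmain m y q hq hmB hy)
        · obtain ⟨d, hdK, hdT, hdr⟩ := ihhelp m y q hq hmB hy
          have hxK : (↑x : V) ∈
              compNbrs G B ((G.induce (Bᶜ : Set V)).connectedComponentMk ⟨↑m, hmB⟩) :=
            ⟨hx, ⟨↑m, hmB⟩, rfl, hGadj⟩
          by_cases hdx : d = ↑x
          · subst hdx; exact hdr
          · have hdB : d ∈ B := hdK.1
            have hadj : (torso G B).Adj ⟨↑x, hx⟩ ⟨d, hdB⟩ :=
              ⟨fun he => hdx (congrArg (Subtype.val : ↥B → V) he).symm,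
                Or.inr ⟨_, hxK, hdK⟩⟩
            exact torsoReach_trans (torsoReach_adj hx hdB x.2 hdT hadj) hdr
    · intro x y p hlen hx hy
      cases p with
      | nil => exact absurd hy hx
      | cons h q =>
        rename_i m
        have hq : q.length ≤ n := by
          rw [Walk.length_cons] at hlen; omega
        have hGadj : G.Adj ↑x ↑m := h
        by_cases hmB : (↑m : V) ∈ B
        · refine ⟨↑m, ⟨hmB, ⟨↑x, hx⟩, rfl, hGadj.symm⟩, m.2, ihmain m y q hq hmB hy⟩
        · obtain ⟨d, hdK, hdT, hdr⟩ := ihhelp m y q hq hmB hy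
          have hcomp : (G.induce (Bᶜ : Set V)).connectedComponentMk ⟨↑m, hmB⟩ =
              (G.induce (Bᶜ : Set V)).connectedComponentMk ⟨↑x, hx⟩ :=
            ConnectedComponent.sound
              (Adj.reachable (by exact hGadj.symm :
                (G.induce (Bᶜ : Set V)).Adj ⟨↑m, hmB⟩ ⟨↑x, hx⟩))
          rw [hcomp] at hdK
          exact ⟨d, hdK, hdT, hdr⟩

end TorsoConn
section Final

variable [Fintype V] {G : SimpleGraph V}

lemma torso_conn_BB {W : Set V} (hH : ∀ S : Set V, S.ncard ≤ 2 → ¬ SeparatesSet G S W)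
    (hW3 : 2 < W.ncard) :
    ∀ T : Set ↥(BB G W), T.ncard ≤ 2 →
      ((torso G (BB G W)).induce (Tᶜ : Set ↥(BB G W))).Connected := by
  classical
  set B := BB G W with hBdef
  intro T hT
  set T' : Set V := Subtype.val '' T with hT'def
  have hT' : T'.ncard ≤ 2 := by
    rw [hT'def, Set.ncard_image_of_injective T Subtype.val_injective]
    exact hT
  have hWB : W ⊆ B := W_subset_BB hH
  obtain ⟨w₀, hw₀W, hw₀T⟩ : ∃ w ∈ W, w ∉ T' := by
    by_contra hcon
    push_neg at hcon
    have := Set.ncard_le_ncard hcon (Set.toFinite T')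
    omega
  have hw₀B : w₀ ∈ B := hWB hw₀W
  have key : ∀ (u : V) (hu : u ∈ B) (huT : u ∈ (T'ᶜ : Set V)),
      (G.induce (T'ᶜ : Set V)).connectedComponentMk ⟨u, huT⟩ =
        (G.induce (T'ᶜ : Set V)).connectedComponentMk ⟨w₀, hw₀T⟩ := by
    intro u hu huT
    by_contra hne
    exact (hu : ∀ S : Set V, S.ncard ≤ 2 → ¬ SeparatesSet G S (W ∪ {u})) T' hT'
      ⟨⟨u, huT⟩, ⟨w₀, hw₀T⟩, Or.inr rfl, Or.inl hw₀W, hne⟩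
  refine (connected_iff _).mpr ⟨fun x y => ?_, ⟨⟨⟨w₀, hw₀B⟩, torsoReach_notT hw₀B hw₀T⟩⟩⟩
  have hxB : (↑↑x : V) ∈ B := (↑x : ↥B).2
  have hyB : (↑↑y : V) ∈ B := (↑y : ↥B).2
  have hxT : (↑↑x : V) ∈ (T'ᶜ : Set V) := by
    rintro ⟨t, htT, htval⟩
    exact x.2 (by rwa [show t = ↑x from Subtype.ext htval] at htT)
  have hyT : (↑↑y : V) ∈ (T'ᶜ : Set V) := by
    rintro ⟨t, htT, htval⟩
    exact y.2 (by rwa [show t = ↑y from Subtype.ext htval] at htT)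
  obtain ⟨p⟩ : (G.induce (T'ᶜ : Set V)).Reachable ⟨↑↑x, hxT⟩ ⟨↑↑y, hyT⟩ :=
    ConnectedComponent.exact ((key _ hxB hxT).trans (key _ hyB hyT).symm)
  obtain ⟨hu, hu', hv, hv', hr⟩ := (lift_walk p.length).1 _ _ p le_rfl hxB hyB
  exact hr

lemma card_BB {W : Set V} (hH : ∀ S : Set V, S.ncard ≤ 2 → ¬ SeparatesSet G S W)
    (hW4 : W.ncard = 4) : 3 < Fintype.card ↥(BB G W) := by
  rw [← ncard_eq_card]
  have := Set.ncard_le_ncard (W_subset_BB hH) (Set.toFinite (BB G W))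
  omega

end Final
/-- There is a proper block containing three pairwise distinct vertices
`b₁, b₂, b₃` if and only if there is a fourth vertex `b₄` such that no set of
at most 2 vertices separates `{b₁, b₂, b₃, b₄}`. -/
theorem properBlock_exists_iff {V : Type} [Fintype V] (G : SimpleGraph V)
    (b₁ b₂ b₃ : V) (h12 : b₁ ≠ b₂) (h13 : b₁ ≠ b₃) (h23 : b₂ ≠ b₃) :
    (∃ B : Set V, IsProperBlock G B ∧ b₁ ∈ B ∧ b₂ ∈ B ∧ b₃ ∈ B) ↔
      (∃ b₄ : V, b₄ ∉ ({b₁, b₂, b₃} : Set V) ∧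
        ∀ S : Set V, S.ncard ≤ 2 →
          ¬ SeparatesSet G S {b₁, b₂, b₃, b₄}) := by
  constructor
  · rintro ⟨B, hPB, hb1, hb2, hb3⟩
    exact forward_dir hPB hb1 hb2 hb3
  · rintro ⟨b₄, hb4n, hH⟩
    have h14 : b₁ ≠ b₄ := fun e => hb4n (e ▸ Set.mem_insert _ _)
    have h24 : b₂ ≠ b₄ := fun e => hb4n
      (e ▸ Set.mem_insert_of_mem _ (Set.mem_insert _ _))
    have h34 : b₃ ≠ b₄ := fun e => hb4n
      (e ▸ Set.mem_insert_of_mem _ (Set.mem_insert_of_mem _ rfl))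
    set W : Set V := {b₁, b₂, b₃, b₄} with hWdef
    have hW4 : W.ncard = 4 := by
      rw [hWdef]
      rw [Set.ncard_insert_of_notMem (by simp [h12, h13, h14]),
        Set.ncard_insert_of_notMem (by simp [h23, h24]),
        Set.ncard_insert_of_notMem (by simp [h34]), Set.ncard_singleton]
    have hW3 : 2 < W.ncard := by omega
    have hWB : W ⊆ BB G W := W_subset_BB hH
    refine ⟨BB G W, ⟨⟨card_BB hH hW4, torso_conn_BB hH hW3⟩, adhesion_BB hH hW3⟩,
      hWB (Set.mem_insert _ _),
      hWB (Set.mem_insert_of_mem _ (Set.mem_insert _ _)),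
      hWB (Set.mem_insert_of_mem _ (Set.mem_insert_of_mem _ (Set.mem_insert _ _)))⟩
end

section
/- Let G be a graph, B a proper block of G, and v ∈ B. Then every path in the torso G⟦B⟧ from v to another vertex of B can be expanded to a path in G with the same endpoints, and internally disjoint paths in G⟦B⟧ expand to internally disjoint paths in G. Consequently, for any three distinct vertices b₁,b₂,b₃ ∈ B and any v ∈ B, there are three paths in G from v to b₁, b₂, b₃ respectively that pairwise intersect only in v. -/
open SimpleGraph

attribute [local instance] Classical.propDecidable

section WalkHelpers
variable {W : Type} {T : SimpleGraph W}

/-- walks in an induced subgraph map to ambient walks -/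
lemma induce_walk_ambient {s : Set W} : ∀ {a b : ↥s} (p : (T.induce s).Walk a b),
    ∃ q : T.Walk ↑a ↑b, q.support = p.support.map Subtype.val := by
  intro a b p
  induction p with
  | nil => exact ⟨Walk.nil, by simp⟩
  | cons h p ih =>
    obtain ⟨q, hq⟩ := ih
    exact ⟨Walk.cons h q, by simp only [Walk.support_cons, List.map_cons, hq]; exact congrArg (List.cons _) hq⟩

/-- ambient walks staying inside `s` lift to the induced subgraph -/
lemma ambient_walk_induce {s : Set W} : ∀ {a b : W} (p : T.Walk a b)
    (hsup : ∀ z ∈ p.support, z ∈ s) (ha : a ∈ s) (hb : b ∈ s),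
    ∃ q : (T.induce s).Walk ⟨a, ha⟩ ⟨b, hb⟩, q.support.map Subtype.val = p.support := by
  intro a b p
  induction p with
  | nil => exact fun _ ha hb => ⟨Walk.nil, by simp⟩
  | @cons a c b h p ih =>
    intro hsup ha hb
    have hc : c ∈ s := hsup c (by simp)
    obtain ⟨q, hq⟩ := ih (fun z hz => hsup z (by simp [hz])) hc hb
    exact ⟨Walk.cons (by exact h : (T.induce s).Adj ⟨a, ha⟩ ⟨c, hc⟩) q, by simp only [Walk.support_cons, List.map_cons, hq]; exact congrArg (List.cons _) hq⟩

/-- prefix of a walk until the first vertex belonging to `S` -/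
lemma exists_firstHit {a b : W} (p : T.Walk a b) (S : Set W)
    (h : ∃ s ∈ S, s ∈ p.support) :
    ∃ m ∈ S, ∃ q : T.Walk a m, q.support.IsPrefix p.support ∧
      (∀ e ∈ q.edges, e ∈ p.edges) ∧ (∀ s ∈ S, s ∈ q.support → s = m) := by
  induction p with
  | nil =>
    obtain ⟨s, hs, hsup⟩ := h
    simp only [Walk.support_nil, List.mem_singleton] at hsup
    subst hsup
    exact ⟨s, hs, Walk.nil, by simp, by simp, by simp⟩
  | @cons a c b h' p ih =>
    by_cases ha : a ∈ S
    · refine ⟨a, ha, Walk.nil, ⟨p.support, by simp [Walk.support_cons]⟩, by simp, by simp⟩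
    · obtain ⟨s, hs, hsup⟩ := h
      have hsup' : s ∈ p.support := by
        simp only [Walk.support_cons, List.mem_cons] at hsup
        rcases hsup with h1 | h1
        · exact absurd (h1 ▸ hs) ha
        · exact h1
      obtain ⟨m, hm, q, hpre, hed, honly⟩ := ih ⟨s, hs, hsup'⟩
      refine ⟨m, hm, Walk.cons h' q, ?_, ?_, ?_⟩
      · obtain ⟨t, ht⟩ := hpre
        exact ⟨t, by simp [Walk.support_cons, ht]⟩
      · intro e he
        simp only [Walk.edges_cons, List.mem_cons] at he ⊢
        rcases he with he1 | he1
        · exact Or.inl he1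
        · exact Or.inr (hed e he1)
      · intro s' hs' hsup''
        simp only [Walk.support_cons, List.mem_cons] at hsup''
        rcases hsup'' with h1 | h1
        · exact absurd (h1 ▸ hs') ha
        · exact honly s' hs' h1
end WalkHelpers


section Menger
variable {W : Type} [Fintype W]

/-- `S` separates `A` from `B` in `T`. -/
def MSep (T : SimpleGraph W) (A B S : Set W) : Prop :=
  ∀ ⦃a b : W⦄ (p : T.Walk a b), a ∈ A → b ∈ B → ∃ s ∈ S, s ∈ p.support

/-- there are `k` pairwise disjoint `A`–`B` paths in `T`. -/
def MDPS (T : SimpleGraph W) (A B : Set W) (k : ℕ) : Prop :=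
  ∃ (f g : Fin k → W) (P : ∀ i, T.Walk (f i) (g i)),
    (∀ i, f i ∈ A) ∧ (∀ i, g i ∈ B) ∧ (∀ i, (P i).IsPath) ∧
    (∀ i j, i ≠ j → ∀ x, x ∈ (P i).support → x ∉ (P j).support)

lemma mdps_of_no_edges (T : SimpleGraph W) (hE : T.edgeSet = ∅) (A B : Set W) (k : ℕ)
    (hsep : ∀ S : Set W, MSep T A B S → k ≤ S.ncard) : MDPS T A B k := by
  have hadj : ∀ a b : W, ¬ T.Adj a b := by
    intro a b hab
    have : s(a, b) ∈ T.edgeSet := hab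
    simp [hE] at this
  have hsepAB : MSep T A B (A ∩ B) := by
    intro a b p ha hb
    cases p with
    | nil => exact ⟨a, ⟨ha, hb⟩, by simp⟩
    | cons h _ => exact absurd h (hadj _ _)
  have hk : k ≤ (A ∩ B).toFinset.card := by
    have := hsep _ hsepAB
    rwa [Set.ncard_eq_toFinset_card'] at this
  obtain ⟨t, hts, htc⟩ := Finset.exists_subset_card_eq hk
  let e : t ≃ Fin k := t.equivFinOfCardEq htc
  refine ⟨fun i => (e.symm i : W), fun i => (e.symm i : W), fun i => Walk.nil, ?_, ?_, ?_, ?_⟩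
  · intro i
    have := hts (e.symm i).2
    rw [Set.mem_toFinset] at this
    exact this.1
  · intro i
    have := hts (e.symm i).2
    rw [Set.mem_toFinset] at this
    exact this.2
  · intro i; exact Walk.IsPath.nil
  · intro i j hij x hx hx'
    simp only [Walk.support_nil, List.mem_singleton] at hx hx'
    apply hij
    apply e.symm.injective
    apply Subtype.ext
    rw [← hx, hx']

/-- the contraction map sending `y` to `x`. -/
noncomputable def cmap (x y : W) : W → W := fun w => if w = y then x else w

/-- contraction of the edge `xy` (merging `y` into `x`). -/
def mcontract (T : SimpleGraph W) (x y : W) : SimpleGraph W where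
  Adj u v := u ≠ v ∧ ∃ a b, T.Adj a b ∧ cmap x y a = u ∧ cmap x y b = v
  symm := by constructor; rintro u v ⟨h, a, b, hab, ha, hb⟩; exact ⟨h.symm, b, a, hab.symm, hb, ha⟩
  loopless := by constructor; rintro u ⟨h, -⟩; exact h rfl

lemma cmap_eq_iff {x y : W} (hxy : x ≠ y) (w u : W) :
    cmap x y w = u ↔ ((w = y ∧ u = x) ∨ (w ≠ y ∧ w = u)) := by
  unfold cmap
  by_cases h : w = y <;> simp [h, eq_comm]

lemma exists_proj_walk {T T₂ : SimpleGraph W} (f : W → W)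
    (hf : ∀ a b, T.Adj a b → f a = f b ∨ T₂.Adj (f a) (f b)) :
    ∀ {a b : W} (p : T.Walk a b), ∃ q : T₂.Walk (f a) (f b),
      ∀ u ∈ q.support, ∃ w ∈ p.support, f w = u := by
  intro a b p
  induction p with
  | nil => exact ⟨Walk.nil, by simp⟩
  | @cons a c b h p ih =>
    obtain ⟨q, hq⟩ := ih
    rcases hf a c h with he | he
    · refine ⟨q.copy he.symm rfl, ?_⟩
      intro u hu
      rw [Walk.support_copy] at hu
      obtain ⟨w, hw, hfw⟩ := hq u hu
      exact ⟨w, by simp [hw], hfw⟩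
    · refine ⟨Walk.cons he q, ?_⟩
      intro u hu
      simp only [Walk.support_cons, List.mem_cons] at hu
      rcases hu with hu | hu
      · exact ⟨a, by simp, hu.symm⟩
      · obtain ⟨w, hw, hfw⟩ := hq u hu
        exact ⟨w, by simp [hw], hfw⟩
end Menger

section Lift
variable {W : Type} {T : SimpleGraph W} {x y : W}

lemma cmap_fiber (hxy : x ≠ y) {a a' : W} (h : cmap x y a = cmap x y a') (hne : a ≠ a') :
    (a = x ∧ a' = y) ∨ (a = y ∧ a' = x) := by
  unfold cmap at h
  by_cases h1 : a = y <;> by_cases h2 : a' = y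
  · exact absurd (h1.trans h2.symm) hne
  · simp [h1, h2] at h; exact Or.inr ⟨h1, h.symm⟩
  · simp [h1, h2] at h; exact Or.inl ⟨h, h2⟩
  · simp [h1, h2] at h; exact absurd h hne

lemma lift_walk_s12 (hxy : T.Adj x y) :
    ∀ {u v : W} (q : (mcontract T x y).Walk u v), q.IsPath →
    ∀ a, cmap x y a = u → ∃ b, cmap x y b = v ∧ ∃ Q : T.Walk a b, Q.IsPath ∧
      ∀ w ∈ Q.support, cmap x y w ∈ q.support := by
  intro u v q
  induction q with
  | nil =>
    intro _ a ha
    exact ⟨a, ha, Walk.nil, Walk.IsPath.nil, by simp [ha]⟩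
  | @cons u c v h q ih =>
    intro hq a ha
    obtain ⟨hne, a₀, b₀, hab, ha₀, hb₀⟩ := h
    have hq := (Walk.cons_isPath_iff _ _).mp hq
    obtain ⟨hq', huq⟩ := hq
    obtain ⟨b, hb, Q', hQ', hsup⟩ := ih hq' b₀ hb₀
    have haQ' : a ∉ Q'.support := fun hmem => huq (ha ▸ hsup a hmem)
    by_cases haa : a = a₀
    · subst haa
      refine ⟨b, hb, Walk.cons hab Q', ?_, ?_⟩
      · rw [Walk.cons_isPath_iff]
        exact ⟨hQ', haQ'⟩
      · intro w hw
        simp only [Walk.support_cons, List.mem_cons] at hw ⊢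
        rcases hw with hw | hw
        · exact List.mem_cons.mpr (Or.inl (hw ▸ ha))
        · exact List.mem_cons.mpr (Or.inr (hsup w hw))
    · have hfib := cmap_fiber hxy.ne (ha.trans ha₀.symm) haa
      have hadj : T.Adj a a₀ := by
        rcases hfib with ⟨h1, h2⟩ | ⟨h1, h2⟩
        · rw [h1, h2]; exact hxy
        · rw [h1, h2]; exact hxy.symm
      have ha₀Q' : a₀ ∉ Q'.support := fun hmem => huq (ha₀ ▸ hsup a₀ hmem)
      refine ⟨b, hb, Walk.cons hadj (Walk.cons hab Q'), ?_, ?_⟩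
      · rw [Walk.cons_isPath_iff, Walk.cons_isPath_iff]
        refine ⟨⟨hQ', ha₀Q'⟩, ?_⟩
        simp only [Walk.support_cons, List.mem_cons]
        push_neg
        exact ⟨haa, haQ'⟩
      · intro w hw
        simp only [Walk.support_cons, List.mem_cons] at hw ⊢
        rcases hw with hw | hw | hw
        · exact List.mem_cons.mpr (Or.inl (hw ▸ ha))
        · exact List.mem_cons.mpr (Or.inl (hw ▸ ha₀))
        · exact List.mem_cons.mpr (Or.inr (hsup w hw))
end Lift

section TakeDrop
variable {W : Type} {T : SimpleGraph W} [DecidableEq W]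

lemma path_end_mem_takeUntil {a b : W} {p : T.Walk a b} (hp : p.IsPath)
    {z : W} (hz : z ∈ p.support) (hb : b ∈ (p.takeUntil z hz).support) : b = z := by
  have hspec := p.take_spec hz
  obtain ⟨l, hl⟩ : ∃ l, (p.dropUntil z hz).support = z :: l := ⟨_, Walk.support_eq_cons _⟩
  have hsup : p.support = (p.takeUntil z hz).support ++ l := by
    conv_lhs => rw [← congrArg Walk.support hspec]
    rw [Walk.support_append, hl]
    rfl
  have hnd : p.support.Nodup := hp.support_nodup
  rw [hsup] at hnd
  have hdisj := List.disjoint_of_nodup_append hnd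
  have hbd : b ∈ z :: l := hl ▸ Walk.end_mem_support (p.dropUntil z hz)
  rcases List.mem_cons.mp hbd with hbd1 | hbd1
  · exact hbd1
  · exact absurd hbd1 (hdisj hb)

lemma path_start_mem_dropUntil {a b : W} {p : T.Walk a b} (hp : p.IsPath)
    {z : W} (hz : z ∈ p.support) (ha : a ∈ (p.dropUntil z hz).support) : a = z := by
  have hspec := p.take_spec hz
  obtain ⟨l, hl⟩ : ∃ l, (p.dropUntil z hz).support = z :: l := ⟨_, Walk.support_eq_cons _⟩
  have hsup : p.support = (p.takeUntil z hz).support ++ l := by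
    conv_lhs => rw [← congrArg Walk.support hspec]
    rw [Walk.support_append, hl]
    rfl
  have hnd : p.support.Nodup := hp.support_nodup
  rw [hsup] at hnd
  have hdisj := List.disjoint_of_nodup_append hnd
  have hat : a ∈ (p.takeUntil z hz).support := Walk.start_mem_support _
  rcases List.mem_cons.mp (hl ▸ ha) with ha1 | ha1
  · exact ha1
  · exact absurd ha1 (hdisj hat)
end TakeDrop

section MengerMain
variable {W : Type} [Fintype W]

theorem menger (n : ℕ) : ∀ (T : SimpleGraph W), T.edgeSet.ncard ≤ n →
    ∀ (A B : Set W) (k : ℕ), (∀ S : Set W, MSep T A B S → k ≤ S.ncard) → MDPS T A B k := by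
  induction n with
  | zero =>
    intro T hT A B k hsep
    have hE : T.edgeSet = ∅ := by
      rw [← Set.ncard_eq_zero (Set.toFinite _)]; omega
    exact mdps_of_no_edges T hE A B k hsep
  | succ n ih =>
    intro T hT A B k hsep
    by_cases hE : T.edgeSet = ∅
    · exact mdps_of_no_edges T hE A B k hsep
    · obtain ⟨e, he⟩ := Set.nonempty_iff_ne_empty.mpr hE
      revert he
      refine Sym2.ind (fun x y => ?_) e
      intro he
      have hxy : T.Adj x y := he
      have hne : x ≠ y := hxy.ne
      set G₂ := mcontract T x y with hG₂
      set A' := cmap x y '' A with hA'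
      set B' := cmap x y '' B with hB'
      by_cases hbig : ∀ S' : Set W, MSep G₂ A' B' S' → k ≤ S'.ncard
      · -- contraction case
        have hsub : G₂.edgeSet ⊆ Sym2.map (cmap x y) '' (T.edgeSet \ {s(x, y)}) := by
          intro e' he'
          revert he'
          refine Sym2.ind (fun u v => ?_) e'
          intro he'
          obtain ⟨hne', a, b, hab, ha, hb⟩ := (mem_edgeSet G₂).mp he'
          refine ⟨s(a, b), ⟨hab, ?_⟩, by rw [Sym2.map_pair_eq, ha, hb]⟩
          intro hmem
          rw [Set.mem_singleton_iff, Sym2.eq_iff] at hmem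
          apply hne'
          rcases hmem with ⟨rfl, rfl⟩ | ⟨rfl, rfl⟩
          · rw [← ha, ← hb]; unfold cmap; simp [hne]
          · rw [← ha, ← hb]; unfold cmap; simp [hne]
        have hE2 : G₂.edgeSet.ncard ≤ n := by
          have h1 : G₂.edgeSet.ncard ≤ (Sym2.map (cmap x y) '' (T.edgeSet \ {s(x, y)})).ncard :=
            Set.ncard_le_ncard hsub (Set.toFinite _)
          have h2 : (Sym2.map (cmap x y) '' (T.edgeSet \ {s(x, y)})).ncard ≤
              (T.edgeSet \ {s(x, y)}).ncard := Set.ncard_image_le (Set.toFinite _)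
          have h3 : (T.edgeSet \ {s(x, y)}).ncard = T.edgeSet.ncard - 1 :=
            Set.ncard_diff_singleton_of_mem he
          have h4 : 1 ≤ T.edgeSet.ncard := by
            rw [Nat.one_le_iff_ne_zero, Ne, Set.ncard_eq_zero (Set.toFinite _)]
            exact hE
          omega
        obtain ⟨f', g', P', hfA', hgB', hP', hdisj'⟩ := ih G₂ hE2 A' B' k hbig
        have key : ∀ i : Fin k, ∃ (a b : W) (Q : T.Walk a b), a ∈ A ∧ b ∈ B ∧
            Q.IsPath ∧ ∀ w ∈ Q.support, cmap x y w ∈ (P' i).support := by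
          intro i
          obtain ⟨a, haA, hca⟩ := hfA' i
          obtain ⟨b, hbb, Q, hQ, hsupQ⟩ := lift_walk_s12 hxy (P' i) (hP' i) a hca
          obtain ⟨b₀, hb₀B, hcb₀⟩ := hgB' i
          by_cases hbe : b = b₀
          · exact ⟨a, b, Q, haA, hbe ▸ hb₀B, hQ, hsupQ⟩
          · have hfib := cmap_fiber hne (hbb.trans hcb₀.symm) hbe
            have hadjb : T.Adj b b₀ := by
              rcases hfib with ⟨rfl, rfl⟩ | ⟨rfl, rfl⟩
              · exact hxy
              · exact hxy.symm
            by_cases hmem : b₀ ∈ Q.support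
            · refine ⟨a, b₀, Q.takeUntil b₀ hmem, haA, hb₀B, hQ.takeUntil hmem, ?_⟩
              intro w hw
              exact hsupQ w (Walk.support_takeUntil_subset Q hmem hw)
            · refine ⟨a, b₀, Q.concat hadjb, haA, hb₀B, ?_, ?_⟩
              · rw [Walk.isPath_def, Walk.support_concat]
                refine List.Nodup.append hQ.support_nodup (List.nodup_singleton _) ?_
                intro w hw hw'
                rw [List.mem_singleton] at hw'
                exact hmem (hw' ▸ hw)
              · intro w hw
                rw [Walk.support_concat, List.mem_append,
                  List.mem_singleton] at hw
                rcases hw with hw | hw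
                · exact hsupQ w hw
                · rw [hw, hcb₀]
                  exact Walk.end_mem_support _
        choose a b Q ha hb hQ hsup using key
        refine ⟨a, b, Q, ha, hb, hQ, ?_⟩
        intro i j hij z hz hz'
        exact hdisj' i j hij (cmap x y z) (hsup i z hz) (hsup j z hz')
      · -- deletion case
        push_neg at hbig
        obtain ⟨S', hS'sep, hS'card⟩ := hbig
        set S := cmap x y ⁻¹' S' with hS
        have hproj : ∀ a b, T.Adj a b → cmap x y a = cmap x y b ∨
            G₂.Adj (cmap x y a) (cmap x y b) := by
          intro a b hab
          by_cases hcc : cmap x y a = cmap x y b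
          · exact Or.inl hcc
          · exact Or.inr ⟨hcc, a, b, hab, rfl, rfl⟩
        have hSsep : MSep T A B S := by
          intro a b p hpa hpb
          obtain ⟨q, hq⟩ := exists_proj_walk (cmap x y) hproj p
          obtain ⟨s', hs'S, hs'sup⟩ := hS'sep q ⟨a, hpa, rfl⟩ ⟨b, hpb, rfl⟩
          obtain ⟨w, hwsup, hww⟩ := hq s' hs'sup
          exact ⟨w, by rw [hS, Set.mem_preimage, hww]; exact hs'S, hwsup⟩
        have hSk : k ≤ S.ncard := hsep S hSsep
        have hxS' : x ∈ S' := by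
          by_contra hxS'
          have hsub : S ⊆ S' := by
            intro w hw
            rw [hS, Set.mem_preimage] at hw
            by_cases hwy : w = y
            · exact absurd (by simpa [cmap, hwy] using hw) hxS'
            · simpa [cmap, hwy] using hw
          have := Set.ncard_le_ncard hsub (Set.toFinite _)
          omega
        have hxS : x ∈ S := by
          rw [hS, Set.mem_preimage]
          simpa [cmap, hne] using hxS'
        have hyS : y ∈ S := by
          rw [hS, Set.mem_preimage]
          simpa [cmap] using hxS'
        have hSub : S ⊆ S' ∪ {y} := by
          intro w hw
          rw [hS, Set.mem_preimage] at hw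
          by_cases hwy : w = y
          · exact Or.inr (by simp [hwy])
          · exact Or.inl (by simpa [cmap, hwy] using hw)
        have hScard : S.ncard = k := by
          have h1 : S.ncard ≤ (S' ∪ {y}).ncard := Set.ncard_le_ncard hSub (Set.toFinite _)
          have h2 : (S' ∪ {y}).ncard ≤ S'.ncard + ({y} : Set W).ncard := Set.ncard_union_le _ _
          have h3 : ({y} : Set W).ncard = 1 := Set.ncard_singleton _
          omega
        set T' := T.deleteEdges {s(x, y)} with hT'
        have hT'edge : T'.edgeSet = T.edgeSet \ {s(x, y)} := edgeSet_deleteEdges _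
        have hT'card : T'.edgeSet.ncard ≤ n := by
          rw [hT'edge, Set.ncard_diff_singleton_of_mem he]
          have h4 : 1 ≤ T.edgeSet.ncard := by
            rw [Nat.one_le_iff_ne_zero, Ne, Set.ncard_eq_zero (Set.toFinite _)]
            exact hE
          omega
        have hK : ∀ (a mm : W) (q : T.Walk a mm), mm ∈ S →
            (∀ s ∈ S, s ∈ q.support → s = mm) → s(x, y) ∉ q.edges := by
          intro a mm q _ honly hmem
          have hx1 : x ∈ q.support := q.fst_mem_support_of_mem_edges hmem
          have hy1 : y ∈ q.support := q.snd_mem_support_of_mem_edges hmem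
          exact hne ((honly x hxS hx1).trans (honly y hyS hy1).symm)
        have K1 : ∀ U : Set W, MSep T' A S U → MSep T A B U := by
          intro U hU a b p hpa hpb
          obtain ⟨mm, hm, q, hpre, hed, honly⟩ := exists_firstHit p S (hSsep p hpa hpb)
          have hqe : ∀ e' ∈ q.edges, e' ∈ T'.edgeSet := by
            intro e' he'
            rw [hT'edge]
            refine ⟨p.edges_subset_edgeSet (hed e' he'), ?_⟩
            rw [Set.mem_singleton_iff]
            intro heq
            exact hK a mm q hm honly (heq ▸ he')
          obtain ⟨u, hu, husup⟩ := hU (q.transfer T' hqe) hpa hm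
          rw [Walk.support_transfer] at husup
          exact ⟨u, hu, hpre.sublist.mem husup⟩
        have K2 : ∀ U : Set W, MSep T' S B U → MSep T A B U := by
          intro U hU a b p hpa hpb
          have hrev : ∃ s ∈ S, s ∈ p.reverse.support := by
            obtain ⟨s, hs1, hs2⟩ := hSsep p hpa hpb
            exact ⟨s, hs1, by rwa [Walk.support_reverse, List.mem_reverse]⟩
          obtain ⟨mm, hm, q, hpre, hed, honly⟩ := exists_firstHit p.reverse S hrev
          have hqe : ∀ e' ∈ q.edges, e' ∈ T'.edgeSet := by
            intro e' he'
            rw [hT'edge]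
            refine ⟨p.reverse.edges_subset_edgeSet (hed e' he'), ?_⟩
            rw [Set.mem_singleton_iff]
            intro heq
            exact hK b mm q hm honly (heq ▸ he')
          obtain ⟨u, hu, husup⟩ := hU (q.transfer T' hqe).reverse hm hpb
          rw [Walk.support_reverse, List.mem_reverse, Walk.support_transfer] at husup
          have hu2 := hpre.sublist.mem husup
          rw [Walk.support_reverse, List.mem_reverse] at hu2
          exact ⟨u, hu, hu2⟩
        obtain ⟨f1, g1, P1, hf1A, hg1S, hP1, hdisj1⟩ :=
          ih T' hT'card A S k (fun U hU => hsep U (K1 U hU))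
        obtain ⟨f2, g2, P2, hf2S, hg2B, hP2, hdisj2⟩ :=
          ih T' hT'card S B k (fun U hU => hsep U (K2 U hU))
        have keyA : ∀ i : Fin k, ∃ mm ∈ S, ∃ q : T'.Walk (f1 i) mm,
            q.support ⊆ (P1 i).support ∧ q.IsPath ∧ ∀ s ∈ S, s ∈ q.support → s = mm := by
          intro i
          obtain ⟨mm, hm, q, hpre, hed2, honly⟩ :=
            exists_firstHit (P1 i) S ⟨g1 i, hg1S i, Walk.end_mem_support _⟩
          exact ⟨mm, hm, q, hpre.sublist.subset,
            (Walk.isPath_def _).mpr (hpre.sublist.nodup (hP1 i).support_nodup), honly⟩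
        choose m hmS Pa hPasub hPapath hPaonly using keyA
        have keyB : ∀ j : Fin k, ∃ tt ∈ S, ∃ q : T'.Walk tt (g2 j),
            q.support ⊆ (P2 j).support ∧ q.IsPath ∧ ∀ s ∈ S, s ∈ q.support → s = tt := by
          intro j
          obtain ⟨tt, ht, q, hpre, hed2, honly⟩ := exists_firstHit (P2 j).reverse S
            ⟨f2 j, hf2S j, by
              rw [Walk.support_reverse, List.mem_reverse]
              exact Walk.start_mem_support _⟩
          refine ⟨tt, ht, q.reverse, ?_, ?_, ?_⟩
          · intro z hz
            rw [Walk.support_reverse, List.mem_reverse] at hz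
            have hz2 := hpre.sublist.mem hz
            rwa [Walk.support_reverse, List.mem_reverse] at hz2
          · rw [Walk.isPath_def, Walk.support_reverse]
            have hrn : (P2 j).reverse.support.Nodup := by
              rw [Walk.support_reverse, List.nodup_reverse]
              exact (hP2 j).support_nodup
            rw [List.nodup_reverse]
            exact hpre.sublist.nodup hrn
          · intro s hs hssup
            rw [Walk.support_reverse, List.mem_reverse] at hssup
            exact honly s hs hssup
        choose t htS Pb hPbsub hPbpath hPbonly using keyB
        have hminj : Function.Injective m := by
          intro i i' hii
          by_contra hne2
          exact hdisj1 i i' hne2 (m i) (hPasub i (Walk.end_mem_support _))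
            (by rw [hii]; exact hPasub i' (Walk.end_mem_support _))
        have htinj : Function.Injective t := by
          intro j j' hjj
          by_contra hne2
          exact hdisj2 j j' hne2 (t j) (hPbsub j (Walk.start_mem_support _))
            (by rw [hjj]; exact hPbsub j' (Walk.start_mem_support _))
        have hrangem : (Set.range m).ncard = k := by
          rw [← Set.image_univ, Set.ncard_image_of_injective _ hminj, Set.ncard_univ,
            Nat.card_eq_fintype_card, Fintype.card_fin]
        have hranget : Set.range t = S := by
          apply Set.eq_of_subset_of_ncard_le
          · rintro _ ⟨j, rfl⟩; exact htS j
          · rw [hScard, ← Set.image_univ, Set.ncard_image_of_injective _ htinj, Set.ncard_univ,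
              Nat.card_eq_fintype_card, Fintype.card_fin]
          · exact Set.toFinite _
        have hσex : ∀ i, ∃ j, t j = m i := by
          intro i
          have h6 : m i ∈ Set.range t := by rw [hranget]; exact hmS i
          exact h6
        choose σ hσ using hσex
        have hσinj : Function.Injective σ := by
          intro i i' h
          apply hminj
          rw [← hσ i, ← hσ i', h]
        have cross : ∀ i j z, z ∈ (Pa i).support → z ∈ (Pb j).support → z = m i ∧ z = t j := by
          intro i j z hz1 hz2
          by_cases hzS : z ∈ S
          · exact ⟨hPaonly i z hzS hz1, hPbonly j z hzS hz2⟩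
          · exfalso
            set wk := ((Pa i).takeUntil z hz1).append ((Pb j).dropUntil z hz2) with hwk
            have hwe : ∀ e' ∈ wk.edges, e' ∈ T.edgeSet := by
              intro e' he'
              have h7 := wk.edges_subset_edgeSet he'
              rw [hT'edge] at h7
              exact h7.1
            obtain ⟨s, hsS, hsw⟩ := hSsep (wk.transfer T hwe) (hf1A i) (hg2B j)
            rw [Walk.support_transfer, hwk, Walk.support_append, List.mem_append] at hsw
            rcases hsw with hsw | hsw
            · have hs1 : s ∈ (Pa i).support := Walk.support_takeUntil_subset _ hz1 hsw
              have heq : s = m i := hPaonly i s hsS hs1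
              have heq2 : m i = z := path_end_mem_takeUntil (hPapath i) hz1 (heq ▸ hsw)
              exact hzS (heq2 ▸ heq ▸ hsS)
            · have hsw' : s ∈ ((Pb j).dropUntil z hz2).support := List.mem_of_mem_tail hsw
              have heq : s = t j := hPbonly j s hsS (Walk.support_dropUntil_subset _ hz2 hsw')
              have heq2 : t j = z := path_start_mem_dropUntil (hPbpath j) hz2 (heq ▸ hsw')
              exact hzS (heq2 ▸ heq ▸ hsS)
        refine ⟨f1, fun i => g2 (σ i),
          fun i => ((Pa i).append ((Pb (σ i)).copy (hσ i) rfl)).transfer T (fun e' he' => by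
            have h5 := Walk.edges_subset_edgeSet _ he'
            rw [hT'edge] at h5
            exact h5.1), hf1A, fun i => hg2B (σ i), ?_, ?_⟩
        · intro i
          rw [Walk.isPath_def, Walk.support_transfer, Walk.support_append, Walk.support_copy]
          refine List.Nodup.append (hPapath i).support_nodup
            (((hPbpath (σ i)).support_nodup).sublist (List.tail_sublist _)) ?_
          intro z hz1 hz2
          have hz3 := List.mem_of_mem_tail hz2
          have hz4 := (cross i (σ i) z hz1 hz3).2
          obtain ⟨l, hl⟩ : ∃ l, (Pb (σ i)).support = t (σ i) :: l := ⟨_, Walk.support_eq_cons _⟩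
          have hnd := (hPbpath (σ i)).support_nodup
          rw [hl] at hz2 hnd
          rw [List.tail_cons] at hz2
          exact (List.nodup_cons.mp hnd).1 (hz4 ▸ hz2)
        · intro i j hij z hz hz'
          rw [Walk.support_transfer, Walk.support_append, Walk.support_copy,
            List.mem_append] at hz hz'
          have hz₁ : z ∈ (Pa i).support ∨ z ∈ (Pb (σ i)).support := by
            rcases hz with h8 | h8
            exacts [Or.inl h8, Or.inr (List.mem_of_mem_tail h8)]
          have hz₂ : z ∈ (Pa j).support ∨ z ∈ (Pb (σ j)).support := by
            rcases hz' with h8 | h8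
            exacts [Or.inl h8, Or.inr (List.mem_of_mem_tail h8)]
          rcases hz₁ with h1 | h1 <;> rcases hz₂ with h2 | h2
          · exact hdisj1 i j hij z (hPasub i h1) (hPasub j h2)
          · have h3 := (cross i (σ j) z h1 h2).1
            have h4 := (cross i (σ j) z h1 h2).2
            rw [hσ j] at h4
            exact hij (hminj (h3.symm.trans h4))
          · have h3 := (cross j (σ i) z h2 h1).1
            have h4 := (cross j (σ i) z h2 h1).2
            rw [hσ i] at h4
            exact hij (hminj (h4.symm.trans h3))
          · exact hdisj2 (σ i) (σ j) (fun h9 => hij (hσinj h9)) z (hPbsub (σ i) h1)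
              (hPbsub (σ j) h2)
end MengerMain


section Fan
variable {W : Type} [Fintype W]

lemma fanAux (T : SimpleGraph W)
    (hconn : ∀ S : Set W, S.ncard ≤ 2 → (T.induce (Sᶜ : Set W)).Connected)
    (k : ℕ) (hk : k ≤ 3) (v : W) (c : Fin k → W) (hcinj : Function.Injective c)
    (hcv : ∀ i, c i ≠ v) :
    ∃ P : ∀ i, T.Walk v (c i), (∀ i, (P i).IsPath) ∧
      ∀ i j, i ≠ j → ∀ z, z ∈ (P i).support → z ∈ (P j).support → z = v := by
  classical
  set Vc : Set W := ({v}ᶜ : Set W) with hVc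
  set T₁ := T.induce Vc with hT₁
  set A : Set ↥Vc := {w | T.Adj v ↑w} with hA
  set Bs : Set ↥Vc := {w | (↑w : W) ∈ Set.range c} with hBs
  have hsep : ∀ S₁ : Set ↥Vc, MSep T₁ A Bs S₁ → k ≤ S₁.ncard := by
    intro S₁ hS₁
    by_contra hlt
    push_neg at hlt
    set S : Set W := Subtype.val '' S₁ with hSdef
    have hS₁card : S.ncard = S₁.ncard := by
      rw [hSdef, Set.ncard_image_of_injective _ Subtype.val_injective]
    have hScard : S.ncard ≤ 2 := by omega
    have hpig : ∃ i, c i ∉ S := by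
      by_contra hall
      push_neg at hall
      have hsub : Set.range c ⊆ S := by rintro _ ⟨i, rfl⟩; exact hall i
      have h1 := Set.ncard_le_ncard hsub (Set.toFinite _)
      have h2 : (Set.range c).ncard = k := by
        rw [← Set.image_univ, Set.ncard_image_of_injective _ hcinj, Set.ncard_univ,
          Nat.card_eq_fintype_card, Fintype.card_fin]
      omega
    obtain ⟨i0, hi0⟩ := hpig
    have hvS : v ∉ S := by
      rintro ⟨w, _, hww⟩
      exact w.2 (by simp [hww])
    have hcon := hconn S hScard
    obtain ⟨p0⟩ := hcon.preconnected ⟨v, hvS⟩ ⟨c i0, hi0⟩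
    obtain ⟨p1, hp1⟩ := induce_walk_ambient p0
    have hp1S : ∀ z ∈ p1.support, z ∉ S := by
      intro z hz
      rw [hp1] at hz
      obtain ⟨w, _, rfl⟩ := List.mem_map.mp hz
      exact w.2
    have hp2path : (p1.toPath : T.Walk v (c i0)).IsPath := p1.toPath.2
    have hp2S : ∀ z ∈ (p1.toPath : T.Walk v (c i0)).support, z ∉ S :=
      fun z hz => hp1S z (Walk.support_toPath_subset _ hz)
    obtain ⟨w0, hadj0, p3, hp3⟩ := Walk.exists_eq_cons_of_ne (Ne.symm (hcv i0))
      (p1.toPath : T.Walk v (c i0))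
    rw [hp3, Walk.cons_isPath_iff] at hp2path
    obtain ⟨hp3path, hvp3⟩ := hp2path
    have hp3S : ∀ z ∈ p3.support, z ∉ S := by
      intro z hz
      exact hp2S z (by rw [hp3]; simp [hz])
    have hp3V : ∀ z ∈ p3.support, z ∈ Vc := by
      intro z hz
      simp only [hVc, Set.mem_compl_iff, Set.mem_singleton_iff]
      intro hzz
      exact hvp3 (hzz ▸ hz)
    have hw0V : w0 ∈ Vc := hp3V w0 (Walk.start_mem_support _)
    have hciV : c i0 ∈ Vc := by
      simp only [hVc, Set.mem_compl_iff, Set.mem_singleton_iff]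
      exact hcv i0
    obtain ⟨q, hq⟩ := ambient_walk_induce p3 hp3V hw0V hciV
    obtain ⟨s₁, hs₁S, hs₁sup⟩ := hS₁ q (by exact hadj0) (by exact ⟨i0, rfl⟩)
    have : (↑s₁ : W) ∈ p3.support := by
      rw [← hq]
      exact List.mem_map.mpr ⟨s₁, hs₁sup, rfl⟩
    exact hp3S _ this ⟨s₁, hs₁S, rfl⟩
  obtain ⟨f, g, Q, hfA, hgB, hQ, hdisj⟩ := menger (T₁.edgeSet.ncard) T₁ le_rfl A Bs k hsep
  have hginj : Function.Injective g := by
    intro i j hgg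
    by_contra hne2
    exact hdisj i j hne2 (g i) (Walk.end_mem_support _)
      (by rw [hgg]; exact Walk.end_mem_support _)
  have hgB' : ∀ i, ∃ j, c j = ↑(g i) := fun i => hgB i
  choose τ hτ using hgB'
  have hτinj : Function.Injective τ := by
    intro i j h
    apply hginj
    apply Subtype.ext
    rw [← hτ i, ← hτ j, h]
  set eσ := Equiv.ofBijective τ (Finite.injective_iff_bijective.mp hτinj) with heσ
  have key : ∀ j, ∃ P : T.Walk v (c j), P.IsPath ∧
      ∀ z ∈ P.support, z ≠ v → ∃ w ∈ (Q (eσ.symm j)).support, (↑w : W) = z := by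
    intro j
    obtain ⟨R, hR⟩ := induce_walk_ambient (Q (eσ.symm j))
    have hgc : (↑(g (eσ.symm j)) : W) = c j := by
      have h1 := hτ (eσ.symm j)
      have h2 : τ (eσ.symm j) = j := eσ.apply_symm_apply j
      rw [h2] at h1
      exact h1.symm
    have hRpath : R.IsPath := by
      rw [Walk.isPath_def, hR]
      exact (hQ _).support_nodup.map Subtype.val_injective
    have hvR : v ∉ R.support := by
      rw [hR]
      intro hv
      obtain ⟨w, _, hww⟩ := List.mem_map.mp hv
      exact w.2 (by simp [hww])
    refine ⟨(Walk.cons (hfA (eσ.symm j)) R).copy rfl hgc, ?_, ?_⟩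
    · rw [Walk.isPath_def, Walk.support_copy, Walk.support_cons]
      exact List.nodup_cons.mpr ⟨hvR, hRpath.support_nodup⟩
    · intro z hz hzv
      rw [Walk.support_copy, Walk.support_cons, List.mem_cons] at hz
      rcases hz with hz | hz
      · exact absurd hz hzv
      · rw [hR] at hz
        obtain ⟨w, hw, hww⟩ := List.mem_map.mp hz
        exact ⟨w, hw, hww⟩
  choose P hPpath hPsup using key
  refine ⟨P, hPpath, ?_⟩
  intro i j hij z hz hz'
  by_contra hzv
  obtain ⟨w1, hw1, hww1⟩ := hPsup i z hz hzv
  obtain ⟨w2, hw2, hww2⟩ := hPsup j z hz' hzv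
  have hw12 : w1 = w2 := Subtype.ext (hww1.trans hww2.symm)
  exact hdisj (eσ.symm i) (eσ.symm j) (fun h => hij (eσ.symm.injective h)) w1 hw1 (hw12 ▸ hw2)
end Fan

section FanWrap
variable {W : Type} [Fintype W]

lemma fan2 (T : SimpleGraph W)
    (hconn : ∀ S : Set W, S.ncard ≤ 2 → (T.induce (Sᶜ : Set W)).Connected)
    (v c1 c2 : W) (h12 : c1 ≠ c2) (hv1 : c1 ≠ v) (hv2 : c2 ≠ v) :
    ∃ (p1 : T.Walk v c1) (p2 : T.Walk v c2), p1.IsPath ∧ p2.IsPath ∧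
      ∀ z, z ∈ p1.support → z ∈ p2.support → z = v := by
  have hcinj : Function.Injective (![c1, c2] : Fin 2 → W) := by
    intro i j hij
    fin_cases i <;> fin_cases j <;> simp_all
  obtain ⟨P, hP, hsh⟩ := fanAux T hconn 2 (by norm_num) v ![c1, c2] hcinj
    (by intro i; fin_cases i <;> simp [hv1, hv2])
  refine ⟨(P 0).copy rfl (show ![c1, c2] 0 = c1 by simp), (P 1).copy rfl (show ![c1, c2] 1 = c2 by simp), ?_, ?_, ?_⟩
  · rw [Walk.isPath_def, Walk.support_copy]; exact (hP 0).support_nodup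
  · rw [Walk.isPath_def, Walk.support_copy]; exact (hP 1).support_nodup
  · intro z hz1 hz2
    rw [Walk.support_copy] at hz1 hz2
    exact hsh 0 1 (by decide) z hz1 hz2

lemma fan3 (T : SimpleGraph W)
    (hconn : ∀ S : Set W, S.ncard ≤ 2 → (T.induce (Sᶜ : Set W)).Connected)
    (v c1 c2 c3 : W) (h12 : c1 ≠ c2) (h13 : c1 ≠ c3) (h23 : c2 ≠ c3)
    (hv1 : c1 ≠ v) (hv2 : c2 ≠ v) (hv3 : c3 ≠ v) :
    ∃ (p1 : T.Walk v c1) (p2 : T.Walk v c2) (p3 : T.Walk v c3),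
      p1.IsPath ∧ p2.IsPath ∧ p3.IsPath ∧
      (∀ z, z ∈ p1.support → z ∈ p2.support → z = v) ∧
      (∀ z, z ∈ p1.support → z ∈ p3.support → z = v) ∧
      (∀ z, z ∈ p2.support → z ∈ p3.support → z = v) := by
  have hcinj : Function.Injective (![c1, c2, c3] : Fin 3 → W) := by
    intro i j hij
    fin_cases i <;> fin_cases j <;> simp_all
  obtain ⟨P, hP, hsh⟩ := fanAux T hconn 3 le_rfl v ![c1, c2, c3] hcinj
    (by intro i; fin_cases i <;> simp [hv1, hv2, hv3])
  refine ⟨(P 0).copy rfl (show ![c1, c2, c3] 0 = c1 by simp), (P 1).copy rfl (show ![c1, c2, c3] 1 = c2 by simp),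
    (P 2).copy rfl (show ![c1, c2, c3] 2 = c3 by simp),
    ?_, ?_, ?_, ?_, ?_, ?_⟩
  · rw [Walk.isPath_def, Walk.support_copy]; exact (hP 0).support_nodup
  · rw [Walk.isPath_def, Walk.support_copy]; exact (hP 1).support_nodup
  · rw [Walk.isPath_def, Walk.support_copy]; exact (hP 2).support_nodup
  · intro z hz1 hz2
    rw [Walk.support_copy] at hz1 hz2
    exact hsh 0 1 (by decide) z hz1 hz2
  · intro z hz1 hz2
    rw [Walk.support_copy] at hz1 hz2
    exact hsh 0 2 (by decide) z hz1 hz2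
  · intro z hz1 hz2
    rw [Walk.support_copy] at hz1 hz2
    exact hsh 1 2 (by decide) z hz1 hz2
end FanWrap

section Expand
variable {V : Type} [Fintype V]

/-- the invariant satisfied by an expansion of a torso path -/
def ExpCond (G : SimpleGraph V) (B : Set V) {a b : ↥B} (p : (torso G B).Walk a b)
    {a' b' : V} (q : G.Walk a' b') : Prop :=
  ∀ y ∈ q.support,
    (y ∈ B → y ∈ p.support.map (fun x : ↥B => (x : V))) ∧
    (∀ hy : y ∈ (Bᶜ : Set V),
      (∀ x ∈ compNbrs G B ((G.induce (Bᶜ : Set V)).connectedComponentMk ⟨y, hy⟩),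
        x ∈ p.support.map (fun x : ↥B => (x : V))) ∧
      ∃ a b : V, a ≠ b ∧
        a ∈ compNbrs G B ((G.induce (Bᶜ : Set V)).connectedComponentMk ⟨y, hy⟩) ∧
        b ∈ compNbrs G B ((G.induce (Bᶜ : Set V)).connectedComponentMk ⟨y, hy⟩))

lemma expand_walk (G : SimpleGraph V) (B : Set V) (hadh : adhesionLE G B 2) :
    ∀ {v w : ↥B} (p : (torso G B).Walk v w), p.IsPath →
    ∃ q : G.Walk ↑v ↑w, q.IsPath ∧
      (p.support.map (fun x : ↥B => (x : V))).Sublist q.support ∧ ExpCond G B p q := by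
  intro v w p
  induction p with
  | nil =>
    rename_i vv
    intro _
    refine ⟨Walk.nil, Walk.IsPath.nil, by simp, ?_⟩
    intro y hy
    simp only [Walk.support_nil, List.mem_singleton] at hy
    subst hy
    constructor
    · intro _; simp
    · intro hy'; exact ((Set.mem_compl_iff _ _).mp hy' vv.2).elim
  | @cons v u w h p' ih =>
    intro hp
    rw [Walk.cons_isPath_iff] at hp
    obtain ⟨hp', hvp'⟩ := hp
    obtain ⟨q', hq'path, hq'sub, hq'cond⟩ := ih hp'
    have hvB : (↑v : V) ∈ B := v.2
    have huB : (↑u : V) ∈ B := u.2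
    have hvu : (↑v : V) ≠ ↑u := fun hh => h.1 (Subtype.ext hh)
    have hvq' : (↑v : V) ∉ q'.support := by
      intro hmem
      have h1 := (hq'cond _ hmem).1 hvB
      obtain ⟨x, hx, hxx⟩ := List.mem_map.mp h1
      rw [show x = v from Subtype.ext hxx] at hx
      exact hvp' hx
    rcases h.2 with hadj | ⟨C, hvC, huC⟩
    · refine ⟨Walk.cons hadj q', ?_, ?_, ?_⟩
      · rw [Walk.cons_isPath_iff]; exact ⟨hq'path, hvq'⟩
      · rw [Walk.support_cons, Walk.support_cons, List.map_cons]
        exact hq'sub.cons₂ _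
      · intro y hy
        rw [Walk.support_cons, List.mem_cons] at hy
        rcases hy with rfl | hy
        · constructor
          · intro _
            rw [Walk.support_cons, List.map_cons]
            exact List.mem_cons_self
          · intro hy'; exact ((Set.mem_compl_iff _ _).mp hy' hvB).elim
        · constructor
          · intro hyB
            rw [Walk.support_cons, List.map_cons]
            exact List.mem_cons_of_mem _ ((hq'cond y hy).1 hyB)
          · intro hy'
            refine ⟨?_, ((hq'cond y hy).2 hy').2⟩
            intro x hx
            rw [Walk.support_cons, List.map_cons]
            exact List.mem_cons_of_mem _ (((hq'cond y hy).2 hy').1 x hx)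
    · -- detour case
      have hvCmem := hvC
      have huCmem := huC
      obtain ⟨hvB', yv, hyvC, hadjv⟩ := hvC
      obtain ⟨huB', yu, hyuC, hadju⟩ := huC
      have hreach : (G.induce (Bᶜ : Set V)).Reachable yv yu :=
        ConnectedComponent.exact (hyvC.trans hyuC.symm)
      obtain ⟨r0⟩ := hreach
      obtain ⟨rr, hrr⟩ := induce_walk_ambient (r0.toPath : (G.induce (Bᶜ : Set V)).Walk yv yu)
      have hrrnodup : rr.support.Nodup := by
        rw [hrr]
        exact (r0.toPath.2).support_nodup.map Subtype.val_injective
      have hrrmem : ∀ z ∈ rr.support, ∃ hz : z ∈ (Bᶜ : Set V),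
          (G.induce (Bᶜ : Set V)).connectedComponentMk ⟨z, hz⟩ = C := by
        intro z hz
        rw [hrr] at hz
        obtain ⟨s, hs, rfl⟩ := List.mem_map.mp hz
        refine ⟨s.2, ?_⟩
        have hre : (G.induce (Bᶜ : Set V)).Reachable yv s :=
          ⟨(r0.toPath : (G.induce (Bᶜ : Set V)).Walk yv yu).takeUntil s hs⟩
        have h2 : (G.induce (Bᶜ : Set V)).connectedComponentMk s =
            (G.induce (Bᶜ : Set V)).connectedComponentMk yv := (ConnectedComponent.sound hre).symm
        rw [show (⟨(s : V), s.2⟩ : ↥(Bᶜ : Set V)) = s from rfl, h2, hyvC]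
      have hrrB : ∀ z ∈ rr.support, z ∉ B := by
        intro z hz hzB
        obtain ⟨hz', -⟩ := hrrmem z hz
        exact (Set.mem_compl_iff _ _).mp hz' hzB
      have hNC : compNbrs G B C = {(↑v : V), ↑u} := by
        refine (Set.eq_of_subset_of_ncard_le ?_ ?_ (Set.toFinite _)).symm
        · rintro z hz
          rcases hz with rfl | hz
          · exact hvCmem
          · rw [Set.mem_singleton_iff] at hz
            subst hz
            exact huCmem
        · rw [Set.ncard_pair hvu]
          exact hadh C
      have hadjU : G.Adj ↑yu ↑u := hadju.symm
      set d : G.Walk ↑v ↑u := Walk.cons hadjv (rr.concat hadjU) with hd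
      have hdsup : d.support = ↑v :: (rr.support ++ [(↑u : V)]) := by
        rw [hd, Walk.support_cons, Walk.support_concat]
      have hsupEq : (d.append q').support = ↑v :: (rr.support ++ q'.support) := by
        rw [Walk.support_append, hdsup, List.cons_append, List.append_assoc,
          List.singleton_append, ← Walk.support_eq_cons]
      have hvrr : (↑v : V) ∉ rr.support := fun hmem => hrrB _ hmem hvB
      have hurr : (↑u : V) ∉ rr.support := fun hmem => hrrB _ hmem huB
      have hrrq' : ∀ z ∈ rr.support, z ∉ q'.support := by
        intro z hzr hzq
        obtain ⟨hz, hC⟩ := hrrmem z hzr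
        have h3 := ((hq'cond z hzq).2 hz).1
        rw [hC, hNC] at h3
        have h4 := h3 ↑v (by simp)
        obtain ⟨x, hx, hxx⟩ := List.mem_map.mp h4
        rw [show x = v from Subtype.ext hxx] at hx
        exact hvp' hx
      have huq'tail : (↑u : V) ∉ q'.support.tail := by
        intro hmem
        obtain ⟨l, hl⟩ : ∃ l, q'.support = (↑u : V) :: l := ⟨_, Walk.support_eq_cons _⟩
        have hnd := hq'path.support_nodup
        rw [hl] at hnd
        rw [hl, List.tail_cons] at hmem
        exact (List.nodup_cons.mp hnd).1 hmem
      refine ⟨d.append q', ?_, ?_, ?_⟩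
      · rw [Walk.isPath_def, hsupEq]
        rw [List.nodup_cons]
        constructor
        · intro hmem
          rcases List.mem_append.mp hmem with h5 | h5
          · exact hvrr h5
          · exact hvq' h5
        · refine List.Nodup.append hrrnodup hq'path.support_nodup ?_
          intro z hz1 hz2
          exact hrrq' z hz1 hz2
      · rw [hsupEq, Walk.support_cons, List.map_cons]
        refine List.Sublist.cons₂ _ (hq'sub.trans ?_)
        exact List.sublist_append_right _ _
      · intro y hy
        rw [hsupEq, List.mem_cons, List.mem_append] at hy
        have hmapcons : ∀ x : V, x ∈ p'.support.map (fun x : ↥B => (x : V)) →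
            x ∈ (Walk.cons h p').support.map (fun x : ↥B => (x : V)) := by
          intro x hx
          rw [Walk.support_cons, List.map_cons]
          exact List.mem_cons_of_mem _ hx
        have humem : (↑u : V) ∈ p'.support.map (fun x : ↥B => (x : V)) :=
          List.mem_map.mpr ⟨u, Walk.start_mem_support _, rfl⟩
        rcases hy with rfl | hy | hy
        · constructor
          · intro _
            rw [Walk.support_cons, List.map_cons]
            exact List.mem_cons_self
          · intro hy'; exact ((Set.mem_compl_iff _ _).mp hy' hvB).elim
        · obtain ⟨hz, hC⟩ := hrrmem y hy
          constructor
          · intro hyB; exact ((Set.mem_compl_iff _ _).mp hz hyB).elim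
          · intro hy'
            have hCeq : (G.induce (Bᶜ : Set V)).connectedComponentMk ⟨y, hy'⟩ = C := hC
            rw [hCeq, hNC]
            constructor
            · intro x hx
              rcases hx with rfl | hx
              · rw [Walk.support_cons, List.map_cons]
                exact List.mem_cons_self
              · rw [Set.mem_singleton_iff] at hx
                subst hx
                exact hmapcons _ humem
            · exact ⟨↑v, ↑u, hvu, by simp, by simp⟩
        · constructor
          · intro hyB
            exact hmapcons _ ((hq'cond y hy).1 hyB)
          · intro hy'
            refine ⟨?_, ((hq'cond y hy).2 hy').2⟩
            intro x hx
            exact hmapcons _ (((hq'cond y hy).2 hy').1 x hx)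

lemma expand_disjoint (G : SimpleGraph V) (B : Set V) {v w₁ w₂ : ↥B}
    (p₁ : (torso G B).Walk v w₁) (p₂ : (torso G B).Walk v w₂)
    (hshare : ∀ x : ↥B, x ∈ p₁.support → x ∈ p₂.support → x = v)
    {q₁ : G.Walk ↑v ↑w₁} {q₂ : G.Walk ↑v ↑w₂}
    (hc₁ : ExpCond G B p₁ q₁) (hc₂ : ExpCond G B p₂ q₂) :
    ∀ z : V, z ∈ q₁.support → z ∈ q₂.support → z = (↑v : V) := by
  intro z hz1 hz2
  by_cases hzB : z ∈ B
  · have h1 := (hc₁ z hz1).1 hzB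
    have h2 := (hc₂ z hz2).1 hzB
    obtain ⟨x1, hx1, hxx1⟩ := List.mem_map.mp h1
    obtain ⟨x2, hx2, hxx2⟩ := List.mem_map.mp h2
    have hx12 : x1 = x2 := Subtype.ext (hxx1.trans hxx2.symm)
    have := hshare x1 hx1 (hx12 ▸ hx2)
    rw [← hxx1, this]
  · have hz : z ∈ (Bᶜ : Set V) := (Set.mem_compl_iff _ _).mpr hzB
    obtain ⟨hsub1, a, b, hab, haC, hbC⟩ := (hc₁ z hz1).2 hz
    have hsub2 := ((hc₂ z hz2).2 hz).1
    have hmem : ∀ x : V, x ∈ compNbrs G B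
        ((G.induce (Bᶜ : Set V)).connectedComponentMk ⟨z, hz⟩) → x = ↑v := by
      intro x hx
      obtain ⟨x1, hx1, hxx1⟩ := List.mem_map.mp (hsub1 x hx)
      obtain ⟨x2, hx2, hxx2⟩ := List.mem_map.mp (hsub2 x hx)
      have hx12 : x1 = x2 := Subtype.ext (hxx1.trans hxx2.symm)
      have := hshare x1 hx1 (hx12 ▸ hx2)
      rw [← hxx1, this]
    exact absurd ((hmem a haC).trans (hmem b hbC).symm) hab
end Expand

/-- **Path expansion in proper blocks.** Let `B` be a proper block of a
connected graph `G`. (1) Every path in the torso `G⟦B⟧` expands to a path in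
`G` with the same endpoints (visiting the vertices of the torso path in
order). (2) Two internally disjoint torso paths starting at a common vertex
expand to paths in `G` intersecting only in that vertex. (3) Consequently, for
any `v ∈ B` and pairwise distinct `b₁, b₂, b₃ ∈ B`, there are paths in `G`
from `v` to `b₁, b₂, b₃` that pairwise intersect only in `v`. -/
theorem properBlock_path_expansion {V : Type} [Fintype V] (G : SimpleGraph V)
    (hG : G.Connected) (B : Set V) (hB : IsProperBlock G B) :
    (∀ (v w : B) (p : (torso G B).Walk v w), p.IsPath →
      ∃ q : G.Walk ↑v ↑w, q.IsPath ∧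
        (p.support.map (fun x : B => (x : V))).Sublist q.support) ∧
    (∀ (v w₁ w₂ : B) (p₁ : (torso G B).Walk v w₁) (p₂ : (torso G B).Walk v w₂),
      p₁.IsPath → p₂.IsPath →
      (∀ x : B, x ∈ p₁.support → x ∈ p₂.support → x = v) →
      ∃ (q₁ : G.Walk ↑v ↑w₁) (q₂ : G.Walk ↑v ↑w₂), q₁.IsPath ∧ q₂.IsPath ∧
        (p₁.support.map (fun x : B => (x : V))).Sublist q₁.support ∧
        (p₂.support.map (fun x : B => (x : V))).Sublist q₂.support ∧
        (∀ y : V, y ∈ q₁.support → y ∈ q₂.support → y = (v : V))) ∧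
    (∀ v b₁ b₂ b₃ : B, b₁ ≠ b₂ → b₁ ≠ b₃ → b₂ ≠ b₃ →
      ∃ (P₁ : G.Walk ↑v ↑b₁) (P₂ : G.Walk ↑v ↑b₂) (P₃ : G.Walk ↑v ↑b₃),
        P₁.IsPath ∧ P₂.IsPath ∧ P₃.IsPath ∧
        (∀ y : V, y ∈ P₁.support → y ∈ P₂.support → y = (v : V)) ∧
        (∀ y : V, y ∈ P₁.support → y ∈ P₃.support → y = (v : V)) ∧
        (∀ y : V, y ∈ P₂.support → y ∈ P₃.support → y = (v : V))) := by
    classical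
  obtain ⟨hkc, hadh⟩ := hB
  have hconn : ∀ S : Set ↥B, S.ncard ≤ 2 → ((torso G B).induce (Sᶜ : Set ↥B)).Connected :=
    fun S hS => hkc.2 S (le_trans hS (by norm_num))
  refine ⟨?_, ?_, ?_⟩
  · intro v w p hp
    obtain ⟨q, hq1, hq2, -⟩ := expand_walk G B hadh p hp
    exact ⟨q, hq1, hq2⟩
  · intro v w₁ w₂ p₁ p₂ hp₁ hp₂ hshare
    obtain ⟨q₁, hq₁, hs₁, hc₁⟩ := expand_walk G B hadh p₁ hp₁
    obtain ⟨q₂, hq₂, hs₂, hc₂⟩ := expand_walk G B hadh p₂ hp₂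
    exact ⟨q₁, q₂, hq₁, hq₂, hs₁, hs₂, expand_disjoint G B p₁ p₂ hshare hc₁ hc₂⟩
  · intro v b₁ b₂ b₃ h12 h13 h23
    by_cases hv1 : v = b₁
    · subst hv1
      obtain ⟨p2, p3, hp2, hp3, hsh⟩ :=
        fan2 (torso G B) hconn v b₂ b₃ h23 (Ne.symm h12) (Ne.symm h13)
      obtain ⟨q₂, hq₂, -, hc₂⟩ := expand_walk G B hadh p2 hp2
      obtain ⟨q₃, hq₃, -, hc₃⟩ := expand_walk G B hadh p3 hp3
      refine ⟨Walk.nil, q₂, q₃, Walk.IsPath.nil, hq₂, hq₃, ?_, ?_, ?_⟩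
      · intro y hy _
        simpa using hy
      · intro y hy _
        simpa using hy
      · exact expand_disjoint G B p2 p3 hsh hc₂ hc₃
    · by_cases hv2 : v = b₂
      · subst hv2
        obtain ⟨p1, p3, hp1, hp3, hsh⟩ :=
          fan2 (torso G B) hconn v b₁ b₃ h13 h12 (Ne.symm h23)
        obtain ⟨q₁, hq₁, -, hc₁⟩ := expand_walk G B hadh p1 hp1
        obtain ⟨q₃, hq₃, -, hc₃⟩ := expand_walk G B hadh p3 hp3
        refine ⟨q₁, Walk.nil, q₃, hq₁, Walk.IsPath.nil, hq₃, ?_, ?_, ?_⟩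
        · intro y _ hy
          simpa using hy
        · exact expand_disjoint G B p1 p3 hsh hc₁ hc₃
        · intro y hy _
          simpa using hy
      · by_cases hv3 : v = b₃
        · subst hv3
          obtain ⟨p1, p2, hp1, hp2, hsh⟩ :=
            fan2 (torso G B) hconn v b₁ b₂ h12 h13 h23
          obtain ⟨q₁, hq₁, -, hc₁⟩ := expand_walk G B hadh p1 hp1
          obtain ⟨q₂, hq₂, -, hc₂⟩ := expand_walk G B hadh p2 hp2
          refine ⟨q₁, q₂, Walk.nil, hq₁, hq₂, Walk.IsPath.nil, ?_, ?_, ?_⟩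
          · exact expand_disjoint G B p1 p2 hsh hc₁ hc₂
          · intro y _ hy
            simpa using hy
          · intro y _ hy
            simpa using hy
        · obtain ⟨p1, p2, p3, hp1, hp2, hp3, hsh12, hsh13, hsh23⟩ :=
            fan3 (torso G B) hconn v b₁ b₂ b₃ h12 h13 h23
              (fun h => hv1 h.symm) (fun h => hv2 h.symm) (fun h => hv3 h.symm)
          obtain ⟨q₁, hq₁, -, hc₁⟩ := expand_walk G B hadh p1 hp1
          obtain ⟨q₂, hq₂, -, hc₂⟩ := expand_walk G B hadh p2 hp2
          obtain ⟨q₃, hq₃, -, hc₃⟩ := expand_walk G B hadh p3 hp3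
          exact ⟨q₁, q₂, q₃, hq₁, hq₂, hq₃,
            expand_disjoint G B p1 p2 hsh12 hc₁ hc₂,
            expand_disjoint G B p1 p3 hsh13 hc₁ hc₃,
            expand_disjoint G B p2 p3 hsh23 hc₂ hc₃⟩
end

section
/- Let T be a finite tree and B ⊆ V(T) with |B| ≤ 3. Then T has a rooted tree decomposition (T*, β*) with B ⊆ β*(r*) for the root r*, of height at most 2·log₂|T|, width at most 3, and adhesion at most 3, such that additionally |β*(r*) \ B| ≤ 1. -/
open SimpleGraph

/-- `(T', β)` is a tree decomposition of `G`: `T'` is a tree, every vertex of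
`G` appears in a nonempty set of bags that is connected in `T'`, and every
edge of `G` is contained in some bag. -/
def IsTreeDecomp {V ι : Type} (G : SimpleGraph V) (T' : SimpleGraph ι)
    (β : ι → Set V) : Prop :=
  T'.IsTree ∧
  (∀ v : V, (∃ t, v ∈ β t) ∧ (T'.induce {t : ι | v ∈ β t}).Connected) ∧
  (∀ ⦃u v : V⦄, G.Adj u v → ∃ t, u ∈ β t ∧ v ∈ β t)


noncomputable section
namespace TLD

variable {n : ℕ}

def parG (par : Fin (n+1) → Fin (n+1)) : SimpleGraph (Fin (n+1)) :=
  SimpleGraph.fromRel (fun s t => par t = s)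

lemma parG_adj {par : Fin (n+1) → Fin (n+1)} {a b : Fin (n+1)} :
    (parG par).Adj a b ↔ a ≠ b ∧ (par b = a ∨ par a = b) := by
  simp [parG, SimpleGraph.fromRel_adj]

variable {par : Fin (n+1) → Fin (n+1)}

lemma parent_of_lt (hpar0 : par 0 = 0) (hpar : ∀ t, t ≠ 0 → par t < t) {a b : Fin (n+1)}
    (hab : (parG par).Adj a b) (hlt : b < a) : par a = b := by
  rcases parG_adj.1 hab with ⟨hne, h | h⟩
  · exfalso
    by_cases hb0 : b = 0
    · subst hb0
      rw [hpar0] at h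
      exact hne h.symm
    · have hb := hpar b hb0
      rw [h] at hb
      exact absurd hlt (asymm hb)
  · exact h

lemma parG_reachable (hpar0 : par 0 = 0) (hpar : ∀ t, t ≠ 0 → par t < t) (t : Fin (n+1)) :
    (parG par).Reachable 0 t := by
  have key : ∀ m : ℕ, ∀ t : Fin (n+1), (t : ℕ) = m → (parG par).Reachable 0 t := by
    intro m
    induction m using Nat.strong_induction_on with
    | _ m ih =>
      intro t ht
      by_cases h0 : t = 0
      · subst h0; rfl
      · have hlt : par t < t := hpar t h0
        have h1 : (parG par).Reachable 0 (par t) := ih (par t) (ht ▸ hlt) (par t) rfl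
        refine h1.trans (Adj.reachable ?_)
        exact parG_adj.2 ⟨(ne_of_lt hlt), Or.inl rfl⟩
  exact key t t rfl

lemma parG_connected (hpar0 : par 0 = 0) (hpar : ∀ t, t ≠ 0 → par t < t) :
    (parG par).Connected := by
  rw [SimpleGraph.connected_iff]
  exact ⟨fun a b => ((parG_reachable hpar0 hpar a).symm).trans (parG_reachable hpar0 hpar b), ⟨0⟩⟩

lemma parG_acyclic (hpar0 : par 0 = 0) (hpar : ∀ t, t ≠ 0 → par t < t) :
    (parG par).IsAcyclic := by
  intro v c hc
  -- take the maximum vertex of the cycle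
  have hsup : v ∈ c.support := c.start_mem_support
  obtain ⟨m, hm, hmax⟩ := Set.exists_max_image {x | x ∈ c.support} id
    (Set.toFinite _) ⟨v, hsup⟩
  have hc' := hc.rotate hm
  set c' := c.rotate m hm with hc'def
  have hsupp : ∀ x, x ∈ c'.support → x ∈ c.support := by
    intro x hx
    rw [Walk.support_eq_cons] at hx
    rcases List.mem_cons.1 hx with rfl | hx
    · exact hm
    · have hx2 := (Walk.support_rotate c m hm).mem_iff.1 hx
      rw [Walk.support_eq_cons]
      exact List.mem_cons_of_mem _ hx2
  -- c' is a cycle from m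
  cases hcc : c' with
  | nil => rw [hcc] at hc'; exact hc'.ne_nil rfl
  | cons hadj p =>
    rw [hcc] at hc'
    rename_i x
    rw [Walk.cons_isCycle_iff] at hc'
    obtain ⟨hp, hem⟩ := hc'
    -- x is a neighbor of m
    have hxm : x ≠ m := (hadj.ne).symm
    have hxsup : x ∈ c'.support := by
      rw [hcc]; simp [Walk.support_cons]
    have hxle : x ≤ m := hmax x (hsupp x hxsup)
    have hxlt : x < m := lt_of_le_of_ne hxle hxm
    -- get last edge of p
    have hpm : x ≠ m := hxm
    obtain ⟨w, hadj2, q, hq⟩ := p.reverse.exists_eq_cons_of_ne (Ne.symm hpm)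
    have hwedge : s(m, w) ∈ p.reverse.edges := by
      rw [hq]; simp [Walk.edges_cons]
    have hwedge' : s(w, m) ∈ p.edges := by
      rw [Walk.edges_reverse, List.mem_reverse] at hwedge
      rwa [Sym2.eq_swap] at hwedge
    have hwm : w ≠ m := (hadj2.ne).symm
    have hwsup : w ∈ p.support := Walk.fst_mem_support_of_mem_edges p hwedge'
    have hwsup' : w ∈ c'.support := by rw [hcc]; simp [Walk.support_cons, hwsup]
    have hwle : w ≤ m := hmax w (hsupp w hwsup')
    have hwlt : w < m := lt_of_le_of_ne hwle hwm
    have hwx : w ≠ x := by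
      intro h
      subst h
      exact hem (by rwa [Sym2.eq_swap] at hwedge')
    have h1 : par m = x := parent_of_lt hpar0 hpar hadj hxlt
    have h2 : par m = w := parent_of_lt hpar0 hpar hadj2 hwlt
    exact hwx (h1 ▸ h2).symm

lemma parG_isTree (hpar0 : par 0 = 0) (hpar : ∀ t, t ≠ 0 → par t < t) :
    (parG par).IsTree :=
  ⟨parG_connected hpar0 hpar, parG_acyclic hpar0 hpar⟩

lemma parG_dist_le (hpar0 : par 0 = 0) (hpar : ∀ t, t ≠ 0 → par t < t)
    (dep : Fin (n+1) → ℕ) (hdep0 : dep 0 = 0)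
    (hdepS : ∀ t, t ≠ 0 → dep t = dep (par t) + 1) (t : Fin (n+1)) :
    (parG par).dist 0 t ≤ dep t := by
  have hconn := parG_connected hpar0 hpar
  have key : ∀ m : ℕ, ∀ t : Fin (n+1), (t : ℕ) = m → (parG par).dist 0 t ≤ dep t := by
    intro m
    induction m using Nat.strong_induction_on with
    | _ m ih =>
      intro t ht
      by_cases h0 : t = 0
      · subst h0; simp [SimpleGraph.dist_self, hdep0]
      · have hlt : par t < t := hpar t h0
        have h1 : (parG par).dist 0 (par t) ≤ dep (par t) := ih (par t) (ht ▸ hlt) (par t) rfl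
        have h2 : (parG par).dist (par t) t ≤ 1 := by
          have : (parG par).Adj (par t) t := parG_adj.2 ⟨(ne_of_lt hlt), Or.inl rfl⟩
          simpa using SimpleGraph.dist_le (Walk.cons this Walk.nil)
        calc (parG par).dist 0 t ≤ (parG par).dist 0 (par t) + (parG par).dist (par t) t :=
              hconn.dist_triangle
          _ ≤ dep (par t) + 1 := Nat.add_le_add h1 h2
          _ = dep t := (hdepS t h0).symm
  exact key t t rfl

/-- A set closed under parents except at its minimum. -/
def IsSub (par : Fin (n+1) → Fin (n+1)) (X : Set (Fin (n+1))) : Prop :=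
  ∀ t ∈ X, par t ∈ X ∨ ∀ s ∈ X, t ≤ s

lemma isSub_connected (hpar0 : par 0 = 0) (hpar : ∀ t, t ≠ 0 → par t < t)
    {X : Set (Fin (n+1))} (hX : X.Nonempty) (hsub : IsSub par X) :
    ((parG par).induce X).Connected := by
  obtain ⟨m, hm, hmin⟩ := Set.exists_min_image X id (Set.toFinite _) hX
  have key : ∀ k : ℕ, ∀ t : Fin (n+1), (t : ℕ) = k → ∀ ht : t ∈ X,
      ((parG par).induce X).Reachable ⟨t, ht⟩ ⟨m, hm⟩ := by
    intro k
    induction k using Nat.strong_induction_on with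
    | _ k ih =>
      intro t hk ht
      by_cases htm : t = m
      · subst htm; rfl
      · have hmt : m < t := lt_of_le_of_ne (hmin t ht) (fun h => htm h.symm)
        have ht0 : t ≠ 0 := by
          intro h
          subst h
          exact absurd hmt (by simp)
        rcases hsub t ht with hptX | hminn
        · have hlt : par t < t := hpar t ht0
          have hadj : ((parG par).induce X).Adj ⟨t, ht⟩ ⟨par t, hptX⟩ := by
            have : (parG par).Adj t (par t) := parG_adj.2 ⟨(ne_of_lt hlt).symm, Or.inr rfl⟩
            simpa using this
          exact (hadj.reachable).trans (ih (par t) (hk ▸ hlt) (par t) rfl hptX)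
        · exact absurd (hminn m hm) (by simp [not_le, hmt])
  rw [SimpleGraph.connected_iff]
  refine ⟨fun a b => ?_, ⟨⟨m, hm⟩⟩⟩
  obtain ⟨a, ha⟩ := a
  obtain ⟨b, hb⟩ := b
  exact (key a a rfl ha).trans (key b b rfl hb).symm





set_option linter.unusedSectionVars false

variable {V : Type} [Fintype V] [DecidableEq V] {T : SimpleGraph V}

/-- Reachability within a set `P` of allowed vertices. -/
def Reach (T : SimpleGraph V) (P : Set V) (u v : V) : Prop :=
  ∃ p : T.Walk u v, ∀ x ∈ p.support, x ∈ P

lemma Reach.mem_left {P : Set V} {u v : V} (h : Reach T P u v) : u ∈ P := by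
  obtain ⟨p, hp⟩ := h; exact hp u p.start_mem_support

lemma Reach.mem_right {P : Set V} {u v : V} (h : Reach T P u v) : v ∈ P := by
  obtain ⟨p, hp⟩ := h; exact hp v p.end_mem_support

lemma Reach.refl {P : Set V} {u : V} (hu : u ∈ P) : Reach T P u u :=
  ⟨Walk.nil, by simpa using hu⟩

lemma Reach.symm {P : Set V} {u v : V} (h : Reach T P u v) : Reach T P v u := by
  obtain ⟨p, hp⟩ := h
  exact ⟨p.reverse, by simpa using hp⟩

lemma Reach.trans {P : Set V} {u v w : V} (h : Reach T P u v) (h' : Reach T P v w) :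
    Reach T P u w := by
  obtain ⟨p, hp⟩ := h
  obtain ⟨q, hq⟩ := h'
  refine ⟨p.append q, fun x hx => ?_⟩
  rw [Walk.mem_support_append_iff] at hx
  rcases hx with hx | hx
  · exact hp x hx
  · exact hq x hx

lemma Reach.adj {P : Set V} {u v : V} (h : T.Adj u v) (hu : u ∈ P) (hv : v ∈ P) :
    Reach T P u v := by
  refine ⟨Walk.cons h Walk.nil, fun x hx => ?_⟩
  have hx' : x = u ∨ x = v := by simpa using hx
  rcases hx' with rfl | rfl
  · exact hu
  · exact hv

lemma Reach.mono {P Q : Set V} (hPQ : P ⊆ Q) {u v : V} (h : Reach T P u v) : Reach T Q u v := by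
  obtain ⟨p, hp⟩ := h; exact ⟨p, fun x hx => hPQ (hp x hx)⟩

/-- The component of `v` within the allowed set `P`. -/
def compIn (T : SimpleGraph V) (P : Set V) (v : V) : Set V := {w | Reach T P v w}

lemma compIn_subset {P : Set V} {v : V} : compIn T P v ⊆ P := fun _ h => h.mem_right

lemma mem_compIn_self {P : Set V} {v : V} (hv : v ∈ P) : v ∈ compIn T P v := Reach.refl hv

/-- In a tree, every path realizes the distance. -/
lemma path_length_eq_dist (hT : T.IsTree) {u v : V} (p : T.Walk u v) (hp : p.IsPath) :
    p.length = T.dist u v := by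
  have hr : T.Reachable u v := hT.isConnected.preconnected u v
  obtain ⟨q, hq⟩ := hr.exists_walk_length_eq_dist
  have hq' : q.bypass.IsPath := q.bypass_isPath
  have heq : p = q.bypass := by
    have := hT.IsAcyclic.path_unique ⟨p, hp⟩ ⟨q.bypass, hq'⟩
    exact congrArg Subtype.val this
  have h1 : p.length ≤ T.dist u v := by
    rw [heq, ← hq]; exact q.length_bypass_le
  exact le_antisymm h1 (SimpleGraph.dist_le p)

lemma dist_of_reach (hT : T.IsTree) {c c' v : V} (hadj : T.Adj c c')
    (hre : Reach T {x | x ≠ c} c' v) : T.dist c v = T.dist c' v + 1 := by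
  obtain ⟨p, hp⟩ := hre
  have hq : p.bypass.IsPath := p.bypass_isPath
  have hcnot : c ∉ p.bypass.support := by
    intro hc
    exact absurd rfl (hp c (p.support_bypass_subset hc))
  have hcons : (Walk.cons hadj p.bypass).IsPath := hq.cons hcnot
  have h1 := path_length_eq_dist hT _ hcons
  have h2 := path_length_eq_dist hT _ hq
  simp only [Walk.length_cons] at h1
  omega

lemma dist_of_not_reach (hT : T.IsTree) {c c' v : V} (hadj : T.Adj c c') (hv : v ≠ c)
    (hnr : ¬ Reach T {x | x ≠ c} c' v) : T.dist c' v = T.dist c v + 1 := by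
  have hr : T.Reachable c' v := hT.isConnected.preconnected c' v
  obtain ⟨q, hq⟩ := hr.exists_walk_length_eq_dist
  set p := q.bypass with hpdef
  have hplen : p.length = T.dist c' v := path_length_eq_dist hT p q.bypass_isPath
  have hcp : c ∈ p.support := by
    by_contra hcp
    exact hnr ⟨p, fun x hx => fun hxc => hcp (hxc ▸ hx)⟩
  have hspec := p.take_spec hcp
  have hlen : (p.takeUntil c hcp).length + (p.dropUntil c hcp).length = p.length := by
    have h' := congrArg Walk.length hspec
    rwa [Walk.length_append] at h'
  have htake : (p.takeUntil c hcp).length ≠ 0 := by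
    intro h
    exact hadj.ne' (Walk.eq_of_length_eq_zero h)
  have hdrop : T.dist c v ≤ (p.dropUntil c hcp).length := SimpleGraph.dist_le _
  have hge : T.dist c v + 1 ≤ T.dist c' v := by omega
  have hle : T.dist c' v ≤ T.dist c v + 1 := by
    calc T.dist c' v ≤ T.dist c' c + T.dist c v := hT.isConnected.dist_triangle
      _ ≤ 1 + T.dist c v := by
          have : T.dist c' c ≤ 1 := by
            simpa using SimpleGraph.dist_le (Walk.cons hadj.symm Walk.nil)
          omega
      _ = T.dist c v + 1 := by omega
  omega

open Classical in
/-- Weighted sum over a set. -/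
noncomputable def wsum (w : V → ℕ) (A : Set V) : ℕ := ∑ x ∈ Finset.univ.filter (· ∈ A), w x

open Classical in
lemma wsum_indicator (Bs : Set V) (A : Set V) :
    wsum (fun x => if x ∈ Bs then 1 else 0) A = (A ∩ Bs).ncard := by
  classical
  have h1 : (A ∩ Bs).toFinset = (Finset.univ.filter (· ∈ A)).filter (· ∈ Bs) := by
    ext x
    simp [Set.mem_toFinset]
  rw [Set.ncard_eq_toFinset_card', h1]
  show (∑ x ∈ Finset.univ.filter (· ∈ A), if x ∈ Bs then 1 else 0) = _
  rw [Finset.sum_boole]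
  simp

open Classical in
/-- Every finite tree has a weighted centroid. -/
lemma exists_centroid (hT : T.IsTree) (w : V → ℕ) :
    ∃ c : V, ∀ v, v ≠ c → 2 * wsum w (compIn T {x | x ≠ c} v) ≤ ∑ x, w x := by
  classical
  have hne : Nonempty V := hT.isConnected.nonempty
  obtain ⟨c, hcu, hcmin⟩ := Finset.exists_min_image Finset.univ
    (fun c => ∑ x, w x * T.dist c x) Finset.univ_nonempty
  refine ⟨c, fun v hv => ?_⟩
  -- find the neighbor of c towards v
  have hr : T.Reachable c v := hT.isConnected.preconnected c v
  obtain ⟨q0, hq0⟩ := hr.exists_walk_length_eq_dist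
  set p := q0.bypass with hpdef
  have hppath : p.IsPath := q0.bypass_isPath
  obtain ⟨c', hadj, q, hpq⟩ := p.exists_eq_cons_of_ne (Ne.symm hv)
  have hqc : ∀ y ∈ q.support, y ≠ c := by
    intro y hy hyc
    have hsup : p.support = c :: q.support := by rw [hpq, Walk.support_cons]
    have hnodup := hppath.support_nodup
    rw [hsup] at hnodup
    exact (List.nodup_cons.1 hnodup).1 (hyc ▸ hy)
  have hvc' : Reach T {x | x ≠ c} c' v := ⟨q, hqc⟩
  set C := compIn T {x | x ≠ c} c' with hCdef
  have hCv : compIn T {x | x ≠ c} v = C := by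
    ext y
    constructor
    · intro hy; exact hvc'.trans hy
    · intro hy; exact hvc'.symm.trans hy
  rw [hCv]
  -- distance dichotomy
  have hdist1 : ∀ x ∈ C, T.dist c x = T.dist c' x + 1 := fun x hx => dist_of_reach hT hadj hx
  have hdist2 : ∀ x, x ∉ C → T.dist c' x = T.dist c x + 1 := by
    intro y hy
    by_cases hyc : y = c
    · rw [hyc]
      have h1 : T.dist c c = 0 := by simp
      have hle : T.dist c' c ≤ 1 := by
        simpa using SimpleGraph.dist_le (Walk.cons hadj.symm Walk.nil)
      have hne0 : T.dist c' c ≠ 0 := by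
        intro h0
        rcases SimpleGraph.dist_eq_zero_iff_eq_or_not_reachable.1 h0 with h | h
        · exact hadj.ne' h
        · exact h (hT.isConnected.preconnected c' c)
      omega
    · exact dist_of_not_reach hT hadj hyc (fun h => hy h)
  -- sum manipulation
  have hmin := hcmin c' (Finset.mem_univ c')
  set f := fun x => if x ∈ C then (1:ℕ) else 0
  have hsplit : ∀ c0 : V, ∑ x, w x * T.dist c0 x =
      (∑ x ∈ Finset.univ.filter (· ∈ C), w x * T.dist c0 x) +
      (∑ x ∈ Finset.univ.filter (fun y => ¬ y ∈ C), w x * T.dist c0 x) := by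
    intro c0
    exact (Finset.sum_filter_add_sum_filter_not _ _ _).symm
  have e1 : ∑ x, w x * T.dist c x =
      ((∑ x ∈ Finset.univ.filter (· ∈ C), w x * T.dist c' x) +
        (∑ x ∈ Finset.univ.filter (· ∈ C), w x)) +
      (∑ x ∈ Finset.univ.filter (fun y => ¬ y ∈ C), w x * T.dist c x) := by
    rw [hsplit c, ← Finset.sum_add_distrib]
    congr 1
    apply Finset.sum_congr rfl
    intro x hx
    rw [hdist1 x (by simpa using hx)]
    ring
  have e2 : ∑ x, w x * T.dist c' x =
      ((∑ x ∈ Finset.univ.filter (· ∈ C), w x * T.dist c' x)) +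
      ((∑ x ∈ Finset.univ.filter (fun y => ¬ y ∈ C), w x * T.dist c x) +
        (∑ x ∈ Finset.univ.filter (fun y => ¬ y ∈ C), w x)) := by
    rw [hsplit c', ← Finset.sum_add_distrib]
    congr 1
    apply Finset.sum_congr rfl
    intro x hx
    rw [hdist2 x (by simpa using hx)]
    ring
  have hA2B2 : (∑ x ∈ Finset.univ.filter (· ∈ C), w x) ≤
      (∑ x ∈ Finset.univ.filter (fun y => ¬ y ∈ C), w x) := by
    rw [e1, e2] at hmin
    omega
  have htot : (∑ x ∈ Finset.univ.filter (· ∈ C), w x) +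
      (∑ x ∈ Finset.univ.filter (fun y => ¬ y ∈ C), w x) = ∑ x, w x :=
    Finset.sum_filter_add_sum_filter_not _ _ _
  have hws : wsum w C = ∑ x ∈ Finset.univ.filter (· ∈ C), w x := rfl
  omega



/-! ### Rooted covering data -/

variable {V : Type} [Fintype V] [DecidableEq V] {T : SimpleGraph V}

/-- The data of a rooted partial tree decomposition covering interior `S` with
boundary `B`, of depth at most `d`. -/
structure Cov (T : SimpleGraph V) (S B : Set V) (d : ℕ) where
  sz : ℕ
  par : Fin (sz+1) → Fin (sz+1)
  bag : Fin (sz+1) → Set V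
  dep : Fin (sz+1) → ℕ
  hpar0 : par 0 = 0
  hpar : ∀ t, t ≠ 0 → par t < t
  hdep0 : dep 0 = 0
  hdepS : ∀ t, t ≠ 0 → dep t = dep (par t) + 1
  hdep : ∀ t, dep t ≤ d
  hrootB : B ⊆ bag 0
  hrootex : (bag 0 \ B).ncard ≤ 1
  hbag : ∀ t, (bag t).ncard ≤ 4
  hadh : ∀ t, t ≠ 0 → (bag t ∩ bag (par t)).ncard ≤ 3
  hsub : ∀ t, bag t ⊆ S ∪ B
  htrS : ∀ v ∈ S, ∃ t, v ∈ bag t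
  htr : ∀ v : V, IsSub par {t | v ∈ bag t}
  hedge : ∀ ⦃u v : V⦄, T.Adj u v → u ∈ S → v ∈ S ∪ B → ∃ t, u ∈ bag t ∧ v ∈ bag t

/-- Weakening the depth bound. -/
def Cov.mono {S B : Set V} {d d' : ℕ} (D : Cov T S B d) (h : d ≤ d') : Cov T S B d' :=
  { D with hdep := fun t => le_trans (D.hdep t) h }

/-- Transport along set equality. -/
def Cov.congrS {S S' B : Set V} {d : ℕ} (D : Cov T S B d) (h : S = S') : Cov T S' B d :=
  h ▸ D

/-- A single-bag covering. -/
def leafCov (S B : Set V) (hS : S.ncard ≤ 1) (hB : B.ncard ≤ 3)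
    (hedg : ∀ ⦃u v : V⦄, T.Adj u v → u ∈ S → v ∈ S ∪ B → u ∈ B ∪ S ∧ v ∈ B ∪ S) :
    Cov T S B 0 where
  sz := 0
  par := id
  bag := fun _ => B ∪ S
  dep := fun _ => 0
  hpar0 := rfl
  hpar := fun t ht => absurd (Fin.ext (by have := t.isLt; omega : (t:ℕ) = (0 : Fin 1).val)) ht
  hdep0 := rfl
  hdepS := fun t ht => absurd (Fin.ext (by have := t.isLt; omega : (t:ℕ) = (0 : Fin 1).val)) ht
  hdep := fun _ => le_refl _
  hrootB := Set.subset_union_left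
  hrootex := by
    refine le_trans (Set.ncard_le_ncard ?_ (Set.toFinite _)) hS
    intro x hx
    rcases hx.1 with h | h
    · exact absurd h hx.2
    · exact h
  hbag := fun _ => by
    refine le_trans (Set.ncard_union_le _ _) ?_
    omega
  hadh := fun t ht => absurd (Fin.ext (by have := t.isLt; omega : (t:ℕ) = (0 : Fin 1).val)) ht
  hsub := fun _ => by rw [Set.union_comm]
  htrS := fun v hv => ⟨0, Or.inr hv⟩
  htr := fun v t ht => Or.inr (fun s _ => by
    have h1 := t.isLt
    have h2 := s.isLt
    exact Fin.le_def.2 (by omega))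
  hedge := fun u v h hu hv => ⟨0, (hedg h hu hv).1, (hedg h hu hv).2⟩

section Merge

variable {k k' : ℕ}

/-- First embedding into the merged index type. -/
def e1 (t : Fin (k+1)) : Fin (k+k'+2) := ⟨t.val, by have := t.isLt; omega⟩

/-- Second embedding into the merged index type. -/
def e2 (u : Fin (k'+1)) : Fin (k+k'+2) := ⟨k + 1 + u.val, by have := u.isLt; omega⟩

lemma e1_val (t : Fin (k+1)) : ((e1 (k':=k') t) : ℕ) = t.val := rfl
lemma e2_val (u : Fin (k'+1)) : ((e2 (k:=k) u) : ℕ) = k + 1 + u.val := rfl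

lemma e1_zero : (e1 (k:=k) (k':=k') 0) = 0 := by
  apply Fin.ext
  simp [e1]

lemma merged_cases (t : Fin (k+k'+2)) :
    (∃ t₀ : Fin (k+1), t = e1 t₀) ∨ (∃ u : Fin (k'+1), t = e2 u) := by
  by_cases h : (t : ℕ) < k + 1
  · exact Or.inl ⟨⟨t, h⟩, by apply Fin.ext; simp [e1]⟩
  · refine Or.inr ⟨⟨(t:ℕ) - (k+1), by have := t.isLt; omega⟩, ?_⟩
    apply Fin.ext
    simp only [e2]
    omega

/-- Merged parent function. -/
def mpar (p : Fin (k+1) → Fin (k+1)) (p' : Fin (k'+1) → Fin (k'+1)) :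
    Fin (k+k'+2) → Fin (k+k'+2) := fun t =>
  if h : (t : ℕ) < k + 1 then e1 (p ⟨t, h⟩)
  else if h2 : (t : ℕ) - (k+1) = 0 then 0
  else e2 (p' ⟨(t:ℕ) - (k+1), by have := t.isLt; omega⟩)

/-- Merged bags. -/
def mbag (β : Fin (k+1) → Set V) (β' : Fin (k'+1) → Set V) :
    Fin (k+k'+2) → Set V := fun t =>
  if h : (t : ℕ) < k + 1 then β ⟨t, h⟩
  else β' ⟨(t:ℕ) - (k+1), by have := t.isLt; omega⟩

/-- Merged depth. -/
def mdep (dp : Fin (k+1) → ℕ) (dp' : Fin (k'+1) → ℕ) :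
    Fin (k+k'+2) → ℕ := fun t =>
  if h : (t : ℕ) < k + 1 then dp ⟨t, h⟩
  else dp' ⟨(t:ℕ) - (k+1), by have := t.isLt; omega⟩ + 1

lemma mpar_e1 (p : Fin (k+1) → Fin (k+1)) (p' : Fin (k'+1) → Fin (k'+1)) (t : Fin (k+1)) :
    mpar p p' (e1 t) = e1 (p t) := by
  have h : ((e1 (k':=k') t) : ℕ) < k + 1 := t.isLt
  have ht : (⟨((e1 (k':=k') t) : ℕ), h⟩ : Fin (k+1)) = t := Fin.ext rfl
  simp only [mpar, dif_pos h, ht]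

lemma mpar_e2 (p : Fin (k+1) → Fin (k+1)) (p' : Fin (k'+1) → Fin (k'+1)) (u : Fin (k'+1)) :
    mpar p p' (e2 u) = if u = 0 then 0 else e2 (p' u) := by
  have h : ¬ ((e2 (k:=k) u) : ℕ) < k + 1 := by
    simp only [e2_val]
    omega
  have hval : ((e2 (k:=k) u) : ℕ) - (k+1) = u.val := by simp only [e2_val]; omega
  by_cases hu : u = 0
  · subst hu
    have h2 : ((e2 (k:=k) (0 : Fin (k'+1))) : ℕ) - (k+1) = 0 := by
      simp only [e2_val, Fin.val_zero]
      omega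
    simp only [mpar, dif_neg h, dif_pos h2, if_pos rfl, if_true]
  · have h2 : ¬ (((e2 (k:=k) u) : ℕ) - (k+1) = 0) := by
      rw [hval]
      exact fun h0 => hu (Fin.ext h0)
    have ht : (⟨((e2 (k:=k) u) : ℕ) - (k+1), by have := (e2 (k:=k) u).isLt; omega⟩ : Fin (k'+1)) = u :=
      Fin.ext hval
    simp only [mpar, dif_neg h, dif_neg h2, if_neg hu, ht]

lemma mbag_e1 (β : Fin (k+1) → Set V) (β' : Fin (k'+1) → Set V) (t : Fin (k+1)) :
    mbag β β' (e1 t) = β t := by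
  have h : ((e1 (k':=k') t) : ℕ) < k + 1 := t.isLt
  have ht : (⟨((e1 (k':=k') t) : ℕ), h⟩ : Fin (k+1)) = t := Fin.ext rfl
  simp only [mbag, dif_pos h, ht]

lemma mbag_e2 (β : Fin (k+1) → Set V) (β' : Fin (k'+1) → Set V) (u : Fin (k'+1)) :
    mbag β β' (e2 u) = β' u := by
  have h : ¬ ((e2 (k:=k) u) : ℕ) < k + 1 := by
    simp only [e2_val]; omega
  have ht : (⟨((e2 (k:=k) u) : ℕ) - (k+1), by have := (e2 (k:=k) u).isLt; omega⟩ : Fin (k'+1)) = u :=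
    Fin.ext (by simp only [e2_val]; omega)
  simp only [mbag, dif_neg h, ht]

lemma mdep_e1 (dp : Fin (k+1) → ℕ) (dp' : Fin (k'+1) → ℕ) (t : Fin (k+1)) :
    mdep dp dp' (e1 t) = dp t := by
  have h : ((e1 (k':=k') t) : ℕ) < k + 1 := t.isLt
  have ht : (⟨((e1 (k':=k') t) : ℕ), h⟩ : Fin (k+1)) = t := Fin.ext rfl
  simp only [mdep, dif_pos h, ht]

lemma mdep_e2 (dp : Fin (k+1) → ℕ) (dp' : Fin (k'+1) → ℕ) (u : Fin (k'+1)) :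
    mdep dp dp' (e2 u) = dp' u + 1 := by
  have h : ¬ ((e2 (k:=k) u) : ℕ) < k + 1 := by
    simp only [e2_val]; omega
  have ht : (⟨((e2 (k:=k) u) : ℕ) - (k+1), by have := (e2 (k:=k) u).isLt; omega⟩ : Fin (k'+1)) = u :=
    Fin.ext (by simp only [e2_val]; omega)
  simp only [mdep, dif_neg h, ht]

lemma e1_inj {a b : Fin (k+1)} (h : (e1 (k':=k') a) = e1 b) : a = b := by
  apply Fin.ext
  have := congrArg Fin.val h
  simpa [e1] using this

lemma e2_inj {a b : Fin (k'+1)} (h : (e2 (k:=k) a) = e2 b) : a = b := by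
  apply Fin.ext
  have := congrArg Fin.val h
  simp only [e2_val] at this
  omega

lemma e1_ne_e2 (a : Fin (k+1)) (b : Fin (k'+1)) : (e1 (k':=k') a) ≠ e2 b := by
  intro h
  have := congrArg Fin.val h
  simp only [e1_val, e2_val] at this
  have := a.isLt
  omega

lemma e1_zero_eq : ((0 : Fin (k+k'+2))) = e1 (0 : Fin (k+1)) := by
  apply Fin.ext
  simp [e1]

lemma e2_ne_zero (u : Fin (k'+1)) : (e2 (k:=k) u) ≠ 0 := by
  intro h
  have := congrArg Fin.val h
  simp only [e2_val, Fin.val_zero] at this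
  omega

end Merge

/-- Merging a new child decomposition below the root of an existing one. -/
lemma Cov.merge {S B S' B' : Set V} {d d' : ℕ} (D : Cov T S B d) (D' : Cov T S' B' d')
    (hd : d' + 1 ≤ d)
    (hdisj : ∀ x ∈ S', x ∉ S ∪ B)
    (hB'0 : B' ⊆ D.bag 0)
    (hB'3 : B'.ncard ≤ 3)
    (hN : ∀ ⦃u v : V⦄, T.Adj u v → u ∈ S' → v ∈ S ∪ B → v ∈ S' ∪ B') :
    ∃ E : Cov T (S ∪ S') B d, E.bag 0 = D.bag 0 := by
  classical
  -- a vertex in both sides lies in B' hence in both root bags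
  have hboth : ∀ v : V, v ∈ S' ∪ B' → v ∈ S ∪ B → v ∈ B' := by
    intro v hv hv'
    rcases hv with hv | hv
    · exact absurd hv' (hdisj v hv)
    · exact hv
  refine ⟨{ sz := D.sz + D'.sz + 1
            par := mpar D.par D'.par
            bag := mbag D.bag D'.bag
            dep := mdep D.dep D'.dep
            hpar0 := ?_, hpar := ?_, hdep0 := ?_, hdepS := ?_, hdep := ?_
            hrootB := ?_, hrootex := ?_, hbag := ?_, hadh := ?_, hsub := ?_
            htrS := ?_, htr := ?_, hedge := ?_ }, ?_⟩
  · rw [e1_zero_eq, mpar_e1, D.hpar0]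
  · -- hpar
    intro t ht
    rcases merged_cases t with ⟨t₀, rfl⟩ | ⟨u, rfl⟩
    · have ht₀ : t₀ ≠ 0 := fun h => ht (by rw [h, ← e1_zero_eq])
      rw [mpar_e1]
      exact Fin.lt_def.2 (Fin.lt_def.1 (D.hpar t₀ ht₀))
    · rw [mpar_e2]
      by_cases hu : u = 0
      · rw [if_pos hu]
        refine Fin.pos_iff_ne_zero.2 ?_
        exact fun h => ht h
      · rw [if_neg hu]
        have := D'.hpar u hu
        simp only [Fin.lt_def, e2_val]
        have h2 : (D'.par u).val < u.val := this
        omega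
  · rw [e1_zero_eq, mdep_e1, D.hdep0]
  · -- hdepS
    intro t ht
    rcases merged_cases t with ⟨t₀, rfl⟩ | ⟨u, rfl⟩
    · have ht₀ : t₀ ≠ 0 := fun h => ht (by rw [h, ← e1_zero_eq])
      rw [mdep_e1, mpar_e1, mdep_e1]
      exact D.hdepS t₀ ht₀
    · rw [mdep_e2, mpar_e2]
      by_cases hu : u = 0
      · rw [if_pos hu, e1_zero_eq, mdep_e1, D.hdep0, hu, D'.hdep0]
      · rw [if_neg hu, mdep_e2]
        rw [D'.hdepS u hu]
  · -- hdep
    intro t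
    rcases merged_cases t with ⟨t₀, rfl⟩ | ⟨u, rfl⟩
    · rw [mdep_e1]; exact D.hdep t₀
    · rw [mdep_e2]
      have := D'.hdep u
      omega
  · -- hrootB
    rw [e1_zero_eq, mbag_e1]
    exact D.hrootB
  · rw [e1_zero_eq, mbag_e1]
    exact D.hrootex
  · -- hbag
    intro t
    rcases merged_cases t with ⟨t₀, rfl⟩ | ⟨u, rfl⟩
    · rw [mbag_e1]; exact D.hbag t₀
    · rw [mbag_e2]; exact D'.hbag u
  · -- hadh
    intro t ht
    rcases merged_cases t with ⟨t₀, rfl⟩ | ⟨u, rfl⟩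
    · have ht₀ : t₀ ≠ 0 := fun h => ht (by rw [h, ← e1_zero_eq])
      rw [mbag_e1, mpar_e1, mbag_e1]
      exact D.hadh t₀ ht₀
    · rw [mbag_e2, mpar_e2]
      by_cases hu : u = 0
      · rw [if_pos hu, e1_zero_eq, mbag_e1]
        refine le_trans (le_trans (Set.ncard_le_ncard ?_ (Set.toFinite _)) (le_refl B'.ncard)) hB'3
        intro x hx
        have hx1 : x ∈ S' ∪ B' := D'.hsub u ((hu ▸ hx.1 : x ∈ D'.bag u))
        have hx2 : x ∈ S ∪ B := D.hsub 0 hx.2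
        exact hboth x hx1 hx2
      · rw [if_neg hu, mbag_e2]
        exact D'.hadh u hu
  · -- hsub
    intro t
    rcases merged_cases t with ⟨t₀, rfl⟩ | ⟨u, rfl⟩
    · rw [mbag_e1]
      intro x hx
      rcases D.hsub t₀ hx with h | h
      · exact Or.inl (Or.inl h)
      · exact Or.inr h
    · rw [mbag_e2]
      intro x hx
      rcases D'.hsub u hx with h | h
      · exact Or.inl (Or.inr h)
      · rcases D.hsub 0 (hB'0 h) with h2 | h2
        · exact Or.inl (Or.inl h2)
        · exact Or.inr h2
  · -- htrS
    intro v hv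
    rcases hv with hv | hv
    · obtain ⟨t, ht⟩ := D.htrS v hv
      exact ⟨e1 t, by rwa [mbag_e1]⟩
    · obtain ⟨t, ht⟩ := D'.htrS v hv
      exact ⟨e2 t, by rwa [mbag_e2]⟩
  · -- htr
    intro v
    intro t ht
    simp only [Set.mem_setOf_eq] at ht
    rcases merged_cases t with ⟨t₀, rfl⟩ | ⟨u, rfl⟩
    · rw [mbag_e1] at ht
      rcases D.htr v t₀ ht with h | h
      · left
        rw [mpar_e1]
        simpa [Set.mem_setOf_eq, mbag_e1] using h
      · right
        intro s hs
        simp only [Set.mem_setOf_eq] at hs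
        rcases merged_cases s with ⟨s₀, rfl⟩ | ⟨u, rfl⟩
        · rw [mbag_e1] at hs
          exact Fin.le_def.2 (Fin.le_def.1 (h s₀ hs))
        · simp only [Fin.le_def, e1_val, e2_val]
          have := t₀.isLt
          omega
    · rw [mbag_e2] at ht
      by_cases hroot : v ∈ D.bag 0
      · -- root of the merged tree is in the trace
        have h0 : (0 : Fin (D.sz + D'.sz + 2)) ∈ {t | v ∈ mbag D.bag D'.bag t} := by
          simp only [Set.mem_setOf_eq, e1_zero_eq, mbag_e1]
          exact hroot
        by_cases hu : u = 0
        · left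
          rw [mpar_e2, if_pos hu]
          exact h0
        · rcases D'.htr v u ht with h | h
          · left
            rw [mpar_e2, if_neg hu]
            simpa [Set.mem_setOf_eq, mbag_e2] using h
          · exfalso
            have hvB' : v ∈ B' := by
              apply hboth
              · exact D'.hsub u ht
              · exact D.hsub 0 hroot
            have : (0 : Fin (D'.sz+1)) ∈ {s | v ∈ D'.bag s} := D'.hrootB hvB'
            have := h 0 this
            exact hu (le_antisymm this (Fin.zero_le u))
      · -- no old node is in the trace
        have hold : ∀ s₀ : Fin (D.sz+1), v ∉ D.bag s₀ := by
          intro s₀ hs₀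
          apply hroot
          apply hB'0
          exact hboth v (D'.hsub u ht) (D.hsub s₀ hs₀)
        by_cases hu : u = 0
        · right
          intro s hs
          simp only [Set.mem_setOf_eq] at hs
          rcases merged_cases s with ⟨s₀, rfl⟩ | ⟨u', rfl⟩
          · rw [mbag_e1] at hs
            exact absurd hs (hold s₀)
          · simp only [Fin.le_def, e2_val, hu]
            simp
        · rcases D'.htr v u ht with h | h
          · left
            rw [mpar_e2, if_neg hu]
            simpa [Set.mem_setOf_eq, mbag_e2] using h
          · right
            intro s hs
            simp only [Set.mem_setOf_eq] at hs
            rcases merged_cases s with ⟨s₀, rfl⟩ | ⟨u', rfl⟩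
            · rw [mbag_e1] at hs
              exact absurd hs (hold s₀)
            · rw [mbag_e2] at hs
              have := h u' hs
              simp only [Fin.le_def, e2_val]
              omega
  · -- hedge
    intro u v hadj hu hv
    have hv' : v ∈ (S ∪ S') ∪ B := hv
    rcases hu with hu | hu
    · -- u ∈ S
      rcases hv' with (hv1 | hv1) | hv1
      · obtain ⟨t, ht⟩ := D.hedge hadj hu (Or.inl hv1)
        exact ⟨e1 t, by rwa [mbag_e1]⟩
      · -- v ∈ S' : then u ∈ B'
        have huB : u ∈ S' ∪ B' := hN hadj.symm hv1 (Or.inl hu)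
        have huB' : u ∈ B' := hboth u huB (Or.inl hu)
        obtain ⟨t, ht1, ht2⟩ := D'.hedge hadj.symm hv1 (Or.inr huB')
        exact ⟨e2 t, by rw [mbag_e2]; exact ⟨ht2, ht1⟩⟩
      · obtain ⟨t, ht⟩ := D.hedge hadj hu (Or.inr hv1)
        exact ⟨e1 t, by rwa [mbag_e1]⟩
    · -- u ∈ S'
      have hv2 : v ∈ S' ∪ B' := by
        rcases hv' with (hv1 | hv1) | hv1
        · exact hN hadj hu (Or.inl hv1)
        · exact Or.inl hv1
        · exact hN hadj hu (Or.inr hv1)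
      obtain ⟨t, ht⟩ := D'.hedge hadj hu hv2
      exact ⟨e2 t, by rwa [mbag_e2]⟩
  · -- root bag unchanged
    show mbag D.bag D'.bag 0 = D.bag 0
    rw [e1_zero_eq, mbag_e1]

/-! ### Components and invariants -/

lemma Cov.congrS_bag {S S' B : Set V} {d : ℕ} (D : Cov T S B d) (h : S = S') :
    (D.congrS h).bag 0 = D.bag 0 := by
  cases h; rfl

lemma reach_of_mem_support {P : Set V} {v w : V} (p : T.Walk v w)
    (hp : ∀ x ∈ p.support, x ∈ P) {x : V} (hx : x ∈ p.support) : Reach T P v x :=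
  ⟨p.takeUntil x hx, fun y hy => hp y (Walk.support_takeUntil_subset p hx hy)⟩

lemma reach_in_comp {P : Set V} {v x : V} (hx : x ∈ compIn T P v) :
    Reach T (compIn T P v) v x := by
  obtain ⟨p, hp⟩ := hx
  exact ⟨p, fun z hz => reach_of_mem_support p hp hz⟩

/-- The outside neighbourhood of a set. -/
def nbr (T : SimpleGraph V) (A : Set V) : Set V := {v | v ∉ A ∧ ∃ u ∈ A, T.Adj u v}

/-- The invariant carried through the induction. -/
def Inv (T : SimpleGraph V) (S B : Set V) : Prop :=
  S ∩ B = ∅ ∧ (∀ u ∈ S, ∀ v, T.Adj u v → v ∈ S ∪ B) ∧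
    (∀ u ∈ S ∪ B, ∀ v ∈ S ∪ B, Reach T (S ∪ B) u v)

lemma nbr_comp_subset {S B : Set V} (hInv : Inv T S B) (c : V) {v : V} (hv : v ∈ S \ {c}) :
    nbr T (compIn T (S \ {c}) v) ⊆ B ∪ {c} := by
  intro x hx
  obtain ⟨hxn, u, hu, hadj⟩ := hx
  have huS : u ∈ S := (compIn_subset hu).1
  have hx2 : x ∈ S ∪ B := hInv.2.1 u huS x hadj
  rcases hx2 with hx2 | hx2
  · by_cases hxc : x = c
    · exact Or.inr hxc
    · exfalso
      apply hxn
      have hu' : Reach T (S \ {c}) v u := hu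
      exact hu'.trans (Reach.adj hadj (compIn_subset hu) ⟨hx2, hxc⟩)
  · exact Or.inl hx2

lemma childInv {S B : Set V} (hInv : Inv T S B) (c : V) {v : V} (hv : v ∈ S \ {c}) :
    Inv T (compIn T (S \ {c}) v) (nbr T (compIn T (S \ {c}) v)) := by
  set S' := compIn T (S \ {c}) v with hS'
  set B' := nbr T S' with hB'
  refine ⟨?_, ?_, ?_⟩
  · ext x
    simp only [Set.mem_inter_iff, Set.mem_empty_iff_false, iff_false, not_and]
    intro hx hx2
    exact hx2.1 hx
  · intro u hu x hadj
    by_cases hxS : x ∈ S'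
    · exact Or.inl hxS
    · exact Or.inr ⟨hxS, u, hu, hadj⟩
  · intro u hu x hx
    -- both are reachable from v within S' ∪ B'
    have key : ∀ y ∈ S' ∪ B', Reach T (S' ∪ B') v y := by
      intro y hy
      rcases hy with hy | hy
      · exact (reach_in_comp hy).mono Set.subset_union_left
      · obtain ⟨hyn, u', hu', hadj'⟩ := hy
        refine ((reach_in_comp hu').mono Set.subset_union_left).trans ?_
        exact Reach.adj hadj' (Or.inl hu') (Or.inr ⟨hyn, u', hu', hadj'⟩)
    exact (key u hu).symm.trans (key x hx)

/-! ### The gluing step -/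

lemma glueAll (hT : T.IsTree) {S B : Set V} (hInv : Inv T S B) (c : V) (hc : c ∈ S ∪ B)
    (hbag4 : (B ∪ {c}).ncard ≤ 4) (δ : ℕ)
    (hchild : ∀ v ∈ S \ {c}, (nbr T (compIn T (S \ {c}) v)).ncard ≤ 3 ∧
      Nonempty (Cov T (compIn T (S \ {c}) v) (nbr T (compIn T (S \ {c}) v)) δ)) :
    Nonempty (Cov T S B (δ + 1)) := by
  classical
  set P₀ := S \ {c} with hP₀
  -- the bare root node
  have base : ∃ D : Cov T (S ∩ {c}) B (δ + 1), D.bag 0 = B ∪ {c} := by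
    refine ⟨{ sz := 0
              par := id
              bag := fun _ => B ∪ {c}
              dep := fun _ => 0
              hpar0 := rfl
              hpar := fun t ht => absurd (Fin.ext (by have := t.isLt; omega : (t:ℕ) = (0 : Fin 1).val)) ht
              hdep0 := rfl
              hdepS := fun t ht => absurd (Fin.ext (by have := t.isLt; omega : (t:ℕ) = (0 : Fin 1).val)) ht
              hdep := fun _ => Nat.zero_le _
              hrootB := Set.subset_union_left
              hrootex := ?_
              hbag := fun _ => hbag4
              hadh := fun t ht => absurd (Fin.ext (by have := t.isLt; omega : (t:ℕ) = (0 : Fin 1).val)) ht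
              hsub := ?_
              htrS := ?_
              htr := fun v t ht => Or.inr (fun s _ => by
                have h1 := t.isLt
                have h2 := s.isLt
                exact Fin.le_def.2 (by omega))
              hedge := ?_ }, rfl⟩
    · refine le_trans (Set.ncard_le_ncard ?_ (Set.toFinite _)) (le_of_eq (Set.ncard_singleton c))
      intro x hx
      rcases hx.1 with h | h
      · exact absurd h hx.2
      · exact h
    · intro t x hx
      rcases hx with hx | hx
      · exact Or.inr hx
      · rw [Set.mem_singleton_iff] at hx
        subst hx
        rcases hc with h | h
        · exact Or.inl ⟨h, rfl⟩
        · exact Or.inr h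
    · intro v hv
      exact ⟨0, Or.inr hv.2⟩
    · intro u v hadj hu hv
      refine ⟨0, Or.inr hu.2, ?_⟩
      rcases hv with hv | hv
      · exact Or.inr hv.2
      · exact Or.inl hv
  -- glue the components one at a time
  have fold : ∀ m : ℕ, ∀ X : Set V, X ⊆ P₀ → (∀ v ∈ X, compIn T P₀ v ⊆ X) → X.ncard ≤ m →
      ∃ D : Cov T ((S ∩ {c}) ∪ X) B (δ + 1), D.bag 0 = B ∪ {c} := by
    intro m
    induction m with
    | zero =>
      intro X hXP hXcl hXm
      have hX : X = ∅ := by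
        rw [← Set.ncard_eq_zero (Set.toFinite X)]
        omega
      subst hX
      obtain ⟨D, hD⟩ := base
      exact ⟨D.congrS (by rw [Set.union_empty]), by rw [D.congrS_bag, hD]⟩
    | succ m ih =>
      intro X hXP hXcl hXm
      by_cases hX : X = ∅
      · subst hX
        obtain ⟨D, hD⟩ := base
        exact ⟨D.congrS (by rw [Set.union_empty]), by rw [D.congrS_bag, hD]⟩
      · obtain ⟨v, hv⟩ := Set.nonempty_iff_ne_empty.2 hX
        have hvP₀ : v ∈ P₀ := hXP hv
        set S' := compIn T P₀ v with hS'def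
        set B' := nbr T S' with hB'def
        have hS'X : S' ⊆ X := hXcl v hv
        have hvS' : v ∈ S' := mem_compIn_self hvP₀
        set X' := X \ S' with hX'def
        have hX'cl : ∀ u ∈ X', compIn T P₀ u ⊆ X' := by
          intro u hu x hx
          refine ⟨hXcl u hu.1 hx, ?_⟩
          intro hxS'
          apply hu.2
          have hx1 : Reach T P₀ u x := hx
          have hx2 : Reach T P₀ v x := hxS'
          exact hx2.trans hx1.symm
        have hX'm : X'.ncard ≤ m := by
          have hlt : X'.ncard < X.ncard := by
            apply Set.ncard_lt_ncard
            · constructor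
              · exact Set.diff_subset
              · intro hXsub
                exact (hXsub hv).2 hvS'
            · exact Set.toFinite X
          omega
        obtain ⟨D, hD⟩ := ih X' (fun x hx => hXP hx.1) hX'cl hX'm
        obtain ⟨hB'3, ⟨D'⟩⟩ := hchild v hvP₀
        have hmerge := D.merge D' (le_refl _) ?_ ?_ hB'3 ?_
        · obtain ⟨E, hE⟩ := hmerge
          refine ⟨E.congrS ?_, by rw [E.congrS_bag, hE, hD]⟩
          rw [Set.union_assoc, Set.diff_union_of_subset hS'X]
        · -- disjointness
          intro x hxS'
          have hxP₀ : x ∈ P₀ := compIn_subset hxS'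
          intro hmem
          rcases hmem with (hm | hm) | hm
          · exact hxP₀.2 hm.2
          · exact hm.2 hxS'
          · have := hInv.1
            have : x ∈ S ∩ B := ⟨hxP₀.1, hm⟩
            rw [hInv.1] at this
            exact this
        · -- B' inside the root bag
          rw [hD]
          exact nbr_comp_subset hInv c hvP₀
        · -- neighbourhood condition
          intro a b hadj ha hb
          by_cases hbS' : b ∈ S'
          · exact Or.inl hbS'
          · exact Or.inr ⟨hbS', a, ha, hadj⟩
  obtain ⟨D, hD⟩ := fold P₀.ncard P₀ (le_refl _) (fun u hu x hx => hx.mem_right) (le_refl _)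
  exact ⟨D.congrS (Set.inter_union_diff S {c})⟩

/-! ### Depth bookkeeping -/

def dfun : ℕ → ℕ
  | s => if s ≤ 1 then 0 else dfun (s / 2) + 2
decreasing_by omega

def efun (s : ℕ) : ℕ := if s ≤ 1 then 0 else dfun (s / 2) + 1

lemma dfun_le_one {s : ℕ} (h : s ≤ 1) : dfun s = 0 := by
  rw [dfun]
  simp [h]

lemma dfun_ge_two {s : ℕ} (h : 2 ≤ s) : dfun s = dfun (s / 2) + 2 := by
  rw [dfun]
  simp [show ¬ s ≤ 1 from by omega]

lemma efun_le_one {s : ℕ} (h : s ≤ 1) : efun s = 0 := by simp [efun, h]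

lemma efun_ge_two {s : ℕ} (h : 2 ≤ s) : efun s = dfun (s / 2) + 1 := by
  simp [efun, show ¬ s ≤ 1 from by omega]

lemma efun_le_dfun (s : ℕ) : efun s ≤ dfun s := by
  by_cases h : s ≤ 1
  · rw [efun_le_one h, dfun_le_one h]
  · have h1 := efun_ge_two (show 2 ≤ s from by omega)
    have h2 := dfun_ge_two (show 2 ≤ s from by omega)
    omega

lemma dfun_log_bound : ∀ s : ℕ, 1 ≤ s → (dfun s : ℝ) ≤ 2 * Real.logb 2 s := by
  intro s
  induction s using Nat.strong_induction_on with
  | _ s ih =>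
    intro hs
    by_cases h1 : s ≤ 1
    · have : s = 1 := by omega
      subst this
      simp [dfun_le_one (le_refl 1)]
    · have h2 : 2 ≤ s := by omega
      have hhalf : 1 ≤ s / 2 := by omega
      have hlt : s / 2 < s := by omega
      have ihh := ih (s / 2) hlt hhalf
      rw [dfun_ge_two h2]
      have hcast : ((s / 2 : ℕ) : ℝ) ≤ (s : ℝ) / 2 := Nat.cast_div_le
      have hpos : (0 : ℝ) < ((s / 2 : ℕ) : ℝ) := by
        exact_mod_cast hhalf
      have hlog1 : Real.logb 2 ((s / 2 : ℕ) : ℝ) ≤ Real.logb 2 ((s : ℝ) / 2) :=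
        Real.logb_le_logb_of_le (by norm_num) hpos hcast
      have hlog2 : Real.logb 2 ((s : ℝ) / 2) = Real.logb 2 (s : ℝ) - 1 := by
        rw [Real.logb_div (by positivity) (by norm_num)]
        simp [Real.logb_self_eq_one]
      have : (dfun (s / 2) : ℝ) ≤ 2 * (Real.logb 2 (s : ℝ) - 1) := by
        calc (dfun (s / 2) : ℝ) ≤ 2 * Real.logb 2 ((s / 2 : ℕ) : ℝ) := ihh
          _ ≤ 2 * (Real.logb 2 (s : ℝ) - 1) := by
              rw [← hlog2]
              exact mul_le_mul_of_nonneg_left (le_trans hlog1 (le_of_eq rfl)) (by norm_num)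
      push_cast
      linarith

/-! ### The main induction -/

open Classical in
lemma sum_indicator_eq_ncard (A : Set V) :
    ∑ x : V, (if x ∈ A then (1:ℕ) else 0) = A.ncard := by
  classical
  rw [Finset.sum_boole, Nat.cast_id, Set.ncard_eq_toFinset_card']
  congr 1
  ext x
  simp [Set.mem_toFinset]

/-- The leaf case. -/
lemma leafStep {S B : Set V} (hInv : Inv T S B) (hB : B.ncard ≤ 3) (hS : S.ncard ≤ 1) :
    Nonempty (Cov T S B 0) := by
  refine ⟨leafCov S B hS hB ?_⟩
  intro u v hadj hu hv
  constructor
  · exact Or.inr hu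
  · rcases hv with h | h
    · exact Or.inr h
    · exact Or.inl h

/-- Step with `|B| ≤ 3`, assuming the result with `|B| ≤ 2` for the same size bound. -/
lemma stepP (hT : T.IsTree) (s : ℕ)
    (hQ : ∀ S B : Set V, Inv T S B → B.ncard ≤ 2 → S.ncard ≤ s → Nonempty (Cov T S B (efun s))) :
    ∀ S B : Set V, Inv T S B → B.ncard ≤ 3 → S.ncard ≤ s → Nonempty (Cov T S B (dfun s)) := by
  intro S B hInv hB hS
  classical
  by_cases hS1 : S.ncard ≤ 1
  · obtain ⟨D⟩ := leafStep hInv hB hS1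
    exact ⟨D.mono (Nat.zero_le _)⟩
  by_cases hB2 : B.ncard ≤ 2
  · obtain ⟨D⟩ := hQ S B hInv hB2 hS
    exact ⟨D.mono (efun_le_dfun s)⟩
  -- now |B| = 3 and |S| ≥ 2
  have hB3 : B.ncard = 3 := by omega
  have hs2 : 2 ≤ s := by omega
  -- median: the weighted centroid with weights the indicator of B
  obtain ⟨c, hcen⟩ := exists_centroid hT (fun x => if x ∈ B then (1:ℕ) else 0)
  have htot : ∑ x : V, (if x ∈ B then (1:ℕ) else 0) = 3 := by
    rw [sum_indicator_eq_ncard, hB3]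
  have hcomp : ∀ v, v ≠ c → ((compIn T {x | x ≠ c} v) ∩ B).ncard ≤ 1 := by
    intro v hv
    have := hcen v hv
    rw [htot, wsum_indicator] at this
    omega
  -- c belongs to the current region
  have hc : c ∈ S ∪ B := by
    by_contra hcn
    obtain ⟨b₀, hb₀⟩ := Set.nonempty_of_ncard_ne_zero (by omega : B.ncard ≠ 0)
    have hb₀c : b₀ ≠ c := fun h => hcn (h ▸ (Or.inr hb₀ : b₀ ∈ S ∪ B))
    have hsub : B ⊆ compIn T {x | x ≠ c} b₀ := by
      intro b hb
      refine (hInv.2.2 b₀ (Or.inr hb₀) b (Or.inr hb)).mono ?_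
      intro y hy
      simp only [Set.mem_setOf_eq]
      intro hyc
      exact hcn (hyc ▸ (hy : y ∈ S ∪ B))
    have h1 := hcomp b₀ hb₀c
    have h2 : B.ncard ≤ ((compIn T {x | x ≠ c} b₀) ∩ B).ncard := by
      apply Set.ncard_le_ncard _ (Set.toFinite _)
      exact fun b hb => ⟨hsub hb, hb⟩
    omega
  -- glue
  rw [dfun_ge_two hs2, (by rw [efun_ge_two hs2] : dfun (s/2) + 2 = efun s + 1)]
  apply glueAll hT hInv c hc
  · refine le_trans (Set.ncard_union_le _ _) ?_
    rw [Set.ncard_singleton]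
    omega
  · intro v hv
    set S' := compIn T (S \ {c}) v with hS'def
    set B' := nbr T S' with hB'def
    have hB'sub : B' ⊆ B ∪ {c} := nbr_comp_subset hInv c hv
    have hvc : v ≠ c := hv.2
    -- B' \ {c} lands in B ∩ (component of T - c)
    have hB'sub2 : B' ⊆ ((compIn T {x | x ≠ c} v) ∩ B) ∪ {c} := by
      intro x hx
      by_cases hxc : x = c
      · exact Or.inr hxc
      · have hxB : x ∈ B := by
          rcases hB'sub hx with h | h
          · exact h
          · exact absurd h hxc
        obtain ⟨hxn, u, hu, hadj⟩ := hx
        have hvu : Reach T {x | x ≠ c} v u :=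
          (hu : Reach T (S \ {c}) v u).mono (fun y hy => hy.2)
        have hux : Reach T {y | y ≠ c} u x :=
          Reach.adj hadj (compIn_subset hu).2 hxc
        exact Or.inl ⟨hvu.trans hux, hxB⟩
    have hB'2 : B'.ncard ≤ 2 := by
      refine le_trans (Set.ncard_le_ncard hB'sub2 (Set.toFinite _)) ?_
      refine le_trans (Set.ncard_union_le _ _) ?_
      rw [Set.ncard_singleton]
      have := hcomp v hvc
      omega
    refine ⟨by omega, ?_⟩
    have hS's : S'.ncard ≤ s := by
      refine le_trans (Set.ncard_le_ncard ?_ (Set.toFinite _)) hS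
      exact fun x hx => (compIn_subset hx).1
    obtain ⟨D⟩ := hQ S' B' (childInv hInv c hv) hB'2 hS's
    exact ⟨D⟩

/-- The main induction: the case `|B| ≤ 2`. -/
lemma mainQ (hT : T.IsTree) : ∀ s : ℕ, ∀ S B : Set V, Inv T S B → B.ncard ≤ 2 → S.ncard ≤ s →
    Nonempty (Cov T S B (efun s)) := by
  intro s
  induction s using Nat.strong_induction_on with
  | _ s ih =>
    intro S B hInv hB hS
    classical
    by_cases hS1 : S.ncard ≤ 1
    · obtain ⟨D⟩ := leafStep hInv (by omega) hS1
      exact ⟨D.mono (Nat.zero_le _)⟩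
    have hs2 : 2 ≤ s := by omega
    -- centroid with weights the indicator of S
    obtain ⟨c, hcen⟩ := exists_centroid hT (fun x => if x ∈ S then (1:ℕ) else 0)
    have htot : ∑ x : V, (if x ∈ S then (1:ℕ) else 0) = S.ncard := sum_indicator_eq_ncard S
    have hcomp : ∀ v, v ≠ c → 2 * ((compIn T {x | x ≠ c} v) ∩ S).ncard ≤ S.ncard := by
      intro v hv
      have := hcen v hv
      rw [htot, wsum_indicator] at this
      omega
    have hc : c ∈ S ∪ B := by
      by_contra hcn
      obtain ⟨v₀, hv₀⟩ := Set.nonempty_of_ncard_ne_zero (by omega : S.ncard ≠ 0)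
      have hv₀c : v₀ ≠ c := fun h => hcn (h ▸ (Or.inl hv₀ : v₀ ∈ S ∪ B))
      have hsub : S ⊆ compIn T {x | x ≠ c} v₀ := by
        intro x hx
        refine (hInv.2.2 v₀ (Or.inl hv₀) x (Or.inl hx)).mono ?_
        intro y hy
        simp only [Set.mem_setOf_eq]
        intro hyc
        exact hcn (hyc ▸ (hy : y ∈ S ∪ B))
      have h2 : S.ncard ≤ ((compIn T {x | x ≠ c} v₀) ∩ S).ncard := by
        apply Set.ncard_le_ncard _ (Set.toFinite _)
        exact fun x hx => ⟨hsub hx, hx⟩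
      have := hcomp v₀ hv₀c
      omega
    rw [efun_ge_two hs2]
    apply glueAll hT hInv c hc
    · refine le_trans (Set.ncard_union_le _ _) ?_
      rw [Set.ncard_singleton]
      omega
    · intro v hv
      set S' := compIn T (S \ {c}) v with hS'def
      set B' := nbr T S' with hB'def
      have hB'sub : B' ⊆ B ∪ {c} := nbr_comp_subset hInv c hv
      have hB'3 : B'.ncard ≤ 3 := by
        refine le_trans (Set.ncard_le_ncard hB'sub (Set.toFinite _)) ?_
        refine le_trans (Set.ncard_union_le _ _) ?_
        rw [Set.ncard_singleton]
        omega
      refine ⟨hB'3, ?_⟩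
      have hS'half : S'.ncard ≤ s / 2 := by
        have hsubc : S' ⊆ (compIn T {x | x ≠ c} v) ∩ S := by
          intro x hx
          refine ⟨(hx : Reach T (S \ {c}) v x).mono (fun y hy => hy.2), (compIn_subset hx).1⟩
        have h1 : S'.ncard ≤ ((compIn T {x | x ≠ c} v) ∩ S).ncard :=
          Set.ncard_le_ncard hsubc (Set.toFinite _)
        have h2 := hcomp v hv.2
        omega
      have hQ' := ih (s / 2) (by omega)
      obtain ⟨D⟩ := stepP hT (s / 2) hQ' S' B' (childInv hInv c hv) hB'3 hS'half
      exact ⟨D⟩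

end TLD

/-- **Logarithmic-height decompositions of trees.** For every finite tree `T`
and every set `B` of at most three vertices, there is a rooted tree
decomposition of `T` of height at most `2 log₂ |T|`, width at most 3 and
adhesion at most 3, whose root bag contains `B` and at most one further
vertex. -/
theorem tree_log_decomposition {V : Type} [Fintype V] (T : SimpleGraph V)
    (hT : T.IsTree) (B : Set V) (hB : B.ncard ≤ 3) :
    ∃ (n : ℕ) (T' : SimpleGraph (Fin n)) (r : Fin n) (β : Fin n → Set V),
      IsTreeDecomp T T' β ∧
      B ⊆ β r ∧ (β r \ B).ncard ≤ 1 ∧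
      (∀ t : Fin n, (T'.dist r t : ℝ) ≤ 2 * Real.logb 2 (Fintype.card V)) ∧
      (∀ t : Fin n, (β t).ncard ≤ 4) ∧
      (∀ ⦃t u : Fin n⦄, T'.Adj t u → (β t ∩ β u).ncard ≤ 3) := by
  classical
  have hNE : Nonempty V := hT.isConnected.nonempty
  have hInv : TLD.Inv T (Set.univ \ B) B := by
    refine ⟨?_, ?_, ?_⟩
    · ext x
      simp
    · intro u hu v hadj
      by_cases h : v ∈ B
      · exact Or.inr h
      · exact Or.inl ⟨trivial, h⟩
    · intro u hu v hv
      have hr := hT.isConnected.preconnected u v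
      obtain ⟨p⟩ := hr
      refine ⟨p, fun x hx => ?_⟩
      by_cases h : x ∈ B
      · exact Or.inr h
      · exact Or.inl ⟨trivial, h⟩
  set s₀ := (Set.univ \ B).ncard with hs₀
  obtain ⟨D⟩ := TLD.stepP hT s₀ (TLD.mainQ hT s₀) (Set.univ \ B) B hInv hB (le_refl _)
  refine ⟨D.sz + 1, TLD.parG D.par, 0, D.bag, ⟨TLD.parG_isTree D.hpar0 D.hpar, ?_, ?_⟩,
    D.hrootB, D.hrootex, ?_, D.hbag, ?_⟩
  · intro v
    have hne : ∃ t, v ∈ D.bag t := by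
      by_cases h : v ∈ B
      · exact ⟨0, D.hrootB h⟩
      · exact D.htrS v ⟨trivial, h⟩
    refine ⟨hne, ?_⟩
    exact TLD.isSub_connected D.hpar0 D.hpar (by obtain ⟨t, ht⟩ := hne; exact ⟨t, ht⟩) (D.htr v)
  · intro u v hadj
    by_cases hu : u ∈ B
    · by_cases hv : v ∈ B
      · exact ⟨0, D.hrootB hu, D.hrootB hv⟩
      · obtain ⟨t, h1, h2⟩ := D.hedge hadj.symm ⟨trivial, hv⟩ (Or.inr hu)
        exact ⟨t, h2, h1⟩
    · refine D.hedge hadj ⟨trivial, hu⟩ ?_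
      by_cases hv : v ∈ B
      · exact Or.inr hv
      · exact Or.inl ⟨trivial, hv⟩
  · -- distance bound
    intro t
    have h1 := TLD.parG_dist_le D.hpar0 D.hpar D.dep D.hdep0 D.hdepS t
    have h2 := D.hdep t
    have h3 : ((TLD.parG D.par).dist 0 t : ℝ) ≤ (TLD.dfun s₀ : ℝ) := by
      exact_mod_cast le_trans h1 h2
    refine le_trans h3 ?_
    have hcard1 : (1:ℝ) ≤ (Fintype.card V : ℝ) := by
      exact_mod_cast Fintype.card_pos
    by_cases hs : s₀ = 0
    · rw [hs]
      simp only [Nat.cast_zero, TLD.dfun_le_one (by omega : (0:ℕ) ≤ 1), Nat.cast_zero]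
      have : (0:ℝ) ≤ Real.logb 2 (Fintype.card V) := Real.logb_nonneg (by norm_num) hcard1
      linarith
    · have h4 := TLD.dfun_log_bound s₀ (by omega)
      refine le_trans h4 ?_
      have hle : s₀ ≤ Fintype.card V := by
        refine le_trans (Set.ncard_le_ncard (Set.subset_univ _) (Set.toFinite _)) ?_
        rw [Set.ncard_univ, Nat.card_eq_fintype_card]
      have hle' : (s₀:ℝ) ≤ (Fintype.card V : ℝ) := by exact_mod_cast hle
      have hpos : (0:ℝ) < (s₀:ℝ) := by
        have : 1 ≤ s₀ := by omega
        exact_mod_cast this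
      have := Real.logb_le_logb_of_le (b := 2) (by norm_num) hpos hle'
      linarith
  · intro t u hadj
    rcases TLD.parG_adj.1 hadj with ⟨hne, h | h⟩
    · have hu0 : u ≠ 0 := by
        intro h0
        subst h0
        rw [D.hpar0] at h
        exact hne h.symm
      have hx := D.hadh u hu0
      rw [h] at hx
      rw [Set.inter_comm]
      exact hx
    · have ht0 : t ≠ 0 := by
        intro h0
        subst h0
        rw [D.hpar0] at h
        exact hne h
      have hx := D.hadh t ht0
      rw [h] at hx
      exact hx
end
end
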